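/- arXiv:1701.04441 — 6 statements merged into one kernel-verified Lean document; each statement's English description precedes it below -/
import Mathlib

section
/- If two groups G₁ and G₂ are elementarily equivalent (their first-order theories in the language of groups coincide), then G₁ possesses the Magnus property if and only if G₂ possesses it. -/
open FirstOrder

/-- The first-order language of groups: a constant `1`, a unary function `⁻¹`
and a binary function `*`, and no relation symbols. -/
def groupLanguage : Language where
  Functions := fun n =>
    match n with
    | 0 => Unit
    | 1 => Unit
    | 2 => Unit
    | _ => Empty
  Relations := fun _ => Empty

/-- The canonical `groupLanguage`-structure on a group. -/
def groupStructure (G : Type*) [Group G] : groupLanguage.Structure G where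
  funMap {n} f args :=
    match n, f, args with
    | 0, _, _ => (1 : G)
    | 1, _, a => (a 0)⁻¹
    | 2, _, a => a 0 * a 1
    | (_ + 3), f, _ => f.elim
  RelMap {n} r := r.elim

/-- A group `G` has the Magnus property if any two elements with the same normal closure
are conjugate up to inversion. -/
def MagnusProperty (G : Type*) [Group G] : Prop :=
  ∀ u v : G, Subgroup.normalClosure {u} = Subgroup.normalClosure {v} →
    IsConj u v ∨ IsConj u v⁻¹

namespace MagnusAux

open FirstOrder Language

attribute [local instance] groupStructure

/-! ### Term builders -/

def one' {γ : Type*} : groupLanguage.Term γ := Term.func (l := 0) Unit.unit (fun i => i.elim0)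

def inv' {γ : Type*} (t : groupLanguage.Term γ) : groupLanguage.Term γ :=
  Term.func (l := 1) Unit.unit ![t]

def mul' {γ : Type*} (t₁ t₂ : groupLanguage.Term γ) : groupLanguage.Term γ :=
  Term.func (l := 2) Unit.unit ![t₁, t₂]

section RealizeTerms

variable {G : Type*} [Group G] {γ : Type*}

@[simp] lemma realize_one' (xs : γ → G) : (one' : groupLanguage.Term γ).realize xs = 1 := rfl

@[simp] lemma realize_inv' (t : groupLanguage.Term γ) (xs : γ → G) :
    (inv' t).realize xs = (t.realize xs)⁻¹ := rfl

@[simp] lemma realize_mul' (t₁ t₂ : groupLanguage.Term γ) (xs : γ → G) :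
    (mul' t₁ t₂).realize xs = t₁.realize xs * t₂.realize xs := rfl

end RealizeTerms

def listProd {γ : Type*} : List (groupLanguage.Term γ) → groupLanguage.Term γ
  | [] => one'
  | a :: l => mul' a (listProd l)

@[simp] lemma realize_listProd {G : Type*} [Group G] {γ : Type*}
    (l : List (groupLanguage.Term γ)) (xs : γ → G) :
    (listProd l).realize xs = (l.map (fun t => t.realize xs)).prod := by
  induction l with
  | nil => simp [listProd]
  | cons a l ih => simp [listProd, ih]

def powT {γ : Type*} (w : groupLanguage.Term γ) (b : Bool) : groupLanguage.Term γ :=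
  if b then w else inv' w

def conjT {γ : Type*} (g w : groupLanguage.Term γ) : groupLanguage.Term γ :=
  mul' (mul' g w) (inv' g)

def prodConjT {γ : Type*} (w : groupLanguage.Term γ)
    (gs : List (groupLanguage.Term γ × Bool)) : groupLanguage.Term γ :=
  listProd (gs.map fun p => conjT p.1 (powT w p.2))

@[simp] lemma realize_prodConjT {G : Type*} [Group G] {γ : Type*}
    (w : groupLanguage.Term γ) (gs : List (groupLanguage.Term γ × Bool)) (xs : γ → G) :
    (prodConjT w gs).realize xs =
      (gs.map fun p =>
        p.1.realize xs * (if p.2 then w.realize xs else (w.realize xs)⁻¹) *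
          (p.1.realize xs)⁻¹).prod := by
  simp only [prodConjT, realize_listProd, List.map_map]
  refine congrArg List.prod (List.map_congr_left fun p _ => ?_)
  cases hb : p.2 <;> simp [conjT, powT, hb, mul_assoc]

/-! ### Normal closure as products of conjugates -/

lemma mem_normalClosure_iff_list {G : Type*} [Group G] {u v : G} :
    u ∈ Subgroup.normalClosure {v} ↔
      ∃ L : List (G × Bool),
        u = (L.map fun p => p.1 * (if p.2 then v else v⁻¹) * p.1⁻¹).prod := by
  constructor
  · intro hu
    have hu' : u ∈ (Subgroup.closure (Group.conjugatesOfSet {v})).toSubmonoid := hu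
    rw [Subgroup.closure_toSubmonoid] at hu'
    obtain ⟨l, hl, hprod⟩ := Submonoid.exists_list_of_mem_closure hu'
    have key : ∀ y ∈ l, ∃ p : G × Bool, y = p.1 * (if p.2 then v else v⁻¹) * p.1⁻¹ := by
      intro y hy
      rcases hl y hy with h | h
      · rcases Group.mem_conjugatesOfSet_iff.1 h with ⟨a, ha, hc⟩
        rcases isConj_iff.1 hc with ⟨c, hc'⟩
        rw [Set.mem_singleton_iff] at ha
        exact ⟨(c, true), by simp [← hc', ha]⟩
      · rcases Group.mem_conjugatesOfSet_iff.1 (Set.mem_inv.mp h) with ⟨a, ha, hc⟩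
        rcases isConj_iff.1 hc with ⟨c, hc'⟩
        rw [Set.mem_singleton_iff] at ha
        refine ⟨(c, false), ?_⟩
        have : y⁻¹ = c * v * c⁻¹ := by rw [← hc', ha]
        have : y = c * v⁻¹ * c⁻¹ := by
          rw [← inv_inv y, this]; simp [mul_assoc]
        simp [this]
    clear hl hu hu'
    induction l generalizing u with
    | nil => exact ⟨[], by simpa using hprod.symm⟩
    | cons a l ih =>
      obtain ⟨p, hp⟩ := key a List.mem_cons_self
      obtain ⟨L, hL⟩ := ih (u := l.prod) rfl (fun y hy => key y (List.mem_cons_of_mem a hy))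
      refine ⟨p :: L, ?_⟩
      simp only [List.map_cons, List.prod_cons, ← hL, ← hp, ← hprod, List.prod_cons]
  · rintro ⟨L, rfl⟩
    apply Subgroup.list_prod_mem
    intro x hx
    simp only [List.mem_map] at hx
    obtain ⟨p, _, rfl⟩ := hx
    have hv : v ∈ Subgroup.normalClosure ({v} : Set G) :=
      Subgroup.subset_normalClosure rfl
    have : (if p.2 then v else v⁻¹) ∈ Subgroup.normalClosure ({v} : Set G) := by
      cases p.2 <;> simp [hv, inv_mem hv]
    exact (Subgroup.normalClosure_normal).conj_mem _ this p.1

lemma mem_normalClosure_iff_fin {G : Type*} [Group G] {u v : G} :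
    u ∈ Subgroup.normalClosure {v} ↔
      ∃ (n : ℕ) (s : Fin n → Bool) (g : Fin n → G),
        u = (List.ofFn fun i => g i * (if s i then v else v⁻¹) * (g i)⁻¹).prod := by
  rw [mem_normalClosure_iff_list]
  constructor
  · rintro ⟨L, rfl⟩
    refine ⟨L.length, fun i => (L.get i).2, fun i => (L.get i).1, ?_⟩
    congr 1
    rw [← List.ofFn_get L, List.map_ofFn, List.ofFn_get]
    rfl
  · rintro ⟨n, s, g, rfl⟩
    refine ⟨List.ofFn fun i => (g i, s i), ?_⟩
    rw [List.map_ofFn]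
    rfl

/-! ### The sentences -/

section Sentence

variable (n m : ℕ)

def uvar : Fin (n + m + 1 + 1) := Fin.castSucc (Fin.last (n + m))
def vvar : Fin (n + m + 1 + 1) := Fin.last (n + m + 1)
def gvar (i : Fin n) : Fin (n + m + 1 + 1) :=
  Fin.castSucc (Fin.castSucc (Fin.castAdd m i))
def hvar (j : Fin m) : Fin (n + m + 1 + 1) :=
  Fin.castSucc (Fin.castSucc (Fin.natAdd n j))

def vr {k : ℕ} (i : Fin k) : groupLanguage.Term (Empty ⊕ Fin k) := Term.var (Sum.inr i)

def magnusSentence (s : Fin n → Bool) (t : Fin m → Bool) : groupLanguage.Sentence :=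
  ((((vr (uvar n m)).bdEqual
      (prodConjT (vr (vvar n m)) (List.ofFn fun i => (vr (gvar n m i), s i)))) ⊓
    ((vr (vvar n m)).bdEqual
      (prodConjT (vr (uvar n m)) (List.ofFn fun j => (vr (hvar n m j), t j))))) ⟹
    BoundedFormula.ex
      (((mul' (mul' (vr (Fin.last (n + m + 1 + 1))) (vr ((uvar n m).castSucc)))
          (inv' (vr (Fin.last (n + m + 1 + 1))))).bdEqual (vr ((vvar n m).castSucc))) ⊔
       ((mul' (mul' (vr (Fin.last (n + m + 1 + 1))) (vr ((uvar n m).castSucc)))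
          (inv' (vr (Fin.last (n + m + 1 + 1))))).bdEqual
            (inv' (vr ((vvar n m).castSucc)))))).alls

lemma realize_magnusSentence {G : Type*} [Group G] (s : Fin n → Bool) (t : Fin m → Bool) :
    G ⊨ magnusSentence n m s t ↔
      ∀ (xs : Fin (n + m + 1 + 1) → G),
        (xs (uvar n m) =
            (List.ofFn fun i =>
              xs (gvar n m i) * (if s i then xs (vvar n m) else (xs (vvar n m))⁻¹) *
                (xs (gvar n m i))⁻¹).prod ∧
         xs (vvar n m) =
            (List.ofFn fun j =>
              xs (hvar n m j) * (if t j then xs (uvar n m) else (xs (uvar n m))⁻¹) *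
                (xs (hvar n m j))⁻¹).prod) →
        ∃ c : G, c * xs (uvar n m) * c⁻¹ = xs (vvar n m) ∨
          c * xs (uvar n m) * c⁻¹ = (xs (vvar n m))⁻¹ := by
  simp only [magnusSentence, Sentence.Realize, BoundedFormula.realize_alls,
    BoundedFormula.realize_imp, BoundedFormula.realize_inf, BoundedFormula.realize_bdEqual,
    BoundedFormula.realize_ex, BoundedFormula.realize_sup, realize_prodConjT,
    Term.realize_var, Sum.elim_inr, vr, List.map_ofFn, realize_mul', realize_inv',
    Fin.snoc_castSucc, Fin.snoc_last, Function.comp_def]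

end Sentence

/-! ### Magnus property is equivalent to the family of sentences -/

lemma magnus_iff_sentences (G : Type*) [Group G] :
    MagnusProperty G ↔
      ∀ (n m : ℕ) (s : Fin n → Bool) (t : Fin m → Bool), G ⊨ magnusSentence n m s t := by
  constructor
  · intro hM n m s t
    rw [realize_magnusSentence]
    rintro xs ⟨h1, h2⟩
    set u := xs (uvar n m)
    set v := xs (vvar n m)
    have hu : u ∈ Subgroup.normalClosure ({v} : Set G) :=
      mem_normalClosure_iff_fin.2 ⟨n, s, fun i => xs (gvar n m i), h1⟩
    have hv : v ∈ Subgroup.normalClosure ({u} : Set G) :=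
      mem_normalClosure_iff_fin.2 ⟨m, t, fun j => xs (hvar n m j), h2⟩
    have hEq : Subgroup.normalClosure ({u} : Set G) = Subgroup.normalClosure {v} := by
      apply le_antisymm
      · exact Subgroup.normalClosure_le_normal (by simpa using hu)
      · exact Subgroup.normalClosure_le_normal (by simpa using hv)
    rcases hM u v hEq with h | h
    · rcases isConj_iff.1 h with ⟨c, hc⟩
      exact ⟨c, Or.inl hc⟩
    · rcases isConj_iff.1 h with ⟨c, hc⟩
      exact ⟨c, Or.inr hc⟩
  · intro hS u v hEq
    have hu : u ∈ Subgroup.normalClosure ({v} : Set G) := by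
      rw [← hEq]; exact Subgroup.subset_normalClosure rfl
    have hv : v ∈ Subgroup.normalClosure ({u} : Set G) := by
      rw [hEq]; exact Subgroup.subset_normalClosure rfl
    obtain ⟨n, s, g, hg⟩ := mem_normalClosure_iff_fin.1 hu
    obtain ⟨m, t, h, hh⟩ := mem_normalClosure_iff_fin.1 hv
    have := (realize_magnusSentence n m s t).1 (hS n m s t)
      (Fin.snoc (Fin.snoc (Fin.append g h) u) v)
    simp only [uvar, vvar, gvar, hvar, Fin.snoc_castSucc, Fin.snoc_last,
      Fin.append_left, Fin.append_right] at this
    rcases this ⟨hg, hh⟩ with ⟨c, hc | hc⟩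
    · exact Or.inl (isConj_iff.2 ⟨c, hc⟩)
    · exact Or.inr (isConj_iff.2 ⟨c, hc⟩)

end MagnusAux

/-- If two groups are elementarily equivalent (in the language of groups), then one has the
Magnus property if and only if the other does. -/
theorem magnusProperty_iff_of_elementarilyEquivalent
    (G₁ G₂ : Type*) [Group G₁] [Group G₂] :
    letI := groupStructure G₁
    letI := groupStructure G₂
    G₁ ≅[groupLanguage] G₂ → (MagnusProperty G₁ ↔ MagnusProperty G₂) := by
  intro h
  letI := groupStructure G₁
  letI := groupStructure G₂
  rw [MagnusAux.magnus_iff_sentences G₁, MagnusAux.magnus_iff_sentences G₂]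
  constructor
  · intro H n m s t
    exact (h.realize_sentence _).1 (H n m s t)
  · intro H n m s t
    exact (h.realize_sentence _).2 (H n m s t)
end

section
/- The kernel N of the homomorphism φ: H → ℤ sending x to 1 and b, y₁, …, yₙ to 0, where H = ⟨x, b, y₁, …, yₙ | [xᵏ,b]u⟩ with k, n ≥ 1 and u a non-trivial reduced word in y₁, …, yₙ, is a free group; moreover, for every i ∈ ℤ, the set B(i) = {b_i, b_{i+1}, …, b_{i+k-1}} ∪ {y_{m,j} : 1 ≤ m ≤ n, j ∈ ℤ} is a free basis of N, where g_j denotes x⁻ʲgxʲ. -/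
/-! Common setup: the one-relator group `H = ⟨x, b, y₁, …, yₙ | [xᵏ,b]u⟩`, where generators are
indexed by `Bool ⊕ Fin n` (`Sum.inl true ↦ x`, `Sum.inl false ↦ b`, `Sum.inr m ↦ yₘ`),
`[xᵏ,b] = x⁻ᵏb⁻¹xᵏb`, and `u` is the image of a word `u'` in the letters `y₁, …, yₙ`. -/

/-- The single relator `[xᵏ,b]u` of `H`. -/
def relOfH (k n : ℕ) (u' : FreeGroup (Fin n)) : Set (FreeGroup (Bool ⊕ Fin n)) :=
  {((FreeGroup.of (Sum.inl true))⁻¹) ^ k * (FreeGroup.of (Sum.inl false))⁻¹ *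
    (FreeGroup.of (Sum.inl true)) ^ k * FreeGroup.of (Sum.inl false) *
    FreeGroup.map Sum.inr u'}

/-- The one-relator group `H = ⟨x, b, y₁, …, yₙ | [xᵏ,b]u⟩`. -/
abbrev Hgp (k n : ℕ) (u' : FreeGroup (Fin n)) : Type :=
  PresentedGroup (relOfH k n u')

/-- The generator `x` of `H`. -/
def xg (k n : ℕ) (u' : FreeGroup (Fin n)) : Hgp k n u' := PresentedGroup.of (Sum.inl true)

/-- The generator `b` of `H`. -/
def bg (k n : ℕ) (u' : FreeGroup (Fin n)) : Hgp k n u' := PresentedGroup.of (Sum.inl false)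

/-- The generator `yₘ` of `H`. -/
def yg (k n : ℕ) (u' : FreeGroup (Fin n)) (m : Fin n) : Hgp k n u' :=
  PresentedGroup.of (Sum.inr m)

/-- For `g ∈ H` and `i ∈ ℤ`, the element `g_i := x⁻ⁱ g xⁱ`. -/
def cj (k n : ℕ) (u' : FreeGroup (Fin n)) (i : ℤ) (g : Hgp k n u') : Hgp k n u' :=
  xg k n u' ^ (-i) * g * xg k n u' ^ i

/-- The element `b_i = x⁻ⁱ b xⁱ`. -/
def bi (k n : ℕ) (u' : FreeGroup (Fin n)) (i : ℤ) : Hgp k n u' := cj k n u' i (bg k n u')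

/-- The element `y_{m,i} = x⁻ⁱ yₘ xⁱ`. -/
def yi (k n : ℕ) (u' : FreeGroup (Fin n)) (m : Fin n) (i : ℤ) : Hgp k n u' :=
  cj k n u' i (yg k n u' m)

/-- The element `u_i = x⁻ⁱ u xⁱ`, where `u` is the image of `u'` in `H`. -/
def ui (k n : ℕ) (u' : FreeGroup (Fin n)) (i : ℤ) : Hgp k n u' :=
  cj k n u' i (FreeGroup.lift (yg k n u') u')

/-- The subgroup `G_{i,∞} = ⟨G_l : l ≥ i⟩` of `H`, generated by all `b_j`, `y_{m,j}` with
`j ≥ i`. -/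
def Gge (k n : ℕ) (u' : FreeGroup (Fin n)) (i : ℤ) : Subgroup (Hgp k n u') :=
  Subgroup.closure
    ({g | ∃ j, i ≤ j ∧ g = bi k n u' j} ∪ {g | ∃ m j, i ≤ j ∧ g = yi k n u' m j})

/-- The subgroup `G_{−∞,i} = ⟨G_l : l ≤ i⟩` of `H`, generated by all `b_j`, `y_{m,j}` with
`j ≤ i`. -/
def Gle (k n : ℕ) (u' : FreeGroup (Fin n)) (i : ℤ) : Subgroup (Hgp k n u') :=
  Subgroup.closure
    ({g | ∃ j, j ≤ i ∧ g = bi k n u' j} ∪ {g | ∃ m j, j ≤ i ∧ g = yi k n u' m j})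

/-- `a` is the α-limit of `r`: the largest index `i` with `r ∈ G_{i,∞}`. -/
def IsAlphaLimit (k n : ℕ) (u' : FreeGroup (Fin n)) (r : Hgp k n u') (a : ℤ) : Prop :=
  r ∈ Gge k n u' a ∧ ∀ i, r ∈ Gge k n u' i → i ≤ a

/-- `w` is the ω-limit of `r`: the smallest index `i` with `r ∈ G_{−∞,i}`. -/
def IsOmegaLimit (k n : ℕ) (u' : FreeGroup (Fin n)) (r : Hgp k n u') (w : ℤ) : Prop :=
  r ∈ Gle k n u' w ∧ ∀ i, r ∈ Gle k n u' i → w ≤ i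

/-- The property that `φ : H →* Multiplicative ℤ` is the exponent-sum-in-`x` homomorphism. -/
def IsExpSum (k n : ℕ) (u' : FreeGroup (Fin n))
    (φ : Hgp k n u' →* Multiplicative ℤ) : Prop :=
  φ (xg k n u') = Multiplicative.ofAdd 1 ∧ φ (bg k n u') = 1 ∧ ∀ m, φ (yg k n u' m) = 1

/-- The normal closure, in the subgroup `N ≤ H`, of a subset `S ⊆ N`, viewed as a subgroup
of `H`: the subgroup generated by all `N`-conjugates of elements of `S`. -/
def nclIn (k n : ℕ) (u' : FreeGroup (Fin n)) (N : Subgroup (Hgp k n u'))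
    (S : Set (Hgp k n u')) : Subgroup (Hgp k n u') :=
  Subgroup.closure {h | ∃ g ∈ N, ∃ t ∈ S, h = g * t * g⁻¹}

/-- A reduced word is *cyclically reduced* if its first letter is not the inverse of its
last letter. -/
def IsCyclicallyReducedWord {X : Type*} (w : List (X × Bool)) : Prop :=
  ∀ a b : X × Bool, w.head? = some a → w.getLast? = some b → ¬(a.1 = b.1 ∧ a.2 = !b.2)


/-! ### Auxiliary development: `H ≅ F ⋊ ℤ` where `F` is free on `Fin k ⊕ Fin n × ℤ` -/

namespace KFWB

open SemidirectProduct Multiplicative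

variable (k n : ℕ) (u' : FreeGroup (Fin n))

/-- The free group on the putative basis. -/
abbrev FB := FreeGroup (Fin k ⊕ Fin n × ℤ)

/-- The word `u` written in the letters `y_{m,j}`, inside `FB`. -/
def Uw (j : ℤ) : FB k n :=
  FreeGroup.lift (fun m => FreeGroup.of (Sum.inr (m, j))) u'

variable (hk : 0 < k)

/-- The shift `σ` on generators. -/
def sigF : (Fin k ⊕ Fin n × ℤ) → FB k n
  | .inl t => if h : (t : ℕ) + 1 < k then FreeGroup.of (Sum.inl ⟨(t : ℕ) + 1, h⟩)
      else FreeGroup.of (Sum.inl ⟨0, hk⟩) * Uw k n u' 0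
  | .inr (m, j) => FreeGroup.of (Sum.inr (m, j + 1))

/-- The inverse shift `τ` on generators. -/
def tauF : (Fin k ⊕ Fin n × ℤ) → FB k n
  | .inl t => if _ : 0 < (t : ℕ) then
        FreeGroup.of (Sum.inl ⟨(t : ℕ) - 1, lt_of_le_of_lt (Nat.sub_le _ _) t.isLt⟩)
      else FreeGroup.of (Sum.inl ⟨k - 1, Nat.sub_lt hk one_pos⟩) * (Uw k n u' (-1))⁻¹
  | .inr (m, j) => FreeGroup.of (Sum.inr (m, j - 1))

def sigH : FB k n →* FB k n := FreeGroup.lift (sigF k n u' hk)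
def tauH : FB k n →* FB k n := FreeGroup.lift (tauF k n u' hk)

lemma sigH_of (a : Fin k ⊕ Fin n × ℤ) : sigH k n u' hk (FreeGroup.of a) = sigF k n u' hk a :=
  FreeGroup.lift_apply_of

lemma tauH_of (a : Fin k ⊕ Fin n × ℤ) : tauH k n u' hk (FreeGroup.of a) = tauF k n u' hk a :=
  FreeGroup.lift_apply_of

lemma sigH_Uw (j : ℤ) : sigH k n u' hk (Uw k n u' j) = Uw k n u' (j + 1) := by
  show ((sigH k n u' hk).comp (FreeGroup.lift (fun m => FreeGroup.of (Sum.inr (m, j))))) u'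
      = Uw k n u' (j + 1)
  congr 1
  apply FreeGroup.ext_hom
  intro m
  simp [sigH, Uw, sigF]

lemma tauH_Uw (j : ℤ) : tauH k n u' hk (Uw k n u' j) = Uw k n u' (j - 1) := by
  show ((tauH k n u' hk).comp (FreeGroup.lift (fun m => FreeGroup.of (Sum.inr (m, j))))) u'
      = Uw k n u' (j - 1)
  congr 1
  apply FreeGroup.ext_hom
  intro m
  simp [tauH, Uw, tauF]

lemma sig_tau : (sigH k n u' hk).comp (tauH k n u' hk) = MonoidHom.id _ := by
  apply FreeGroup.ext_hom
  rintro (t | ⟨m, j⟩)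
  · simp only [MonoidHom.comp_apply, MonoidHom.id_apply, tauH_of]
    rcases Nat.eq_zero_or_pos (t : ℕ) with h0 | h0
    · rw [tauF, dif_neg (by omega), map_mul, map_inv, sigH_Uw,
        show (-1 : ℤ) + 1 = 0 from by ring, sigH_of, sigF,
        dif_neg (show ¬ k - 1 + 1 < k by omega), mul_inv_cancel_right]
      congr 1
      exact congrArg Sum.inl (Fin.ext h0.symm)
    · rw [tauF, dif_pos h0, sigH_of, sigF, dif_pos (show (t : ℕ) - 1 + 1 < k by omega)]
      congr 2
      exact Fin.ext (show (t : ℕ) - 1 + 1 = t by omega)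
  · simp only [MonoidHom.comp_apply, MonoidHom.id_apply, tauH_of, tauF, sigH_of, sigF]
    simp

lemma tau_sig : (tauH k n u' hk).comp (sigH k n u' hk) = MonoidHom.id _ := by
  apply FreeGroup.ext_hom
  rintro (t | ⟨m, j⟩)
  · simp only [MonoidHom.comp_apply, MonoidHom.id_apply, sigH_of]
    by_cases h : (t : ℕ) + 1 < k
    · rw [sigF, dif_pos h, tauH_of, tauF, dif_pos (show 0 < (t : ℕ) + 1 by omega)]
      congr 1
    · rw [sigF, dif_neg h, map_mul, tauH_Uw, show (0 : ℤ) - 1 = -1 from by ring,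
        tauH_of, tauF, dif_neg (show ¬ (0 : ℕ) < 0 by omega), inv_mul_cancel_right]
      congr 1
      exact congrArg Sum.inl (Fin.ext (show k - 1 = (t : ℕ) by omega))
  · simp only [MonoidHom.comp_apply, MonoidHom.id_apply, sigH_of, sigF, tauH_of, tauF]
    simp

/-- The shift as an automorphism of `FB`. -/
def sigE : FB k n ≃* FB k n :=
  MonoidHom.toMulEquiv (sigH k n u' hk) (tauH k n u' hk) (tau_sig k n u' hk) (sig_tau k n u' hk)

lemma sigE_apply (w : FB k n) : sigE k n u' hk w = sigH k n u' hk w := rfl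

lemma sigE_symm_apply (w : FB k n) : (sigE k n u' hk).symm w = tauH k n u' hk w := rfl

lemma sigE_inv_apply (w : FB k n) : (sigE k n u' hk)⁻¹ w = tauH k n u' hk w := rfl

lemma sigE_zpow_y (j : ℤ) (m : Fin n) :
    ∀ l : ℤ, (sigE k n u' hk ^ j) (FreeGroup.of (Sum.inr (m, l)))
      = FreeGroup.of (Sum.inr (m, l + j)) := by
  induction j using Int.induction_on with
  | zero => simp
  | succ i ih =>
      intro l
      have h1 : (sigE k n u' hk ^ ((i : ℤ) + 1)) = sigE k n u' hk * (sigE k n u' hk ^ (i : ℤ)) := by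
        rw [show ((i : ℤ) + 1) = 1 + (i : ℤ) from by ring, zpow_add, zpow_one]
      rw [h1, MulAut.mul_apply, ih l, sigE_apply, sigH_of]
      show FreeGroup.of (Sum.inr (m, l + i + 1)) = _
      congr 2
      ring
  | pred i ih =>
      intro l
      have h1 : (sigE k n u' hk ^ (-(i : ℤ) - 1))
          = (sigE k n u' hk)⁻¹ * (sigE k n u' hk ^ (-(i : ℤ))) := by
        rw [sub_eq_add_neg, add_comm, zpow_add, zpow_neg_one]
      rw [h1, MulAut.mul_apply, ih l, sigE_inv_apply, tauH_of]
      show FreeGroup.of (Sum.inr (m, l + -i - 1)) = _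
      congr 2
      ring

lemma sigE_pow_b (t : ℕ) :
    ∀ ht : t < k, (sigE k n u' hk ^ t) (FreeGroup.of (Sum.inl ⟨0, hk⟩))
      = FreeGroup.of (Sum.inl ⟨t, ht⟩) := by
  induction t with
  | zero => intro _; simp
  | succ i ih =>
      intro ht
      rw [pow_succ', MulAut.mul_apply, ih (by omega), sigE_apply, sigH_of, sigF,
        dif_pos (show ((⟨i, by omega⟩ : Fin k) : ℕ) + 1 < k from ht)]

lemma sigE_pow_k :
    (sigE k n u' hk ^ k) (FreeGroup.of (Sum.inl ⟨0, hk⟩))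
      = FreeGroup.of (Sum.inl ⟨0, hk⟩) * Uw k n u' 0 := by
  obtain ⟨k', rfl⟩ : ∃ k', k = k' + 1 := ⟨k - 1, by omega⟩
  rw [pow_succ', MulAut.mul_apply, sigE_pow_b _ n u' hk k' (by omega), sigE_apply, sigH_of, sigF,
    dif_neg (show ¬ k' + 1 < k' + 1 by omega)]

/-- The action of `Multiplicative ℤ` on `FB`: `x` acts as `σ⁻¹` (so that `x⁻¹ g x`
acts as `σ`). -/
def phiZ : Multiplicative ℤ →* MulAut (FB k n) := zpowersHom _ (sigE k n u' hk)⁻¹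

lemma phiZ_apply (j : ℤ) : phiZ k n u' hk (ofAdd j) = sigE k n u' hk ^ (-j) := by
  show (sigE k n u' hk)⁻¹ ^ j = _
  rw [inv_zpow, zpow_neg]

/-- The model group: a semidirect product `FB ⋊ ℤ`. -/
abbrev Gsd := SemidirectProduct (FB k n) (Multiplicative ℤ) (phiZ k n u' hk)

/-! ### Lemmas about conjugation in `H` -/

section Hside

lemma cj_one (i : ℤ) : cj k n u' i 1 = 1 := by unfold cj; group

lemma cj_mul (i : ℤ) (a b : Hgp k n u') :
    cj k n u' i (a * b) = cj k n u' i a * cj k n u' i b := by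
  unfold cj; group

lemma cj_inv (i : ℤ) (a : Hgp k n u') :
    cj k n u' i a⁻¹ = (cj k n u' i a)⁻¹ := by
  unfold cj; group

lemma cj_cj (i j : ℤ) (g : Hgp k n u') :
    cj k n u' i (cj k n u' j g) = cj k n u' (j + i) g := by
  unfold cj; group

lemma conj_bi (j i : ℤ) :
    xg k n u' ^ j * bi k n u' i * (xg k n u' ^ j)⁻¹ = bi k n u' (i - j) := by
  unfold bi cj; group

lemma conj_yi (j i : ℤ) (m : Fin n) :
    xg k n u' ^ j * yi k n u' m i * (xg k n u' ^ j)⁻¹ = yi k n u' m (i - j) := by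
  unfold yi cj; group

lemma cj_lift (j : ℤ) (w : FreeGroup (Fin n)) :
    cj k n u' j (FreeGroup.lift (yg k n u') w) = FreeGroup.lift (fun m => yi k n u' m j) w := by
  induction w using FreeGroup.induction_on with
  | C1 => simp only [map_one]; exact cj_one k n u' j
  | of m => show cj k n u' j (FreeGroup.lift (yg k n u') (FreeGroup.of m))
        = (FreeGroup.lift fun m => yi k n u' m j) (FreeGroup.of m) ; rw [FreeGroup.lift_apply_of, FreeGroup.lift_apply_of] ; rfl
  | inv_of m _ => rename_i ih; rw [map_inv, map_inv, cj_inv, ih]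
  | mul a b iha ihb => rw [map_mul, map_mul, cj_mul, iha, ihb]

lemma ui_eq (j : ℤ) :
    ui k n u' j = FreeGroup.lift (fun m => yi k n u' m j) u' :=
  cj_lift k n u' j u'

lemma mk_map_inr :
    (PresentedGroup.mk (relOfH k n u')).comp (FreeGroup.map Sum.inr)
      = FreeGroup.lift (yg k n u') := by
  apply FreeGroup.ext_hom
  intro m
  simp only [MonoidHom.comp_apply, FreeGroup.map.of, FreeGroup.lift_apply_of]
  rfl

lemma rel_one :
    ((xg k n u')⁻¹) ^ k * (bg k n u')⁻¹ * (xg k n u') ^ k * bg k n u'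
      * FreeGroup.lift (yg k n u') u' = 1 := by
  have hmem : ((FreeGroup.of (Sum.inl true))⁻¹) ^ k * (FreeGroup.of (Sum.inl false))⁻¹ *
      (FreeGroup.of (Sum.inl true)) ^ k * FreeGroup.of (Sum.inl false) *
      FreeGroup.map Sum.inr u' ∈ Subgroup.normalClosure (relOfH k n u') :=
    Subgroup.subset_normalClosure rfl
  have h1 : PresentedGroup.mk (relOfH k n u')
      (((FreeGroup.of (Sum.inl true))⁻¹) ^ k * (FreeGroup.of (Sum.inl false))⁻¹ *
      (FreeGroup.of (Sum.inl true)) ^ k * FreeGroup.of (Sum.inl false) *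
      FreeGroup.map Sum.inr u') = 1 := (QuotientGroup.eq_one_iff _).mpr hmem
  rw [← h1]
  simp only [map_mul, map_pow, map_inv]
  rw [show (PresentedGroup.mk (relOfH k n u')) ((FreeGroup.map Sum.inr) u')
      = FreeGroup.lift (yg k n u') u' from DFunLike.congr_fun (mk_map_inr k n u') u']
  rfl

lemma rel0 : bi k n u' k = bg k n u' * FreeGroup.lift (yg k n u') u' := by
  have h := rel_one k n u'
  have hb : (bi k n u' k)⁻¹ = ((xg k n u')⁻¹) ^ k * (bg k n u')⁻¹ * (xg k n u') ^ k := by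
    unfold bi cj; group
  have h2 : (bi k n u' k)⁻¹ * (bg k n u' * FreeGroup.lift (yg k n u') u') = 1 := by
    rw [hb, ← h]; group
  exact (inv_mul_eq_one.mp h2)

lemma relI (i : ℤ) : bi k n u' (i + k) = bi k n u' i * ui k n u' i := by
  have h0 := rel0 k n u'
  have hc := congrArg (cj k n u' i) h0
  rw [cj_mul] at hc
  have hl : cj k n u' i (bi k n u' k) = bi k n u' (i + k) := by
    show cj k n u' i (cj k n u' (k : ℤ) (bg k n u')) = cj k n u' (i + (k : ℤ)) (bg k n u')
    rw [cj_cj, add_comm]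
  rw [hl] at hc
  exact hc

end Hside

/-! ### The homomorphism `θ : H →* Gsd` -/

def thF : Bool ⊕ Fin n → Gsd k n u' hk
  | .inl true => inr (ofAdd 1)
  | .inl false => inl (FreeGroup.of (Sum.inl ⟨0, hk⟩))
  | .inr m => inl (FreeGroup.of (Sum.inr (m, 0)))

lemma lift_thF_map_inr :
    (FreeGroup.lift (thF k n u' hk)).comp (FreeGroup.map Sum.inr)
      = (inl : FB k n →* Gsd k n u' hk).comp
          (FreeGroup.lift (fun m => FreeGroup.of (Sum.inr (m, 0)))) := by
  apply FreeGroup.ext_hom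
  intro m
  simp [thF]

lemma inr_pow_k : ((inr (ofAdd 1) : Gsd k n u' hk)) ^ k = inr (ofAdd (k : ℤ)) := by
  rw [← map_pow]
  congr 1
  apply Multiplicative.toAdd.injective
  simp

lemma inr_inv_pow_k : ((inr (ofAdd 1) : Gsd k n u' hk))⁻¹ ^ k = inr (ofAdd (-(k : ℤ))) := by
  rw [← map_inv, ← map_pow]
  congr 1
  apply Multiplicative.toAdd.injective
  simp

lemma thF_rel : ∀ r ∈ relOfH k n u', FreeGroup.lift (thF k n u' hk) r = 1 := by
  intro r hr
  have hre : r = ((FreeGroup.of (Sum.inl true))⁻¹) ^ k * (FreeGroup.of (Sum.inl false))⁻¹ *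
      (FreeGroup.of (Sum.inl true)) ^ k * FreeGroup.of (Sum.inl false) *
      FreeGroup.map Sum.inr u' := hr
  subst hre
  simp only [map_mul, map_pow, map_inv, FreeGroup.lift_apply_of]
  rw [show FreeGroup.lift (thF k n u' hk) (FreeGroup.map Sum.inr u') = inl (Uw k n u' 0)
      from DFunLike.congr_fun (lift_thF_map_inr k n u' hk) u']
  show ((inr (ofAdd 1) : Gsd k n u' hk))⁻¹ ^ k * (inl (FreeGroup.of (Sum.inl ⟨0, hk⟩)))⁻¹ *
      (inr (ofAdd 1)) ^ k * inl (FreeGroup.of (Sum.inl ⟨0, hk⟩)) * inl (Uw k n u' 0) = 1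
  rw [inr_pow_k, inr_inv_pow_k, ← map_inv,
    show (inr (ofAdd ((k : ℤ))) : Gsd k n u' hk) = inr ((ofAdd (-(k : ℤ)))⁻¹) from by
      congr 1; apply Multiplicative.toAdd.injective; simp]
  rw [mul_assoc (inr (ofAdd (-(k : ℤ)))), ← mul_assoc (inr (ofAdd (-(k : ℤ)))), ← inl_aut,
    phiZ_apply, neg_neg, zpow_natCast, map_inv, sigE_pow_k, ← map_mul, ← map_mul]
  rw [show (FreeGroup.of (Sum.inl (⟨0, hk⟩ : Fin k)) * Uw k n u' 0)⁻¹ *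
      FreeGroup.of (Sum.inl (⟨0, hk⟩ : Fin k)) * Uw k n u' 0 = 1 from by group]
  exact map_one inl

/-- The canonical homomorphism `θ : H →* Gsd`. -/
def theta : Hgp k n u' →* Gsd k n u' hk := PresentedGroup.toGroup (thF_rel k n u' hk)

lemma theta_x : theta k n u' hk (xg k n u') = inr (ofAdd 1) := PresentedGroup.toGroup.of _
lemma theta_b : theta k n u' hk (bg k n u') = inl (FreeGroup.of (Sum.inl ⟨0, hk⟩)) :=
  PresentedGroup.toGroup.of _
lemma theta_y (m : Fin n) :
    theta k n u' hk (yg k n u' m) = inl (FreeGroup.of (Sum.inr (m, 0))) :=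
  PresentedGroup.toGroup.of _

lemma theta_x_zpow (j : ℤ) : theta k n u' hk (xg k n u' ^ j) = inr (ofAdd j) := by
  rw [map_zpow, theta_x, ← map_zpow]
  congr 1
  apply Multiplicative.toAdd.injective
  simp

lemma theta_cj (j : ℤ) (g : Hgp k n u') (w : FB k n)
    (hw : theta k n u' hk g = inl w) :
    theta k n u' hk (cj k n u' j g) = inl ((sigE k n u' hk ^ j) w) := by
  unfold cj
  rw [map_mul, map_mul, hw, theta_x_zpow, theta_x_zpow,
    show (inr (ofAdd j) : Gsd k n u' hk) = inr ((ofAdd (-j))⁻¹) from by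
      congr 1; apply Multiplicative.toAdd.injective; simp,
    ← inl_aut, phiZ_apply, neg_neg]

lemma theta_bi (j : ℤ) :
    theta k n u' hk (bi k n u' j) = inl ((sigE k n u' hk ^ j) (FreeGroup.of (Sum.inl ⟨0, hk⟩))) :=
  theta_cj k n u' hk j _ _ (theta_b k n u' hk)

lemma theta_yi (m : Fin n) (j : ℤ) :
    theta k n u' hk (yi k n u' m j) = inl (FreeGroup.of (Sum.inr (m, j))) := by
  rw [show yi k n u' m j = cj k n u' j (yg k n u' m) from rfl,
    theta_cj k n u' hk j _ _ (theta_y k n u' hk m), sigE_zpow_y]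
  congr 3
  ring

/-! ### The homomorphism `ψ : Gsd →* H` -/

def psF : (Fin k ⊕ Fin n × ℤ) → Hgp k n u'
  | .inl t => bi k n u' (t : ℕ)
  | .inr (m, j) => yi k n u' m j

def psi1 : FB k n →* Hgp k n u' := FreeGroup.lift (psF k n u')

lemma psi1_of (a) : psi1 k n u' (FreeGroup.of a) = psF k n u' a := FreeGroup.lift_apply_of

lemma psi1_Uw (j : ℤ) : psi1 k n u' (Uw k n u' j) = ui k n u' j := by
  rw [ui_eq]
  show ((psi1 k n u').comp (FreeGroup.lift (fun m => FreeGroup.of (Sum.inr (m, j))))) u' = _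
  congr 1
  apply FreeGroup.ext_hom
  intro m
  simp only [MonoidHom.comp_apply, FreeGroup.lift_apply_of, psi1_of]
  rfl

lemma psi1_tau (w : FB k n) :
    psi1 k n u' (tauH k n u' hk w) = xg k n u' * psi1 k n u' w * (xg k n u')⁻¹ := by
  have : (psi1 k n u').comp (tauH k n u' hk)
      = (MulAut.conj (xg k n u')).toMonoidHom.comp (psi1 k n u') := by
    apply FreeGroup.ext_hom
    rintro (t | ⟨m, j⟩)
    · simp only [MonoidHom.comp_apply, tauH_of, MulEquiv.coe_toMonoidHom, MulAut.conj_apply,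
        psi1_of]
      rcases Nat.eq_zero_or_pos (t : ℕ) with h0 | h0
      · rw [tauF, dif_neg (by omega), map_mul, map_inv, psi1_Uw, psi1_of]
        show bi k n u' ((k : ℕ) - 1 : ℕ) * (ui k n u' (-1))⁻¹
            = xg k n u' * psF k n u' (Sum.inl t) * (xg k n u')⁻¹
        have h2 : psF k n u' (Sum.inl t) = bi k n u' 0 := by
          show bi k n u' ((t : ℕ) : ℤ) = _
          rw [h0]; norm_num
        rw [h2, show xg k n u' = xg k n u' ^ (1 : ℤ) from (zpow_one _).symm]
        rw [show (xg k n u' ^ (1:ℤ))⁻¹ = (xg k n u' ^ (1:ℤ))⁻¹ from rfl]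
        rw [conj_bi]
        have h3 := relI k n u' (-1)
        rw [show (-1 : ℤ) + (k : ℤ) = (((k : ℕ) - 1 : ℕ) : ℤ) by omega] at h3
        rw [h3]
        group
      · rw [tauF, dif_pos h0, psi1_of]
        show bi k n u' (((t : ℕ) - 1 : ℕ) : ℤ) = _
        show _ = xg k n u' * bi k n u' ((t : ℕ) : ℤ) * (xg k n u')⁻¹
        rw [show xg k n u' = xg k n u' ^ (1 : ℤ) from (zpow_one _).symm, conj_bi]
        congr 1
        omega
    · simp only [MonoidHom.comp_apply, tauH_of, tauF, psi1_of, MulEquiv.coe_toMonoidHom,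
        MulAut.conj_apply]
      show yi k n u' m (j - 1) = xg k n u' * yi k n u' m j * (xg k n u')⁻¹
      rw [show xg k n u' = xg k n u' ^ (1 : ℤ) from (zpow_one _).symm, conj_yi]
  exact DFunLike.congr_fun this w

lemma psi1_sig (w : FB k n) :
    psi1 k n u' (sigH k n u' hk w) = (xg k n u')⁻¹ * psi1 k n u' w * xg k n u' := by
  have : (psi1 k n u').comp (sigH k n u' hk)
      = (MulAut.conj (xg k n u')⁻¹).toMonoidHom.comp (psi1 k n u') := by
    apply FreeGroup.ext_hom
    rintro (t | ⟨m, j⟩)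
    · simp only [MonoidHom.comp_apply, sigH_of, MulEquiv.coe_toMonoidHom, MulAut.conj_apply,
        psi1_of]
      by_cases h : (t : ℕ) + 1 < k
      · rw [sigF, dif_pos h, psi1_of]
        show bi k n u' (((t : ℕ) + 1 : ℕ) : ℤ) = _
        show _ = (xg k n u')⁻¹ * bi k n u' ((t : ℕ) : ℤ) * ((xg k n u')⁻¹)⁻¹
        rw [show (xg k n u')⁻¹ = xg k n u' ^ (-1 : ℤ) from by group, conj_bi]
        congr 1
      · rw [sigF, dif_neg h, map_mul, psi1_Uw, psi1_of]
        show bi k n u' ((0 : ℕ) : ℤ) * ui k n u' 0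
            = (xg k n u')⁻¹ * psF k n u' (Sum.inl t) * ((xg k n u')⁻¹)⁻¹
        have h2 : psF k n u' (Sum.inl t) = bi k n u' ((k : ℤ) - 1) := by
          show bi k n u' ((t : ℕ) : ℤ) = _
          congr 1
          have := t.isLt
          omega
        rw [h2, show (xg k n u')⁻¹ = xg k n u' ^ (-1 : ℤ) from by group, conj_bi]
        have h3 := relI k n u' 0
        rw [show ((0 : ℤ) + (k : ℤ)) = (k : ℤ) from by ring] at h3
        rw [show ((k : ℤ) - 1 - -1) = (k : ℤ) from by ring, h3]
        norm_num
    · simp only [MonoidHom.comp_apply, sigH_of, sigF, psi1_of, MulEquiv.coe_toMonoidHom,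
        MulAut.conj_apply]
      show yi k n u' m (j + 1) = (xg k n u')⁻¹ * yi k n u' m j * ((xg k n u')⁻¹)⁻¹
      rw [show (xg k n u')⁻¹ = xg k n u' ^ (-1 : ℤ) from by group, conj_yi]
      congr 1
  exact DFunLike.congr_fun this w

lemma psi1_sigE_zpow (j : ℤ) (w : FB k n) :
    psi1 k n u' ((sigE k n u' hk ^ (-j)) w)
      = xg k n u' ^ j * psi1 k n u' w * (xg k n u' ^ j)⁻¹ := by
  induction j using Int.induction_on generalizing w with
  | zero => simp
  | succ i ih =>
      have h1 : sigE k n u' hk ^ (-((i : ℤ) + 1)) = sigE k n u' hk ^ (-(i : ℤ)) * (sigE k n u' hk)⁻¹ := by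
        rw [show (-((i : ℤ) + 1)) = -(i : ℤ) + (-1) from by ring, zpow_add, zpow_neg_one]
      rw [h1, MulAut.mul_apply, sigE_inv_apply, ih, psi1_tau]
      group
  | pred i ih =>
      have h1 : sigE k n u' hk ^ (-(-(i : ℤ) - 1)) = sigE k n u' hk ^ (-(-(i : ℤ))) * sigE k n u' hk := by
        rw [show (-(-(i : ℤ) - 1)) = -(-(i : ℤ)) + 1 from by ring, zpow_add, zpow_one]
      rw [h1, MulAut.mul_apply, sigE_apply, ih, psi1_sig]
      group

def psi2 : Multiplicative ℤ →* Hgp k n u' := zpowersHom _ (xg k n u')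

lemma psi2_apply (j : ℤ) : psi2 k n u' (ofAdd j) = xg k n u' ^ j := rfl

lemma psi_compat : ∀ g : Multiplicative ℤ,
    (psi1 k n u').comp ((phiZ k n u' hk g) : FB k n ≃* FB k n).toMonoidHom
      = (MulAut.conj (psi2 k n u' g)).toMonoidHom.comp (psi1 k n u') := by
  intro g
  apply MonoidHom.ext
  intro a
  simp only [MonoidHom.comp_apply, MulEquiv.coe_toMonoidHom, MulAut.conj_apply]
  have hg : g = ofAdd (toAdd g) := rfl
  rw [hg, phiZ_apply, psi2_apply]
  exact psi1_sigE_zpow k n u' hk (toAdd g) _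

/-- The homomorphism `ψ : Gsd →* H`. -/
def psi : Gsd k n u' hk →* Hgp k n u' :=
  SemidirectProduct.lift (psi1 k n u') (psi2 k n u') (psi_compat k n u' hk)

lemma psi_inl (w : FB k n) : psi k n u' hk (inl w) = psi1 k n u' w := lift_inl _ _ _ _

lemma psi_inr (g : Multiplicative ℤ) : psi k n u' hk (inr g) = psi2 k n u' g := lift_inr _ _ _ _

/-! ### `θ` and `ψ` are mutually inverse -/

lemma psi_theta : (psi k n u' hk).comp (theta k n u' hk) = MonoidHom.id _ := by
  apply PresentedGroup.ext
  rintro (b | m)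
  · cases b with
    | true =>
        show psi k n u' hk (theta k n u' hk (xg k n u')) = xg k n u'
        rw [theta_x, psi_inr, psi2_apply, zpow_one]
    | false =>
        show psi k n u' hk (theta k n u' hk (bg k n u')) = bg k n u'
        rw [theta_b, psi_inl, psi1_of]
        show bi k n u' (((⟨0, hk⟩ : Fin k) : ℕ) : ℤ) = bg k n u'
        show bi k n u' ((0 : ℕ) : ℤ) = bg k n u'
        unfold bi cj
        norm_num
  · show psi k n u' hk (theta k n u' hk (yg k n u' m)) = yg k n u' m
    rw [theta_y, psi_inl, psi1_of]
    show yi k n u' m 0 = yg k n u' m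
    unfold yi cj
    norm_num

lemma theta_psi : (theta k n u' hk).comp (psi k n u' hk) = MonoidHom.id _ := by
  apply SemidirectProduct.hom_ext
  · apply FreeGroup.ext_hom
    rintro (t | ⟨m, j⟩)
    · simp only [MonoidHom.comp_apply, MonoidHom.id_apply, psi_inl, psi1_of]
      show theta k n u' hk (bi k n u' ((t : ℕ) : ℤ)) = inl (FreeGroup.of (Sum.inl t))
      rw [theta_bi, zpow_natCast, sigE_pow_b k n u' hk (t : ℕ) t.isLt]
    · simp only [MonoidHom.comp_apply, MonoidHom.id_apply, psi_inl, psi1_of]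
      show theta k n u' hk (yi k n u' m j) = inl (FreeGroup.of (Sum.inr (m, j)))
      exact theta_yi k n u' hk m j
  · apply MonoidHom.ext_mint
    simp only [MonoidHom.comp_apply, MonoidHom.id_apply, psi_inr, psi2_apply, zpow_one]
    exact theta_x k n u' hk

/-- The isomorphism `H ≃* Gsd`. -/
def eHG : Hgp k n u' ≃* Gsd k n u' hk :=
  MonoidHom.toMulEquiv (theta k n u' hk) (psi k n u' hk) (psi_theta k n u' hk)
    (theta_psi k n u' hk)

/-! ### Identifying the kernel -/

section Ker

variable (φ : Hgp k n u' →* Multiplicative ℤ)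

lemma phi_eq (hφ : IsExpSum k n u' φ) :
    φ = SemidirectProduct.rightHom.comp (theta k n u' hk) := by
  apply PresentedGroup.ext
  rintro (b | m)
  · cases b with
    | true =>
        show φ (xg k n u') = rightHom (theta k n u' hk (xg k n u'))
        rw [hφ.1, theta_x, rightHom_inr]
    | false =>
        show φ (bg k n u') = rightHom (theta k n u' hk (bg k n u'))
        rw [hφ.2.1, theta_b, rightHom_inl]
  · show φ (yg k n u' m) = rightHom (theta k n u' hk (yg k n u' m))
    rw [hφ.2.2 m, theta_y, rightHom_inl]

lemma mem_ker_iff (hφ : IsExpSum k n u' φ) (g : Hgp k n u') :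
    g ∈ φ.ker ↔ rightHom (theta k n u' hk g) = 1 := by
  rw [MonoidHom.mem_ker, phi_eq k n u' hk φ hφ]
  rfl

/-- The kernel of `φ` is isomorphic to the free group `FB`. -/
def kerIso (hφ : IsExpSum k n u' φ) : FB k n ≃* ↥φ.ker where
  toFun w := ⟨psi k n u' hk (inl w), by
    rw [mem_ker_iff k n u' hk φ hφ,
      show theta k n u' hk (psi k n u' hk (inl w)) = inl w from
        DFunLike.congr_fun (theta_psi k n u' hk) (inl w), rightHom_inl]⟩
  invFun h := (theta k n u' hk (h : Hgp k n u')).left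
  left_inv w := by
    simp only
    rw [show theta k n u' hk (psi k n u' hk (inl w)) = inl w from
      DFunLike.congr_fun (theta_psi k n u' hk) (inl w), left_inl]
  right_inv h := by
    apply Subtype.ext
    simp only
    have h1 : rightHom (theta k n u' hk (h : Hgp k n u')) = 1 :=
      (mem_ker_iff k n u' hk φ hφ _).mp h.2
    have h2 : inl ((theta k n u' hk (h : Hgp k n u')).left) = theta k n u' hk (h : Hgp k n u') := by
      rw [← inl_left_mul_inr_right (theta k n u' hk (h : Hgp k n u'))]
      rw [show (theta k n u' hk (h : Hgp k n u')).right
          = rightHom (theta k n u' hk (h : Hgp k n u')) from rfl, h1, map_one, mul_one]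
      rfl
    rw [h2, show psi k n u' hk (theta k n u' hk (h : Hgp k n u')) = (h : Hgp k n u') from
      DFunLike.congr_fun (psi_theta k n u' hk) (h : Hgp k n u')]
  map_mul' a b := by
    apply Subtype.ext
    simp [map_mul]

lemma kerIso_apply_coe (hφ : IsExpSum k n u' φ) (w : FB k n) :
    ((kerIso k n u' hk φ hφ w : ↥φ.ker) : Hgp k n u') = psi1 k n u' w := by
  show psi k n u' hk (inl w) = psi1 k n u' w
  exact psi_inl k n u' hk w

end Ker

end KFWB

/-- The kernel `N` of the exponent-sum-in-`x` homomorphism `φ : H → ℤ` is a free group, and for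
every `i ∈ ℤ` the family `B(i) = {b_i, …, b_{i+k-1}} ∪ {y_{m,j} : 1 ≤ m ≤ n, j ∈ ℤ}` is a free
basis of `N`. -/
theorem kernel_free_with_bases (k n : ℕ) (hk : 1 ≤ k) (hn : 1 ≤ n)
    (u' : FreeGroup (Fin n)) (hu : u' ≠ 1)
    (φ : Hgp k n u' →* Multiplicative ℤ) (hφ : IsExpSum k n u' φ) :
    IsFreeGroup ↥φ.ker ∧
      ∀ i : ℤ, ∃ basis : FreeGroupBasis (Fin k ⊕ Fin n × ℤ) ↥φ.ker,
        (∀ t : Fin k, (basis (Sum.inl t) : Hgp k n u') = bi k n u' (i + (t : ℕ))) ∧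
        (∀ m : Fin n, ∀ j : ℤ, (basis (Sum.inr (m, j)) : Hgp k n u') = yi k n u' m j) := by
  have hk' : 0 < k := hk
  let B0 : FreeGroupBasis (Fin k ⊕ Fin n × ℤ) ↥φ.ker :=
    FreeGroupBasis.ofRepr (KFWB.kerIso k n u' hk' φ hφ).symm
  have hB0 : ∀ idx, ((B0 idx : ↥φ.ker) : Hgp k n u') = KFWB.psF k n u' idx := by
    intro idx
    show (((KFWB.kerIso k n u' hk' φ hφ).symm.symm (FreeGroup.of idx) : ↥φ.ker) : Hgp k n u') = _
    rw [MulEquiv.symm_symm, KFWB.kerIso_apply_coe, KFWB.psi1_of]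
  refine ⟨B0.isFreeGroup, fun i => ?_⟩
  let κ : ↥φ.ker ≃* ↥φ.ker := MulAut.conjNormal (xg k n u' ^ (-i))
  let ρ : (Fin k ⊕ Fin n × ℤ) ≃ (Fin k ⊕ Fin n × ℤ) :=
    (Equiv.refl (Fin k)).sumCongr ((Equiv.refl (Fin n)).prodCongr (Equiv.addRight i))
  have hρl : ∀ t : Fin k, ρ.symm (Sum.inl t) = Sum.inl t := by
    intro t; simp [ρ]
  have hρr : ∀ (m : Fin n) (j : ℤ), ρ.symm (Sum.inr (m, j)) = Sum.inr (m, j - i) := by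
    intro m j; simp [ρ, Equiv.addRight, sub_eq_add_neg]
  have happ : ∀ idx, (((B0.map κ).reindex ρ) idx : Hgp k n u')
      = xg k n u' ^ (-i) * ((B0 (ρ.symm idx) : ↥φ.ker) : Hgp k n u') * (xg k n u' ^ (-i))⁻¹ := by
    intro idx
    rw [FreeGroupBasis.reindex_apply, FreeGroupBasis.map_apply]
    exact MulAut.conjNormal_apply _ _
  refine ⟨(B0.map κ).reindex ρ, fun t => ?_, fun m j => ?_⟩
  · rw [happ, hρl, hB0]
    show xg k n u' ^ (-i) * bi k n u' ((t : ℕ) : ℤ) * (xg k n u' ^ (-i))⁻¹ = _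
    rw [KFWB.conj_bi]
    congr 1
    ring
  · rw [happ, hρr, hB0]
    show xg k n u' ^ (-i) * yi k n u' m (j - i) * (xg k n u' ^ (-i))⁻¹ = _
    rw [KFWB.conj_yi]
    congr 1
    ring
end

section
/- With the presentation N = ⟨ ⋃_{i∈ℤ} Y_i | b_i u_i = b_{i+k} (i ∈ ℤ) ⟩ where Y_i = {b_i, y_{1,i}, …, y_{n,i}}, each group N_l (the amalgamated product … * G_{l-k} *_{Z_l} G_l *_{Z_{l+k}} G_{l+k} * …) is free with basis B_l = {b_l} ∪ {y_{m,l+tk} : 1 ≤ m ≤ n, t ∈ ℤ}. -/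
namespace NlAux

variable (k n : ℕ) (u' : FreeGroup (Fin n))

/-- The ambient free group with letters `a_r` (`r : ℤ`, only `0 ≤ r < k` used) and `y_{m,i}`. -/
abbrev M (n : ℕ) : Type := FreeGroup (ℤ ⊕ Fin n × ℤ)

/-- The word `u` written in the letters `y_{m,i}`. -/
def U (i : ℤ) : M n := FreeGroup.lift (fun m => FreeGroup.of (Sum.inr (m, i))) u'

def wpos (r : ℤ) : ℕ → M n
  | 0 => 1
  | s+1 => wpos r s * U n u' (r + (k : ℤ) * (s : ℤ))

def wneg (r : ℤ) : ℕ → M n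
  | 0 => 1
  | s+1 => wneg r s * (U n u' (r - (k : ℤ) * ((s : ℤ) + 1)))⁻¹

def w (r : ℤ) : ℤ → M n
  | Int.ofNat s => wpos k n u' r s
  | Int.negSucc s => wneg k n u' r (s+1)

@[simp] lemma w_zero (r : ℤ) : w k n u' r 0 = 1 := rfl

lemma w_step (r s : ℤ) : w k n u' r (s + 1) = w k n u' r s * U n u' (r + (k : ℤ) * s) := by
  cases s with
  | ofNat m =>
    show w k n u' r (Int.ofNat (m+1)) = w k n u' r (Int.ofNat m) * _
    simp only [w, wpos]
    norm_cast
  | negSucc m =>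
    cases m with
    | zero =>
      show w k n u' r 0 = w k n u' r (Int.negSucc 0) * _
      simp only [w, wneg, wpos, one_mul, w_zero]
      rw [show r + (k:ℤ) * (Int.negSucc 0) = r - (k:ℤ) * (((0:ℕ):ℤ) + 1) by
        simp [Int.negSucc_eq]; ring]
      rw [inv_mul_cancel]
    | succ m =>
      show w k n u' r (Int.negSucc m) = w k n u' r (Int.negSucc (m+1)) * _
      simp only [w, wneg, mul_assoc]
      rw [show r + (k:ℤ) * (Int.negSucc (m+1)) = r - (k:ℤ) * ((((m+1):ℕ):ℤ) + 1) by
        simp [Int.negSucc_eq]; ring]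
      rw [inv_mul_cancel, mul_one]

lemma w_sub_one (r s : ℤ) : w k n u' r (s - 1) = w k n u' r s * (U n u' (r + (k:ℤ) * (s-1)))⁻¹ := by
  have := w_step k n u' r (s - 1)
  rw [sub_add_cancel] at this
  rw [this, mul_assoc, mul_inv_cancel, mul_one]

lemma w_shift (r s : ℤ) :
    w k n u' (r + (k:ℤ)) s = (U n u' r)⁻¹ * w k n u' r (s + 1) := by
  induction s using Int.induction_on with
  | zero =>
    have h := w_step k n u' r 0
    rw [zero_add, w_zero, one_mul, mul_zero, add_zero] at h
    rw [w_zero, zero_add, h, inv_mul_cancel]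
  | succ i ih =>
    calc w k n u' (r + (k:ℤ)) ((i:ℤ) + 1)
        = w k n u' (r + (k:ℤ)) (i:ℤ) * U n u' (r + (k:ℤ) + (k:ℤ) * (i:ℤ)) := w_step ..
      _ = (U n u' r)⁻¹ * (w k n u' r ((i:ℤ)+1) * U n u' (r + (k:ℤ) * ((i:ℤ)+1))) := by
          rw [ih, mul_assoc]
          congr 3
          ring
      _ = (U n u' r)⁻¹ * w k n u' r ((i:ℤ)+1+1) := by rw [← w_step]
  | pred i ih =>
    calc w k n u' (r + (k:ℤ)) (-(i:ℤ) - 1)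
        = w k n u' (r + (k:ℤ)) (-(i:ℤ)) * (U n u' (r + (k:ℤ) + (k:ℤ) * (-(i:ℤ) - 1)))⁻¹ :=
          w_sub_one ..
      _ = (U n u' r)⁻¹ * (w k n u' r (-(i:ℤ) + 1) * (U n u' (r + (k:ℤ) * (-(i:ℤ) + 1 - 1)))⁻¹) := by
          rw [ih, mul_assoc]
          congr 4
          ring
      _ = (U n u' r)⁻¹ * w k n u' r (-(i:ℤ) + 1 - 1) := by rw [← w_sub_one]
      _ = (U n u' r)⁻¹ * w k n u' r (-(i:ℤ) - 1 + 1) := by norm_num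


/-- The image of `b_i`. -/
def beta (i : ℤ) : M n :=
  FreeGroup.of (Sum.inl (i % (k:ℤ))) * w k n u' (i % (k:ℤ)) (i / (k:ℤ))

lemma beta_add_k (hk : 0 < (k:ℤ)) (i : ℤ) :
    beta k n u' (i + (k:ℤ)) = beta k n u' i * U n u' i := by
  have hk0 : (k:ℤ) ≠ 0 := hk.ne'
  rw [beta, beta, show i + (k:ℤ) = i + (k:ℤ) * 1 by ring, Int.add_mul_emod_self_left,
    Int.add_mul_ediv_left _ _ hk0, w_step, mul_assoc]
  congr 2
  exact congrArg (U n u') (Int.emod_add_mul_ediv i (k:ℤ))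

lemma emod_self_ediv (hk : 0 < (k:ℤ)) {r : ℤ} (h : r % (k:ℤ) = r) : r / (k:ℤ) = 0 := by
  have h2 := Int.emod_add_mul_ediv r (k:ℤ)
  rw [h] at h2
  have : (k:ℤ) * (r / (k:ℤ)) = 0 := by omega
  rcases mul_eq_zero.1 this with h3 | h3
  · exact absurd h3 hk.ne'
  · exact h3

lemma beta_of_reduced (hk : 0 < (k:ℤ)) {r : ℤ} (h : r % (k:ℤ) = r) :
    beta k n u' r = FreeGroup.of (Sum.inl r) := by
  rw [beta, h, emod_self_ediv k hk h, w_zero, mul_one]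


lemma hom_comp_lift {A B : Type*} [Group A] [Group B] (F : A →* B) {α : Type*} (h : α → A)
    (x : FreeGroup α) : F (FreeGroup.lift h x) = FreeGroup.lift (fun a => F (h a)) x := by
  have : F.comp (FreeGroup.lift h) = FreeGroup.lift (fun a => F (h a)) := by
    ext a
    simp
  exact DFunLike.congr_fun this x

/-- The shift map on letters. -/
def cf : ℤ ⊕ Fin n × ℤ → M n :=
  Sum.elim (fun r => if r % (k:ℤ) = r then beta k n u' (r+1) else FreeGroup.of (Sum.inl r))
    (fun p => FreeGroup.of (Sum.inr (p.1, p.2 + 1)))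

def df : ℤ ⊕ Fin n × ℤ → M n :=
  Sum.elim (fun r => if r % (k:ℤ) = r then beta k n u' (r-1) else FreeGroup.of (Sum.inl r))
    (fun p => FreeGroup.of (Sum.inr (p.1, p.2 - 1)))

def cHom : M n →* M n := FreeGroup.lift (cf k n u')

def dHom : M n →* M n := FreeGroup.lift (df k n u')

@[simp] lemma c_y (m : Fin n) (i : ℤ) :
    cHom k n u' (FreeGroup.of (Sum.inr (m, i))) = FreeGroup.of (Sum.inr (m, i+1)) := by
  simp [cHom, cf]

@[simp] lemma d_y (m : Fin n) (i : ℤ) :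
    dHom k n u' (FreeGroup.of (Sum.inr (m, i))) = FreeGroup.of (Sum.inr (m, i-1)) := by
  simp [dHom, df]

lemma c_a {r : ℤ} (h : r % (k:ℤ) = r) :
    cHom k n u' (FreeGroup.of (Sum.inl r)) = beta k n u' (r+1) := by
  simp [cHom, cf, h]

lemma d_a {r : ℤ} (h : r % (k:ℤ) = r) :
    dHom k n u' (FreeGroup.of (Sum.inl r)) = beta k n u' (r-1) := by
  simp [dHom, df, h]

lemma c_a' {r : ℤ} (h : ¬ r % (k:ℤ) = r) :
    cHom k n u' (FreeGroup.of (Sum.inl r)) = FreeGroup.of (Sum.inl r) := by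
  simp [cHom, cf, h]

lemma d_a' {r : ℤ} (h : ¬ r % (k:ℤ) = r) :
    dHom k n u' (FreeGroup.of (Sum.inl r)) = FreeGroup.of (Sum.inl r) := by
  simp [dHom, df, h]

lemma c_U (j : ℤ) : cHom k n u' (U n u' j) = U n u' (j+1) := by
  rw [U, hom_comp_lift]
  simp only [c_y]
  rfl

lemma d_U (j : ℤ) : dHom k n u' (U n u' j) = U n u' (j-1) := by
  rw [U, hom_comp_lift]
  simp only [d_y]
  rfl

lemma c_w (r s : ℤ) : cHom k n u' (w k n u' r s) = w k n u' (r+1) s := by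
  have hpos : ∀ s : ℕ, cHom k n u' (wpos k n u' r s) = wpos k n u' (r+1) s := by
    intro s
    induction s with
    | zero => simp [wpos]
    | succ s ih =>
      rw [wpos, map_mul, ih, c_U, wpos]
      congr 2
      ring
  have hneg : ∀ s : ℕ, cHom k n u' (wneg k n u' r s) = wneg k n u' (r+1) s := by
    intro s
    induction s with
    | zero => simp [wneg]
    | succ s ih =>
      rw [wneg, map_mul, ih, map_inv, c_U, wneg]
      congr 3
      ring
  cases s with
  | ofNat s => exact hpos s
  | negSucc s => exact hneg (s+1)

lemma d_w (r s : ℤ) : dHom k n u' (w k n u' r s) = w k n u' (r-1) s := by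
  have hpos : ∀ s : ℕ, dHom k n u' (wpos k n u' r s) = wpos k n u' (r-1) s := by
    intro s
    induction s with
    | zero => simp [wpos]
    | succ s ih =>
      rw [wpos, map_mul, ih, d_U, wpos]
      congr 2
      ring
  have hneg : ∀ s : ℕ, dHom k n u' (wneg k n u' r s) = wneg k n u' (r-1) s := by
    intro s
    induction s with
    | zero => simp [wneg]
    | succ s ih =>
      rw [wneg, map_mul, ih, map_inv, d_U, wneg]
      congr 3
      ring
  cases s with
  | ofNat s => exact hpos s
  | negSucc s => exact hneg (s+1)

lemma w_one_eq (r : ℤ) : w k n u' r 1 = U n u' r := by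
  have := w_step k n u' r 0
  rw [zero_add, w_zero, one_mul, mul_zero, add_zero] at this
  exact this

lemma c_beta (hk : 0 < (k:ℤ)) (i : ℤ) :
    cHom k n u' (beta k n u' i) = beta k n u' (i+1) := by
  have hk0 : (k:ℤ) ≠ 0 := hk.ne'
  have hrr : (i % (k:ℤ)) % (k:ℤ) = i % (k:ℤ) := Int.emod_emod_of_dvd i dvd_rfl
  have hr0 : 0 ≤ i % (k:ℤ) := Int.emod_nonneg i hk0
  have hrk : i % (k:ℤ) < (k:ℤ) := Int.emod_lt_of_pos i hk
  have hi : i % (k:ℤ) + (k:ℤ) * (i / (k:ℤ)) = i := Int.emod_add_mul_ediv i (k:ℤ)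
  set r := i % (k:ℤ)
  set s := i / (k:ℤ)
  rw [beta, map_mul, c_a k n u' hrr, c_w]
  rcases lt_or_eq_of_le (by omega : r + 1 ≤ (k:ℤ)) with h | h
  · have h1 : (i+1) % (k:ℤ) = r + 1 := by
      rw [show i + 1 = (r+1) + (k:ℤ) * s by omega, Int.add_mul_emod_self_left,
        Int.emod_eq_of_lt (by omega) h]
    have h2 : (i+1) / (k:ℤ) = s := by
      rw [show i + 1 = (r+1) + (k:ℤ) * s by omega, Int.add_mul_ediv_left _ _ hk0,
        Int.ediv_eq_zero_of_lt (by omega) h, zero_add]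
    rw [beta_of_reduced k n u' hk (by rw [Int.emod_eq_of_lt (by omega) h])]
    rw [show beta k n u' (i+1) = FreeGroup.of (Sum.inl ((i+1) % (k:ℤ))) *
      w k n u' ((i+1) % (k:ℤ)) ((i+1) / (k:ℤ)) from rfl, h1, h2]
  · have hik : i + 1 = (k:ℤ) * (s + 1) := by
      have hd : (k:ℤ) * (s+1) = (k:ℤ) * s + (k:ℤ) := by ring
      omega
    have h1 : (i+1) % (k:ℤ) = 0 := by rw [hik, Int.mul_emod_right]
    have h2 : (i+1) / (k:ℤ) = s + 1 := by rw [hik, Int.mul_ediv_cancel_left _ hk0]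
    have hb : beta k n u' (r+1) = FreeGroup.of (Sum.inl 0) * U n u' 0 := by
      rw [h, beta, Int.emod_self, Int.ediv_self hk0, w_one_eq]
    have hw : U n u' 0 * w k n u' ((k:ℤ)) s = w k n u' 0 (s+1) := by
      have := w_shift k n u' 0 s
      rw [zero_add] at this
      rw [this, ← mul_assoc, mul_inv_cancel, one_mul]
    rw [hb, show beta k n u' (i+1) = FreeGroup.of (Sum.inl ((i+1) % (k:ℤ))) *
      w k n u' ((i+1) % (k:ℤ)) ((i+1) / (k:ℤ)) from rfl, h1, h2, ← hw, mul_assoc,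
      show i % (k:ℤ) + 1 = (k:ℤ) from h]

lemma d_beta (hk : 0 < (k:ℤ)) (i : ℤ) :
    dHom k n u' (beta k n u' i) = beta k n u' (i-1) := by
  have hk0 : (k:ℤ) ≠ 0 := hk.ne'
  have hrr : (i % (k:ℤ)) % (k:ℤ) = i % (k:ℤ) := Int.emod_emod_of_dvd i dvd_rfl
  have hr0 : 0 ≤ i % (k:ℤ) := Int.emod_nonneg i hk0
  have hrk : i % (k:ℤ) < (k:ℤ) := Int.emod_lt_of_pos i hk
  have hi : i % (k:ℤ) + (k:ℤ) * (i / (k:ℤ)) = i := Int.emod_add_mul_ediv i (k:ℤ)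
  set r := i % (k:ℤ)
  set s := i / (k:ℤ)
  rw [beta, map_mul, d_a k n u' hrr, d_w]
  rcases lt_or_eq_of_le hr0 with h | h
  · -- 0 < r
    have h1 : (i-1) % (k:ℤ) = r - 1 := by
      rw [show i - 1 = (r-1) + (k:ℤ) * s by omega, Int.add_mul_emod_self_left,
        Int.emod_eq_of_lt (by omega) (by omega)]
    have h2 : (i-1) / (k:ℤ) = s := by
      rw [show i - 1 = (r-1) + (k:ℤ) * s by omega, Int.add_mul_ediv_left _ _ hk0,
        Int.ediv_eq_zero_of_lt (by omega) (by omega), zero_add]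
    rw [beta_of_reduced k n u' hk (by rw [Int.emod_eq_of_lt (by omega) (by omega)])]
    rw [show beta k n u' (i-1) = FreeGroup.of (Sum.inl ((i-1) % (k:ℤ))) *
      w k n u' ((i-1) % (k:ℤ)) ((i-1) / (k:ℤ)) from rfl, h1, h2]
  · -- r = 0
    have em1 : (-1 : ℤ) % (k:ℤ) = (k:ℤ) - 1 := by
      rw [show (-1 : ℤ) = ((k:ℤ)-1) + (k:ℤ) * (-1) by ring, Int.add_mul_emod_self_left,
        Int.emod_eq_of_lt (by omega) (by omega)]
    have ed1 : (-1 : ℤ) / (k:ℤ) = -1 := by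
      conv_lhs => rw [show (-1 : ℤ) = ((k:ℤ)-1) + (k:ℤ) * (-1) by ring]
      rw [Int.add_mul_ediv_left _ _ hk0,
        Int.ediv_eq_zero_of_lt (by omega) (by omega), zero_add]
    have h1 : (i-1) % (k:ℤ) = (k:ℤ) - 1 := by
      rw [show i - 1 = ((k:ℤ)-1) + (k:ℤ) * (s-1) by
          have hd : (k:ℤ) * (s-1) = (k:ℤ) * s - (k:ℤ) := by ring
          omega, Int.add_mul_emod_self_left,
        Int.emod_eq_of_lt (by omega) (by omega)]
    have h2 : (i-1) / (k:ℤ) = s - 1 := by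
      rw [show i - 1 = ((k:ℤ)-1) + (k:ℤ) * (s-1) by
          have hd : (k:ℤ) * (s-1) = (k:ℤ) * s - (k:ℤ) := by ring
          omega, Int.add_mul_ediv_left _ _ hk0,
        Int.ediv_eq_zero_of_lt (by omega) (by omega), zero_add]
    have hshift : ∀ t : ℤ, w k n u' ((k:ℤ) - 1) t = (U n u' (-1))⁻¹ * w k n u' (-1) (t+1) := by
      intro t
      have := w_shift k n u' (-1) t
      rw [show (-1 : ℤ) + (k:ℤ) = (k:ℤ) - 1 by ring] at this
      exact this
    have hbm1 : beta k n u' (-1) = FreeGroup.of (Sum.inl ((k:ℤ)-1)) * (U n u' (-1))⁻¹ := by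
      rw [beta, em1, ed1, hshift, show (-1 : ℤ) + 1 = 0 by ring, w_zero, mul_one]
    rw [show r - 1 = -1 by omega, hbm1]
    rw [show beta k n u' (i-1) = FreeGroup.of (Sum.inl ((i-1) % (k:ℤ))) *
      w k n u' ((i-1) % (k:ℤ)) ((i-1) / (k:ℤ)) from rfl, h1, h2, hshift,
      show s - 1 + 1 = s by ring, mul_assoc]



lemma dc_comp (hk : 0 < (k:ℤ)) :
    (dHom k n u').comp (cHom k n u') = MonoidHom.id (M n) := by
  ext x
  rcases x with r | ⟨m, i⟩
  · by_cases h : r % (k:ℤ) = r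
    · rw [MonoidHom.comp_apply, c_a k n u' h, d_beta k n u' hk, add_sub_cancel_right,
        beta_of_reduced k n u' hk h, MonoidHom.id_apply]
    · rw [MonoidHom.comp_apply, c_a' k n u' h, d_a' k n u' h, MonoidHom.id_apply]
  · rw [MonoidHom.comp_apply, c_y, d_y, add_sub_cancel_right, MonoidHom.id_apply]

lemma cd_comp (hk : 0 < (k:ℤ)) :
    (cHom k n u').comp (dHom k n u') = MonoidHom.id (M n) := by
  ext x
  rcases x with r | ⟨m, i⟩
  · by_cases h : r % (k:ℤ) = r
    · rw [MonoidHom.comp_apply, d_a k n u' h, c_beta k n u' hk, sub_add_cancel,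
        beta_of_reduced k n u' hk h, MonoidHom.id_apply]
    · rw [MonoidHom.comp_apply, d_a' k n u' h, c_a' k n u' h, MonoidHom.id_apply]
  · rw [MonoidHom.comp_apply, d_y, c_y, sub_add_cancel, MonoidHom.id_apply]

/-- The shift automorphism of `M`. -/
def cAut (hk : 0 < (k:ℤ)) : M n ≃* M n :=
  MonoidHom.toMulEquiv (cHom k n u') (dHom k n u') (dc_comp k n u' hk) (cd_comp k n u' hk)

lemma cAut_apply (hk : 0 < (k:ℤ)) (x : M n) : cAut k n u' hk x = cHom k n u' x := rfl

lemma cAut_inv_apply (hk : 0 < (k:ℤ)) (x : M n) :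
    ((cAut k n u' hk)⁻¹ : M n ≃* M n) x = dHom k n u' x := rfl

lemma cpow_beta (hk : 0 < (k:ℤ)) (z : ℤ) :
    ∀ i : ℤ, ((cAut k n u' hk) ^ z) (beta k n u' i) = beta k n u' (i + z) := by
  induction z using Int.induction_on with
  | zero => intro i; simp
  | succ j ih =>
    intro i
    rw [zpow_add_one, MulAut.mul_apply, cAut_apply, c_beta k n u' hk, ih,
      show i + 1 + (j:ℤ) = i + ((j:ℤ) + 1) by ring]
  | pred j ih =>
    intro i
    rw [zpow_sub_one, MulAut.mul_apply, cAut_inv_apply, d_beta k n u' hk, ih,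
      show i - 1 + (-(j:ℤ)) = i + (-(j:ℤ) - 1) by ring]

lemma cpow_y (hk : 0 < (k:ℤ)) (z : ℤ) :
    ∀ (m : Fin n) (i : ℤ),
      ((cAut k n u' hk) ^ z) (FreeGroup.of (Sum.inr (m, i))) = FreeGroup.of (Sum.inr (m, i + z)) := by
  induction z using Int.induction_on with
  | zero => intro m i; simp
  | succ j ih =>
    intro m i
    rw [zpow_add_one, MulAut.mul_apply, cAut_apply, c_y, ih,
      show i + 1 + (j:ℤ) = i + ((j:ℤ) + 1) by ring]
  | pred j ih =>
    intro m i
    rw [zpow_sub_one, MulAut.mul_apply, cAut_inv_apply, d_y, ih,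
      show i - 1 + (-(j:ℤ)) = i + (-(j:ℤ) - 1) by ring]

/-- The action of `ℤ` on `M` by iterated shift. -/
def φAut (hk : 0 < (k:ℤ)) : Multiplicative ℤ →* MulAut (M n) :=
  zpowersHom (MulAut (M n)) (cAut k n u' hk)

/-- The semidirect product `M ⋊ ℤ`. -/
abbrev Gsd (hk : 0 < (k:ℤ)) : Type :=
  SemidirectProduct (M n) (Multiplicative ℤ) (φAut k n u' hk)

lemma conjG (hk : 0 < (k:ℤ)) (z : ℤ) (v : M n) :
    (SemidirectProduct.inr (Multiplicative.ofAdd (-1 : ℤ)) : Gsd k n u' hk) ^ (-z) *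
      SemidirectProduct.inl v *
      (SemidirectProduct.inr (Multiplicative.ofAdd (-1 : ℤ)) : Gsd k n u' hk) ^ z =
    SemidirectProduct.inl (((cAut k n u' hk) ^ z) v) := by
  have h1 : (SemidirectProduct.inr (Multiplicative.ofAdd (-1:ℤ)) : Gsd k n u' hk) ^ (-z)
      = SemidirectProduct.inr ((Multiplicative.ofAdd (-1:ℤ)) ^ (-z)) := by rw [map_zpow]
  have h2 : (SemidirectProduct.inr (Multiplicative.ofAdd (-1:ℤ)) : Gsd k n u' hk) ^ z
      = SemidirectProduct.inr (((Multiplicative.ofAdd (-1:ℤ)) ^ (-z))⁻¹) := by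
    rw [zpow_neg, inv_inv, map_zpow]
  rw [h1, h2, ← SemidirectProduct.inl_aut]
  congr 1
  show ((cAut k n u' hk) ^ (Multiplicative.toAdd ((Multiplicative.ofAdd (-1:ℤ)) ^ (-z)))) v = _
  rw [toAdd_zpow, toAdd_ofAdd, smul_eq_mul]
  norm_num

/-- The images of the generators of `H` in `M ⋊ ℤ`. -/
def fθ (hk : 0 < (k:ℤ)) : Bool ⊕ Fin n → Gsd k n u' hk := fun x =>
  match x with
  | Sum.inl true => SemidirectProduct.inr (Multiplicative.ofAdd (-1 : ℤ))
  | Sum.inl false => SemidirectProduct.inl (beta k n u' 0)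
  | Sum.inr m => SemidirectProduct.inl (FreeGroup.of (Sum.inr (m, 0)))

lemma lift_map {α β G : Type*} [Group G] (f : β → G) (g : α → β) (x : FreeGroup α) :
    FreeGroup.lift f (FreeGroup.map g x) = FreeGroup.lift (fun a => f (g a)) x := by
  have : (FreeGroup.lift f).comp (FreeGroup.map g) = FreeGroup.lift (fun a => f (g a)) := by
    ext a
    simp
  exact DFunLike.congr_fun this x

lemma main_rel (hk : 0 < (k:ℤ)) :
    ∀ r ∈ relOfH k n u', FreeGroup.lift (fθ k n u' hk) r = 1 := by
  intro r hr
  simp only [relOfH, Set.mem_singleton_iff] at hr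
  subst hr
  simp only [map_mul, map_pow, map_inv, FreeGroup.lift_apply_of, lift_map]
  have hu : FreeGroup.lift (fun a => fθ k n u' hk (Sum.inr a)) u'
      = SemidirectProduct.inl (U n u' 0) := by
    rw [U, hom_comp_lift]
    rfl
  rw [hu]
  show (SemidirectProduct.inr (Multiplicative.ofAdd (-1:ℤ)) : Gsd k n u' hk)⁻¹ ^ k *
    (SemidirectProduct.inl (beta k n u' 0))⁻¹ *
    (SemidirectProduct.inr (Multiplicative.ofAdd (-1:ℤ)) : Gsd k n u' hk) ^ k *
    SemidirectProduct.inl (beta k n u' 0) * SemidirectProduct.inl (U n u' 0) = 1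
  have hconj := conjG k n u' hk (k:ℤ) (beta k n u' 0)
  rw [cpow_beta k n u' hk] at hconj
  have hA1 : ((SemidirectProduct.inr (Multiplicative.ofAdd (-1:ℤ)) : Gsd k n u' hk))⁻¹ ^ k
      = (SemidirectProduct.inr (Multiplicative.ofAdd (-1:ℤ)) : Gsd k n u' hk) ^ (-(k:ℤ)) := by
    rw [inv_pow, ← zpow_natCast, ← zpow_neg]
  have hA2 : ((SemidirectProduct.inr (Multiplicative.ofAdd (-1:ℤ)) : Gsd k n u' hk)) ^ k
      = (SemidirectProduct.inr (Multiplicative.ofAdd (-1:ℤ)) : Gsd k n u' hk) ^ ((k:ℤ)) :=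
    (zpow_natCast _ _).symm
  rw [hA1, hA2]
  have hinv : (SemidirectProduct.inr (Multiplicative.ofAdd (-1:ℤ)) : Gsd k n u' hk) ^ (-(k:ℤ)) *
      (SemidirectProduct.inl (beta k n u' 0))⁻¹ *
      (SemidirectProduct.inr (Multiplicative.ofAdd (-1:ℤ)) : Gsd k n u' hk) ^ ((k:ℤ))
      = (SemidirectProduct.inl (beta k n u' (0 + (k:ℤ))))⁻¹ := by
    rw [← hconj]
    group
  rw [hinv, beta_add_k k n u' hk 0, ← map_inv, ← map_mul, ← map_mul,
    show (beta k n u' 0 * U n u' 0)⁻¹ * beta k n u' 0 * U n u' 0 = 1 by group, map_one]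

/-- The homomorphism `H → M ⋊ ℤ`. -/
def θ (hk : 0 < (k:ℤ)) : Hgp k n u' →* Gsd k n u' hk :=
  PresentedGroup.toGroup (main_rel k n u' hk)

/-! ## Lemmas inside `H` -/

/-- The image of `u` in `H`. -/
def Uel (k n : ℕ) (u' : FreeGroup (Fin n)) : Hgp k n u' := FreeGroup.lift (yg k n u') u'

/-- The element `u_i` as a lift. -/
def uu (i : ℤ) : Hgp k n u' := FreeGroup.lift (fun m => yi k n u' m i) u'

lemma rel_one :
    ((xg k n u')⁻¹) ^ k * (bg k n u')⁻¹ * (xg k n u') ^ k * bg k n u' * Uel k n u' = 1 := by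
  have h0 : PresentedGroup.mk (relOfH k n u')
      (((FreeGroup.of (Sum.inl true))⁻¹) ^ k * (FreeGroup.of (Sum.inl false))⁻¹ *
        (FreeGroup.of (Sum.inl true)) ^ k * FreeGroup.of (Sum.inl false) *
        FreeGroup.map Sum.inr u') = 1 := by
    apply (QuotientGroup.eq_one_iff _).mpr
    exact Subgroup.subset_normalClosure (by simp [relOfH])
  have hmap : PresentedGroup.mk (relOfH k n u') (FreeGroup.map Sum.inr u') = Uel k n u' := by
    have h : (PresentedGroup.mk (relOfH k n u')).comp (FreeGroup.map Sum.inr)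
        = FreeGroup.lift (yg k n u') := by
      ext m
      rw [MonoidHom.comp_apply, FreeGroup.map.of, FreeGroup.lift_apply_of]
      rfl
    exact DFunLike.congr_fun h u'
  simp only [map_mul, map_pow, map_inv] at h0
  rw [hmap] at h0
  exact h0

lemma cj_mul (i : ℤ) (g h : Hgp k n u') :
    cj k n u' i (g * h) = cj k n u' i g * cj k n u' i h := by
  simp only [cj]
  group

lemma cj_conj (i : ℤ) (g : Hgp k n u') :
    cj k n u' i g = MulAut.conj ((xg k n u') ^ (-i)) g := by
  rw [MulAut.conj_apply, cj, zpow_neg, inv_inv]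

lemma conj_b : ((xg k n u') ^ k)⁻¹ * bg k n u' * (xg k n u') ^ k = bg k n u' * Uel k n u' := by
  have h := rel_one k n u'
  rw [inv_pow] at h
  have h2 : Uel k n u' = (((xg k n u') ^ k)⁻¹ * (bg k n u')⁻¹ * (xg k n u') ^ k * bg k n u')⁻¹ :=
    eq_inv_of_mul_eq_one_right h
  rw [h2]
  group

lemma bi_step (j : ℤ) :
    bi k n u' (j + (k:ℤ)) = bi k n u' j * uu k n u' j := by
  have hbk : bi k n u' (k:ℤ) = bg k n u' * Uel k n u' := by
    rw [bi, cj, zpow_neg, zpow_natCast]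
    exact conj_b k n u'
  have hcjadd : bi k n u' (j + (k:ℤ)) = cj k n u' j (bi k n u' (k:ℤ)) := by
    simp only [bi, cj]
    group
  rw [hcjadd, hbk, cj_mul]
  congr 1
  rw [cj_conj]
  have hcomp := hom_comp_lift ((MulAut.conj ((xg k n u') ^ (-j))) : Hgp k n u' ≃* Hgp k n u').toMonoidHom
    (yg k n u') u'
  show ((MulAut.conj ((xg k n u') ^ (-j))) : Hgp k n u' ≃* Hgp k n u').toMonoidHom (Uel k n u') = _
  rw [Uel, hcomp, uu]
  refine DFunLike.congr_fun (FreeGroup.ext_hom _ _ fun m => ?_) u'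
  rw [FreeGroup.lift_apply_of, FreeGroup.lift_apply_of]
  show MulAut.conj ((xg k n u') ^ (-j)) (yg k n u' m) = yi k n u' m j
  rw [← cj_conj]
  rfl

/-! ## The maps `ψ`, `χ`, `ρ` -/

/-- Generators of the claimed basis inside `H`. -/
def fψ (l : ℤ) : Unit ⊕ Fin n × ℤ → Hgp k n u' :=
  Sum.elim (fun _ => bi k n u' l) (fun p => yi k n u' p.1 (l + p.2 * (k:ℤ)))

def ψH (l : ℤ) : FreeGroup (Unit ⊕ Fin n × ℤ) →* Hgp k n u' := FreeGroup.lift (fψ k n u' l)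

/-- Generators of the claimed basis inside `M`. -/
def fχ (l : ℤ) : Unit ⊕ Fin n × ℤ → M n :=
  Sum.elim (fun _ => beta k n u' l) (fun p => FreeGroup.of (Sum.inr (p.1, l + p.2 * (k:ℤ))))

def χH (l : ℤ) : FreeGroup (Unit ⊕ Fin n × ℤ) →* M n := FreeGroup.lift (fχ k n u' l)

/-- The retraction on letters. -/
def g1 (l : ℤ) : ℤ ⊕ Fin n × ℤ → FreeGroup (Unit ⊕ Fin n × ℤ) :=
  Sum.elim (fun _ => 1)
    (fun p => if p.2 % (k:ℤ) = l % (k:ℤ)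
      then FreeGroup.of (Sum.inr (p.1, (p.2 - l) / (k:ℤ))) else 1)

def ρ1 (l : ℤ) : M n →* FreeGroup (Unit ⊕ Fin n × ℤ) := FreeGroup.lift (g1 k n l)

def g2 (l : ℤ) : ℤ ⊕ Fin n × ℤ → FreeGroup (Unit ⊕ Fin n × ℤ) := fun x =>
  match x with
  | Sum.inl r => if r = l % (k:ℤ)
      then FreeGroup.of (Sum.inl ()) * (ρ1 k n l (w k n u' (l % (k:ℤ)) (l / (k:ℤ))))⁻¹ else 1
  | Sum.inr p => g1 k n l (Sum.inr p)

def ρH (l : ℤ) : M n →* FreeGroup (Unit ⊕ Fin n × ℤ) := FreeGroup.lift (g2 k n u' l)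

lemma ρ_U (l j : ℤ) : ρH k n u' l (U n u' j) = ρ1 k n l (U n u' j) := by
  rw [U, ρH, ρ1, hom_comp_lift, hom_comp_lift]
  rfl

lemma ρ_w (l r s : ℤ) : ρH k n u' l (w k n u' r s) = ρ1 k n l (w k n u' r s) := by
  have hpos : ∀ s : ℕ, ρH k n u' l (wpos k n u' r s) = ρ1 k n l (wpos k n u' r s) := by
    intro s
    induction s with
    | zero => simp [wpos]
    | succ s ih => rw [wpos, map_mul, map_mul, ih, ρ_U]
  have hneg : ∀ s : ℕ, ρH k n u' l (wneg k n u' r s) = ρ1 k n l (wneg k n u' r s) := by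
    intro s
    induction s with
    | zero => simp [wneg]
    | succ s ih => rw [wneg, map_mul, map_mul, map_inv, map_inv, ih, ρ_U]
  cases s with
  | ofNat s => exact hpos s
  | negSucc s => exact hneg (s+1)

lemma ρ_beta (l : ℤ) : ρH k n u' l (beta k n u' l) = FreeGroup.of (Sum.inl ()) := by
  rw [beta, map_mul, ρ_w]
  have h : ρH k n u' l (FreeGroup.of (Sum.inl (l % (k:ℤ))))
      = FreeGroup.of (Sum.inl ()) * (ρ1 k n l (w k n u' (l % (k:ℤ)) (l / (k:ℤ))))⁻¹ := by
    rw [ρH, FreeGroup.lift_apply_of]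
    simp [g2]
  rw [h, mul_assoc, inv_mul_cancel, mul_one]

lemma ρχ (hk : 0 < (k:ℤ)) (l : ℤ) :
    (ρH k n u' l).comp (χH k n u' l) = MonoidHom.id _ := by
  ext x
  rcases x with u | ⟨m, t⟩
  · rw [MonoidHom.comp_apply, MonoidHom.id_apply, χH, FreeGroup.lift_apply_of]
    show ρH k n u' l (beta k n u' l) = _
    rw [ρ_beta]
  · rw [MonoidHom.comp_apply, MonoidHom.id_apply, χH, FreeGroup.lift_apply_of]
    show ρH k n u' l (FreeGroup.of (Sum.inr (m, l + t * (k:ℤ)))) = _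
    rw [ρH, FreeGroup.lift_apply_of]
    show g1 k n l (Sum.inr (m, l + t * (k:ℤ))) = _
    rw [g1]
    simp only [Sum.elim_inr]
    rw [if_pos (by rw [show l + t * (k:ℤ) = l + (k:ℤ) * t by ring, Int.add_mul_emod_self_left]),
      show l + t * (k:ℤ) - l = t * (k:ℤ) by ring, Int.mul_ediv_cancel _ hk.ne']

/-! ## Relating `θ`, `ψ`, `χ` -/

lemma theta_x (hk : 0 < (k:ℤ)) :
    θ k n u' hk (xg k n u') = SemidirectProduct.inr (Multiplicative.ofAdd (-1:ℤ)) :=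
  PresentedGroup.toGroup.of (main_rel k n u' hk)

lemma theta_b (hk : 0 < (k:ℤ)) :
    θ k n u' hk (bg k n u') = SemidirectProduct.inl (beta k n u' 0) :=
  PresentedGroup.toGroup.of (main_rel k n u' hk)

lemma theta_y (hk : 0 < (k:ℤ)) (m : Fin n) :
    θ k n u' hk (yg k n u' m) = SemidirectProduct.inl (FreeGroup.of (Sum.inr (m, 0))) :=
  PresentedGroup.toGroup.of (main_rel k n u' hk)

lemma theta_cj (hk : 0 < (k:ℤ)) (i : ℤ) (g : Hgp k n u') (v : M n)
    (hg : θ k n u' hk g = SemidirectProduct.inl v) :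
    θ k n u' hk (cj k n u' i g) = SemidirectProduct.inl (((cAut k n u' hk) ^ i) v) := by
  rw [cj, map_mul, map_mul, map_zpow, map_zpow, theta_x, hg, conjG]

lemma theta_bi (hk : 0 < (k:ℤ)) (i : ℤ) :
    θ k n u' hk (bi k n u' i) = SemidirectProduct.inl (beta k n u' i) := by
  rw [bi, theta_cj k n u' hk i _ _ (theta_b k n u' hk), cpow_beta k n u' hk, zero_add]

lemma theta_yi (hk : 0 < (k:ℤ)) (m : Fin n) (i : ℤ) :
    θ k n u' hk (yi k n u' m i) = SemidirectProduct.inl (FreeGroup.of (Sum.inr (m, i))) := by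
  rw [yi, theta_cj k n u' hk i _ _ (theta_y k n u' hk m), cpow_y k n u' hk, zero_add]

lemma theta_psi (hk : 0 < (k:ℤ)) (l : ℤ) :
    (θ k n u' hk).comp (ψH k n u' l)
      = (SemidirectProduct.inl : M n →* Gsd k n u' hk).comp (χH k n u' l) := by
  refine FreeGroup.ext_hom _ _ fun x => ?_
  rcases x with u | ⟨m, t⟩
  · rw [MonoidHom.comp_apply, MonoidHom.comp_apply, ψH, χH, FreeGroup.lift_apply_of,
      FreeGroup.lift_apply_of]
    exact theta_bi k n u' hk l
  · rw [MonoidHom.comp_apply, MonoidHom.comp_apply, ψH, χH, FreeGroup.lift_apply_of,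
      FreeGroup.lift_apply_of]
    exact theta_yi k n u' hk m (l + t * (k:ℤ))

lemma psi_injective (hk : 0 < (k:ℤ)) (l : ℤ) : Function.Injective (ψH k n u' l) := by
  rw [injective_iff_map_eq_one]
  intro a ha
  have h1 : SemidirectProduct.inl (χH k n u' l a) = (1 : Gsd k n u' hk) := by
    rw [← MonoidHom.comp_apply, ← theta_psi, MonoidHom.comp_apply, ha, map_one]
  have h2 : χH k n u' l a = 1 := SemidirectProduct.inl_injective (by rw [h1, map_one])
  have h3 := DFunLike.congr_fun (ρχ k n u' hk l) a
  rw [MonoidHom.comp_apply, MonoidHom.id_apply, h2, map_one] at h3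
  exact h3.symm

/-! ## The range of `ψ` -/

lemma uu_mem (l t : ℤ) : uu k n u' (l + t * (k:ℤ)) ∈ (ψH k n u' l).range := by
  refine ⟨FreeGroup.lift (fun m => FreeGroup.of (Sum.inr (m, t))) u', ?_⟩
  rw [ψH, hom_comp_lift, uu]
  refine DFunLike.congr_fun (FreeGroup.ext_hom _ _ fun m => ?_) u'
  rw [FreeGroup.lift_apply_of, FreeGroup.lift_apply_of, FreeGroup.lift_apply_of]
  rfl

lemma bi_mem (l : ℤ) : ∀ t : ℤ, bi k n u' (l + t * (k:ℤ)) ∈ (ψH k n u' l).range := by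
  intro t
  induction t using Int.induction_on with
  | zero =>
    refine ⟨FreeGroup.of (Sum.inl ()), ?_⟩
    rw [show l + (0:ℤ) * (k:ℤ) = l by ring, ψH, FreeGroup.lift_apply_of]
    rfl
  | succ t ih =>
    rw [show l + ((t:ℤ)+1) * (k:ℤ) = l + (t:ℤ) * (k:ℤ) + (k:ℤ) by ring, bi_step]
    exact mul_mem ih (uu_mem k n u' l t)
  | pred t ih =>
    have hstep := bi_step k n u' (l + (-(t:ℤ)-1) * (k:ℤ))
    rw [show l + (-(t:ℤ)-1) * (k:ℤ) + (k:ℤ) = l + (-(t:ℤ)) * (k:ℤ) by ring] at hstep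
    have heq : bi k n u' (l + (-(t:ℤ)-1) * (k:ℤ))
        = bi k n u' (l + (-(t:ℤ)) * (k:ℤ)) * (uu k n u' (l + (-(t:ℤ)-1) * (k:ℤ)))⁻¹ := by
      rw [hstep, mul_assoc, mul_inv_cancel, mul_one]
    rw [heq]
    exact mul_mem ih (inv_mem (uu_mem k n u' l (-(t:ℤ)-1)))

lemma psi_range (l : ℤ) :
    (ψH k n u' l).range = Subgroup.closure
      ({g | ∃ t : ℤ, g = bi k n u' (l + t * k)} ∪
       {g | ∃ m : Fin n, ∃ t : ℤ, g = yi k n u' m (l + t * k)}) := by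
  apply le_antisymm
  · rw [ψH, FreeGroup.range_lift_eq_closure, Subgroup.closure_le]
    rintro x ⟨i, rfl⟩
    apply Subgroup.subset_closure
    rcases i with u | ⟨m, t⟩
    · exact Or.inl ⟨0, by rw [show l + (0:ℤ) * (k:ℤ) = l by ring]; rfl⟩
    · exact Or.inr ⟨m, t, rfl⟩
  · rw [Subgroup.closure_le]
    rintro x (⟨t, rfl⟩ | ⟨m, t, rfl⟩)
    · exact bi_mem k n u' l t
    · exact ⟨FreeGroup.of (Sum.inr (m, t)), by rw [ψH, FreeGroup.lift_apply_of]; rfl⟩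


end NlAux

/-- The group `N_l` (generated inside `H` by the groups `G_{l+tk}`, `t ∈ ℤ`) is free with basis
`B_l = {b_l} ∪ {y_{m,l+tk} : 1 ≤ m ≤ n, t ∈ ℤ}`. -/
theorem Nl_free_with_basis (k n : ℕ) (hk : 1 ≤ k) (hn : 1 ≤ n)
    (u' : FreeGroup (Fin n)) (hu : u' ≠ 1) (l : ℤ) :
    ∃ basis : FreeGroupBasis (Unit ⊕ Fin n × ℤ)
        ↥(Subgroup.closure
          ({g | ∃ t : ℤ, g = bi k n u' (l + t * k)} ∪
           {g | ∃ m : Fin n, ∃ t : ℤ, g = yi k n u' m (l + t * k)})),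
      ((basis (Sum.inl ()) : Hgp k n u') = bi k n u' l) ∧
      (∀ m : Fin n, ∀ t : ℤ,
        (basis (Sum.inr (m, t)) : Hgp k n u') = yi k n u' m (l + t * k)) := by
  have hk0 : (0:ℤ) < (k:ℤ) := by exact_mod_cast hk
  have hrange := NlAux.psi_range k n u' l
  have hinj : Function.Injective (NlAux.ψH k n u' l) := NlAux.psi_injective k n u' hk0 l
  let e1 : FreeGroup (Unit ⊕ Fin n × ℤ) ≃* (NlAux.ψH k n u' l).range :=
    MulEquiv.ofBijective (NlAux.ψH k n u' l).rangeRestrict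
      ⟨MonoidHom.rangeRestrict_injective_iff.mpr hinj, MonoidHom.rangeRestrict_surjective _⟩
  let e := e1.trans (MulEquiv.subgroupCongr hrange)
  have hcoe : ∀ i, (((FreeGroupBasis.ofRepr e.symm) i : _) : Hgp k n u')
      = NlAux.ψH k n u' l (FreeGroup.of i) := by
    intro i
    show ((e.symm.symm (FreeGroup.of i) : _) : Hgp k n u') = _
    rw [MulEquiv.symm_symm]
    show ((MulEquiv.subgroupCongr hrange (e1 (FreeGroup.of i)) : _) : Hgp k n u') = _
    rw [MulEquiv.subgroupCongr_apply]
    show (((NlAux.ψH k n u' l).rangeRestrict (FreeGroup.of i) : _) : Hgp k n u') = _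
    rfl
  refine ⟨FreeGroupBasis.ofRepr e.symm, ?_, ?_⟩
  · rw [hcoe, NlAux.ψH, FreeGroup.lift_apply_of]
    rfl
  · intro m t
    rw [hcoe, NlAux.ψH, FreeGroup.lift_apply_of]
    rfl
end

section
/- Let r ∈ N be a non-trivial element with ω_r − α_r + 1 ≥ 1. Then the reduced word representing r in the free basis B⁺(α_r) = {b_{α_r}, …, b_{α_r+k−1}} ∪ {y_{m,j} : 1 ≤ m ≤ n, j ≥ α_r} of G_{α_r,∞} contains at least one letter y_{m,l} with l ≥ ω_r. -/
section Lemma43Aux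

private theorem lemma43_liftMem {α G : Type*} [Group G] (f : α → G) (S : Subgroup G)
    (h : ∀ i, f i ∈ S) (z : FreeGroup α) : FreeGroup.lift f z ∈ S := by
  induction z using FreeGroup.induction_on with
  | C1 => simp [Subgroup.one_mem]
  | of x => exact (by simpa using h x : FreeGroup.lift f (FreeGroup.of x) ∈ S)
  | inv_of x _ =>
      exact (by simpa using S.inv_mem (h x) : FreeGroup.lift f (FreeGroup.of x)⁻¹ ∈ S)
  | mul x y hx hy => simpa using S.mul_mem hx hy

private theorem lemma43_wordMem {α G : Type*} [Group G] [DecidableEq α]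
    (f : FreeGroup α →* G) (S : Subgroup G) (z : FreeGroup α)
    (h : ∀ p ∈ z.toWord, f (FreeGroup.of p.1) ∈ S) : f z ∈ S := by
  have hf : f z = FreeGroup.lift (fun i => f (FreeGroup.of i)) z :=
    DFunLike.congr_fun (FreeGroup.ext_hom _ _ (by simp)) z
  rw [hf, ← FreeGroup.mk_toWord (x := z), FreeGroup.lift_mk]
  apply S.list_prod_mem
  intro g hg
  simp only [List.mem_map] at hg
  obtain ⟨p, hp, rfl⟩ := hg
  have hmem : f (FreeGroup.of p.1) ∈ S := h p hp
  cases hs : p.2 <;> simp [hmem, S.inv_mem hmem]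

private theorem lemma43_rel (k n : ℕ) (u' : FreeGroup (Fin n)) :
    (xg k n u')⁻¹ ^ k * (bg k n u')⁻¹ * (xg k n u') ^ k * (bg k n u') *
      FreeGroup.lift (yg k n u') u' = 1 := by
  have h : ((QuotientGroup.mk ((FreeGroup.of (Sum.inl true))⁻¹ ^ k *
      (FreeGroup.of (Sum.inl false))⁻¹ * (FreeGroup.of (Sum.inl true)) ^ k *
      FreeGroup.of (Sum.inl false) * FreeGroup.map Sum.inr u')) : Hgp k n u') = 1 := by
    rw [QuotientGroup.eq_one_iff]
    exact Subgroup.subset_normalClosure rfl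
  have h2 : ((QuotientGroup.mk' (Subgroup.normalClosure (relOfH k n u'))).comp
      (FreeGroup.map Sum.inr : FreeGroup (Fin n) →* FreeGroup (Bool ⊕ Fin n))) =
      FreeGroup.lift (yg k n u') := by
    apply FreeGroup.ext_hom
    intro m
    simp only [MonoidHom.comp_apply, FreeGroup.map.of, FreeGroup.lift_apply_of]
    rfl
  refine Eq.trans ?_ h
  calc (xg k n u')⁻¹ ^ k * (bg k n u')⁻¹ * (xg k n u') ^ k * (bg k n u') *
      FreeGroup.lift (yg k n u') u'
      = (QuotientGroup.mk' (Subgroup.normalClosure (relOfH k n u')))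
        ((FreeGroup.of (Sum.inl true))⁻¹ ^ k * (FreeGroup.of (Sum.inl false))⁻¹ *
         (FreeGroup.of (Sum.inl true)) ^ k * FreeGroup.of (Sum.inl false) *
         FreeGroup.map Sum.inr u') := by
        rw [map_mul, map_mul, map_mul, map_mul, map_pow, map_pow, map_inv, map_inv,
          ← MonoidHom.comp_apply, h2]
        rfl

private theorem lemma43_conj (k n : ℕ) (u' : FreeGroup (Fin n)) :
    (xg k n u') ^ (-(k : ℤ)) * bg k n u' * (xg k n u') ^ (k : ℤ) =
      bg k n u' * FreeGroup.lift (yg k n u') u' := by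
  set x := xg k n u'
  set b := bg k n u'
  set U := FreeGroup.lift (yg k n u') u'
  have hrel := lemma43_rel k n u'
  have h3 : (x ^ k)⁻¹ * b⁻¹ * x ^ k = (b * U)⁻¹ := by
    apply eq_inv_of_mul_eq_one_left
    calc (x ^ k)⁻¹ * b⁻¹ * x ^ k * (b * U)
        = x⁻¹ ^ k * b⁻¹ * x ^ k * b * U := by group
      _ = 1 := hrel
  have h4 : (x ^ k)⁻¹ * b * x ^ k = b * U := by
    have := congrArg (·⁻¹) h3
    simp only [inv_inv] at this
    calc (x ^ k)⁻¹ * b * x ^ k = ((x ^ k)⁻¹ * b⁻¹ * x ^ k)⁻¹ := by group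
      _ = b * U := by rw [h3]; group
  calc x ^ (-(k : ℤ)) * b * x ^ (k : ℤ) = (x ^ k)⁻¹ * b * x ^ k := by
        rw [zpow_neg, zpow_natCast]
    _ = b * U := h4

private theorem lemma43_bi_step (k n : ℕ) (u' : FreeGroup (Fin n)) (j : ℤ) :
    bi k n u' (j + (k : ℤ)) = bi k n u' j * ui k n u' j := by
  unfold bi ui cj
  set x := xg k n u'
  set b := bg k n u'
  set U := FreeGroup.lift (yg k n u') u'
  have h1 : x ^ (-(j + (k : ℤ))) * b * x ^ (j + (k : ℤ)) =
      x ^ (-j) * (x ^ (-(k : ℤ)) * b * x ^ (k : ℤ)) * x ^ j := by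
    rw [neg_add, zpow_add, zpow_add]
    group
  rw [h1, lemma43_conj k n u']
  group
  rfl

private theorem lemma43_bi_mem (k n : ℕ) (u' : FreeGroup (Fin n)) (j i : ℤ) (h : j ≤ i) :
    bi k n u' j ∈ Gle k n u' i :=
  Subgroup.subset_closure (Or.inl ⟨j, h, rfl⟩)

private theorem lemma43_yi_mem (k n : ℕ) (u' : FreeGroup (Fin n)) (m : Fin n) (j i : ℤ)
    (h : j ≤ i) : yi k n u' m j ∈ Gle k n u' i :=
  Subgroup.subset_closure (Or.inr ⟨m, j, h, rfl⟩)

private theorem lemma43_ui_mem (k n : ℕ) (u' : FreeGroup (Fin n)) (j i : ℤ) (h : j ≤ i) :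
    ui k n u' j ∈ Gle k n u' i := by
  have hui : ui k n u' j = FreeGroup.lift (fun m => yi k n u' m j) u' := by
    set x := xg k n u'
    set c : Hgp k n u' →* Hgp k n u' := (MulAut.conj (x ^ (-j))).toMonoidHom
    have hc : ∀ g, c g = x ^ (-j) * g * x ^ j := by
      intro g
      show x ^ (-j) * g * (x ^ (-j))⁻¹ = x ^ (-j) * g * x ^ j
      rw [← zpow_neg, neg_neg]
    have hcomp : c.comp (FreeGroup.lift (yg k n u')) =
        FreeGroup.lift (fun m => yi k n u' m j) := by
      apply FreeGroup.ext_hom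
      intro m
      simp only [MonoidHom.comp_apply, FreeGroup.lift_apply_of]
      rw [hc]
      rfl
    calc ui k n u' j = c (FreeGroup.lift (yg k n u') u') := (hc _).symm
      _ = (c.comp (FreeGroup.lift (yg k n u'))) u' := rfl
      _ = FreeGroup.lift (fun m => yi k n u' m j) u' := by rw [hcomp]
  rw [hui]
  exact lemma43_liftMem _ _ (fun m => lemma43_yi_mem k n u' m j i h) u'

private theorem lemma43_bi_mem' (k n : ℕ) (u' : FreeGroup (Fin n)) (j i : ℤ)
    (h : j - (k : ℤ) ≤ i) : bi k n u' j ∈ Gle k n u' i := by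
  have hstep := lemma43_bi_step k n u' (j - (k : ℤ))
  rw [sub_add_cancel] at hstep
  rw [hstep]
  exact Subgroup.mul_mem _ (lemma43_bi_mem k n u' _ i h) (lemma43_ui_mem k n u' _ i h)

end Lemma43Aux

/-- Lemma 4.3: if `r ∈ N` is non-trivial with `ω_r − α_r + 1 ≥ 1`, then the reduced word
representing `r` in the basis `B⁺(α_r) = {b_{α_r}, …, b_{α_r+k−1}} ∪ {y_{m,j} : j ≥ α_r}` of
`G_{α_r,∞}` (indexed here by `Fin k ⊕ Fin n × ℕ`, with `(m, t)` standing for `y_{m,α_r+t}`)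
contains a letter `y_{m,l}` with `l ≥ ω_r`. -/
theorem letter_with_large_index (k n : ℕ) (hk : 1 ≤ k) (hn : 1 ≤ n)
    (u' : FreeGroup (Fin n)) (hu : u' ≠ 1)
    (φ : Hgp k n u' →* Multiplicative ℤ) (hφ : IsExpSum k n u' φ)
    (r : Hgp k n u') (hr : r ∈ φ.ker) (hr1 : r ≠ 1)
    (a w : ℤ) (ha : IsAlphaLimit k n u' r a) (hw : IsOmegaLimit k n u' r w)
    (hlen : 1 ≤ w - a + 1)
    (basis : FreeGroupBasis (Fin k ⊕ Fin n × ℕ) ↥(Gge k n u' a))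
    (hb : ∀ t : Fin k, (basis (Sum.inl t) : Hgp k n u') = bi k n u' (a + (t : ℕ)))
    (hy : ∀ m : Fin n, ∀ t : ℕ,
      (basis (Sum.inr (m, t)) : Hgp k n u') = yi k n u' m (a + t)) :
    ∃ (m : Fin n) (t : ℕ) (s : Bool),
      (Sum.inr (m, t), s) ∈ (basis.repr ⟨r, ha.1⟩).toWord ∧ w ≤ a + t := by
  by_contra hcon
  push_neg at hcon
  have haw : a ≤ w := by linarith
  set S : Subgroup ↥(Gge k n u' a) :=
    (Gle k n u' (w - 1)).comap (Gge k n u' a).subtype with hS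
  have hmem : (basis.repr.symm.toMonoidHom) (basis.repr ⟨r, ha.1⟩) ∈ S := by
    apply lemma43_wordMem
    rintro ⟨i, s⟩ hp
    have hofi : (basis.repr.symm.toMonoidHom) (FreeGroup.of i) = basis i := rfl
    rw [hofi]
    show (basis i : Hgp k n u') ∈ Gle k n u' (w - 1)
    rcases i with t | ⟨m, t⟩
    · rw [hb t]
      apply lemma43_bi_mem'
      have ht : (t : ℕ) < k := t.isLt
      omega
    · rw [hy m t]
      have := hcon m t s hp
      apply lemma43_yi_mem
      omega
  rw [MulEquiv.coe_toMonoidHom, MulEquiv.symm_apply_apply] at hmem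
  have hrle : r ∈ Gle k n u' (w - 1) := hmem
  have := hw.2 (w - 1) hrle
  omega
end

section
/- Let r ∈ N be a non-trivial element with ω_r − α_r + 1 < 1 (i.e., ω_r < α_r). Then the reduced word representing r in the free basis B⁺(α_r) of G_{α_r,∞} contains only letters b_i and no letters y_{m,j}. -/
namespace OnlyB

variable {k n : ℕ} (hk : 0 < k) (u' : FreeGroup (Fin n)) (a : ℤ)

abbrev FF (k n : ℕ) : Type := FreeGroup (Fin k ⊕ Fin n × ℤ)

/-- The element `u_i` inside the model. -/
def U (i : ℤ) : FF k n := FreeGroup.lift (fun m => FreeGroup.of (Sum.inr (m, i))) u'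

lemma hom_lift {G : Type*} [Group G] (g : FF k n →* G) (f : Fin n → FF k n) :
    g (FreeGroup.lift f u') = FreeGroup.lift (fun m => g (f m)) u' := by
  have h : g.comp (FreeGroup.lift f) = FreeGroup.lift (fun m => g (f m)) :=
    FreeGroup.ext_hom _ _ (by simp)
  exact DFunLike.congr_fun h u'

lemma hom_U {G : Type*} [Group G] (g : FF k n →* G) (i : ℤ) :
    g (U u' i) = FreeGroup.lift (fun m => g (FreeGroup.of (Sum.inr (m, i)))) u' :=
  hom_lift u' g _

lemma lift_mem {G : Type*} [Group G] (S : Subgroup G) (g : Fin n → G)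
    (hg : ∀ m, g m ∈ S) : FreeGroup.lift g u' ∈ S := by
  induction u' using FreeGroup.induction_on with
  | C1 => exact S.one_mem
  | of x => rw [FreeGroup.lift_apply_of]; exact hg x
  | inv_of x hx => rw [map_inv]; exact S.inv_mem hx
  | mul x y hx hy => rw [map_mul]; exact S.mul_mem hx hy

/-- The distinguished generator `b_a`. -/
def E : FF k n := FreeGroup.of (Sum.inl ⟨0, hk⟩)

/-- Up-shift on generators. -/
def fup : (Fin k ⊕ Fin n × ℤ) → FF k n :=
  Sum.elim
    (fun t => if h : (t : ℕ) + 1 < k then FreeGroup.of (Sum.inl ⟨(t : ℕ) + 1, h⟩)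
      else E hk * U u' a)
    (fun p => FreeGroup.of (Sum.inr (p.1, p.2 + 1)))

/-- Down-shift on generators. -/
def fdn : (Fin k ⊕ Fin n × ℤ) → FF k n :=
  Sum.elim
    (fun t => if 0 < (t : ℕ) then
        FreeGroup.of (Sum.inl ⟨(t : ℕ) - 1, lt_of_le_of_lt (Nat.sub_le _ _) t.isLt⟩)
      else FreeGroup.of (Sum.inl ⟨k - 1, Nat.sub_lt hk one_pos⟩) * (U u' (a - 1))⁻¹)
    (fun p => FreeGroup.of (Sum.inr (p.1, p.2 - 1)))

def tup : FF k n →* FF k n := FreeGroup.lift (fup hk u' a)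
def tdn : FF k n →* FF k n := FreeGroup.lift (fdn hk u' a)

lemma tup_of (p : Fin k ⊕ Fin n × ℤ) :
    tup hk u' a (FreeGroup.of p) = fup hk u' a p := FreeGroup.lift_apply_of

lemma tdn_of (p : Fin k ⊕ Fin n × ℤ) :
    tdn hk u' a (FreeGroup.of p) = fdn hk u' a p := FreeGroup.lift_apply_of

lemma tup_U (i : ℤ) : tup hk u' a (U u' i) = U u' (i + 1) := by
  rw [hom_U]
  have h : (fun m => tup hk u' a (FreeGroup.of (Sum.inr (m, i)))) =
      (fun m : Fin n => FreeGroup.of (Sum.inr (m, i + 1))) := by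
    funext m; rw [tup_of]; rfl
  rw [h]; rfl

lemma tdn_U (i : ℤ) : tdn hk u' a (U u' i) = U u' (i - 1) := by
  rw [hom_U]
  have h : (fun m => tdn hk u' a (FreeGroup.of (Sum.inr (m, i)))) =
      (fun m : Fin n => FreeGroup.of (Sum.inr (m, i - 1))) := by
    funext m; rw [tdn_of]; rfl
  rw [h]; rfl

lemma tdn_comp_tup : (tdn hk u' a).comp (tup hk u' a) = MonoidHom.id _ := by
  apply FreeGroup.ext_hom
  rintro (t | ⟨m, i⟩)
  · simp only [MonoidHom.comp_apply, MonoidHom.id_apply, tup_of, fup, Sum.elim_inl]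
    split_ifs with h
    · rw [tdn_of, fdn, Sum.elim_inl, if_pos (Nat.succ_pos _)]
      exact congrArg FreeGroup.of (congrArg Sum.inl (Fin.ext (by simp)))
    · have ht : (t : ℕ) = k - 1 := by have := t.isLt; omega
      rw [map_mul, tdn_U, E, tdn_of, fdn, Sum.elim_inl]
      simp only [Fin.val_mk, if_neg (lt_irrefl 0)]
      rw [mul_assoc, inv_mul_cancel, mul_one]
      exact congrArg FreeGroup.of (congrArg Sum.inl (Fin.ext ht.symm))
  · simp only [MonoidHom.comp_apply, MonoidHom.id_apply, tup_of, tdn_of, fup, fdn, Sum.elim_inr]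
    norm_num

lemma tup_comp_tdn : (tup hk u' a).comp (tdn hk u' a) = MonoidHom.id _ := by
  apply FreeGroup.ext_hom
  rintro (t | ⟨m, i⟩)
  · simp only [MonoidHom.comp_apply, MonoidHom.id_apply, tdn_of, fdn, Sum.elim_inl]
    split_ifs with h
    · rw [tup_of, fup, Sum.elim_inl]
      have hlt : (t : ℕ) - 1 + 1 < k := by have := t.isLt; omega
      rw [dif_pos hlt]
      exact congrArg FreeGroup.of (congrArg Sum.inl (Fin.ext (by simp; omega)))
    · have ht : (t : ℕ) = 0 := by omega
      rw [map_mul, map_inv, tup_U, tup_of, fup, Sum.elim_inl]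
      rw [dif_neg (by omega : ¬ (k - 1 + 1 < k))]
      rw [sub_add_cancel, mul_assoc, mul_inv_cancel, mul_one, E]
      exact congrArg FreeGroup.of (congrArg Sum.inl (Fin.ext ht.symm))
  · simp only [MonoidHom.comp_apply, MonoidHom.id_apply, tup_of, tdn_of, fup, fdn, Sum.elim_inr]
    norm_num

/-- The shift automorphism `τ` of the model free group. -/
def tau : MulAut (FF k n) :=
  MonoidHom.toMulEquiv (tup hk u' a) (tdn hk u' a) (tdn_comp_tup hk u' a) (tup_comp_tdn hk u' a)

lemma tau_apply (v : FF k n) : tau hk u' a v = tup hk u' a v := rfl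

lemma tau_inv_apply (v : FF k n) : (tau hk u' a)⁻¹ v = tdn hk u' a v := rfl


lemma tau_zpow_apply (c d : ℤ) (v : FF k n) :
    (tau hk u' a ^ c) ((tau hk u' a ^ d) v) = (tau hk u' a ^ (c + d)) v := by
  rw [← MulAut.mul_apply, ← zpow_add]

lemma tau_zpow_inr (d : ℤ) : ∀ (m : Fin n) (i : ℤ),
    (tau hk u' a ^ d) (FreeGroup.of (Sum.inr (m, i))) = FreeGroup.of (Sum.inr (m, i + d)) := by
  induction d using Int.induction_on with
  | zero => simp
  | succ d ih =>
      intro m i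
      rw [zpow_add_one, MulAut.mul_apply, show (tau hk u' a) (FreeGroup.of (Sum.inr (m, i))) =
        FreeGroup.of (Sum.inr (m, i + 1)) from by rw [tau_apply, tup_of]; rfl, ih]
      congr 2
      ring
  | pred d ih =>
      intro m i
      rw [zpow_sub_one, MulAut.mul_apply, show (tau hk u' a)⁻¹ (FreeGroup.of (Sum.inr (m, i))) =
        FreeGroup.of (Sum.inr (m, i - 1)) from by rw [tau_inv_apply, tdn_of]; rfl, ih]
      congr 2
      ring

lemma tau_zpow_U (d i : ℤ) : (tau hk u' a ^ d) (U u' i) = U u' (i + d) := by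
  rw [show ((tau hk u' a ^ d) (U u' i)) =
    ((tau hk u' a ^ d : MulAut (FF k n)) : FF k n ≃* FF k n).toMonoidHom (U u' i) from rfl,
    hom_U]
  have h : (fun m => ((tau hk u' a ^ d : MulAut (FF k n)) : FF k n ≃* FF k n).toMonoidHom
      (FreeGroup.of (Sum.inr (m, i)))) =
      (fun m : Fin n => FreeGroup.of (Sum.inr (m, i + d))) := by
    funext m; exact tau_zpow_inr hk u' a d m i
  rw [h]; rfl

/-- The model of `b_j`. -/
def Bf (j : ℤ) : FF k n := (tau hk u' a ^ (j - a)) (E hk)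

lemma tau_pow_E_nat : ∀ j : ℕ, (h : j < k) →
    (tau hk u' a ^ (j : ℤ)) (E hk) = FreeGroup.of (Sum.inl ⟨j, h⟩) := by
  intro j
  induction j with
  | zero => intro h; simp [E]
  | succ j ih =>
      intro h
      have hj : j < k := by omega
      rw [show (((j + 1 : ℕ)) : ℤ) = 1 + (j : ℤ) by push_cast; ring,
        zpow_one_add, MulAut.mul_apply, ih hj, tau_apply, tup_of]
      simp only [fup, Sum.elim_inl, Fin.val_mk]
      rw [dif_pos h]

lemma tau_pow_E : (tau hk u' a ^ (k : ℤ)) (E hk) = E hk * U u' a := by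
  have hk1 : ((k : ℤ)) = 1 + ((k - 1 : ℕ) : ℤ) := by omega
  rw [hk1, zpow_one_add, MulAut.mul_apply,
    tau_pow_E_nat hk u' a (k - 1) (Nat.sub_lt hk one_pos), tau_apply, tup_of]
  simp only [fup, Sum.elim_inl, Fin.val_mk]
  rw [dif_neg (by omega)]

lemma Bf_step (j : ℤ) : Bf hk u' a (j + k) = Bf hk u' a j * U u' j := by
  rw [Bf, Bf, show j + (k : ℤ) - a = (j - a) + (k : ℤ) by ring, ← tau_zpow_apply,
    tau_pow_E, map_mul, tau_zpow_U]
  congr 2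
  ring

lemma Bf_base (t : Fin k) : Bf hk u' a (a + (t : ℕ)) = FreeGroup.of (Sum.inl t) := by
  rw [Bf, show a + ((t : ℕ) : ℤ) - a = ((t : ℕ) : ℤ) by ring,
    tau_pow_E_nat hk u' a (t : ℕ) t.isLt]


/-- The semidirect product model `M = F ⋊ ℤ`. -/
def phiA : Multiplicative ℤ →* MulAut (FF k n) :=
  zpowersHom (MulAut (FF k n)) (tau hk u' a)⁻¹

lemma phiA_apply (i : ℤ) : phiA hk u' a (Multiplicative.ofAdd i) = (tau hk u' a) ^ (-i) := by
  rw [phiA, zpowersHom_apply]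
  simp [zpow_neg, inv_zpow]

abbrev MM (hk : 0 < k) (u' : FreeGroup (Fin n)) (a : ℤ) : Type :=
  SemidirectProduct (FF k n) (Multiplicative ℤ) (phiA hk u' a)

/-- The images of the generators of `H` in the model. -/
def fgen : Bool ⊕ Fin n → MM hk u' a := fun g =>
  match g with
  | Sum.inl true => SemidirectProduct.inr (Multiplicative.ofAdd (1 : ℤ))
  | Sum.inl false => SemidirectProduct.inl (Bf hk u' a 0)
  | Sum.inr m => SemidirectProduct.inl (FreeGroup.of (Sum.inr (m, (0 : ℤ))))

lemma conj_inl (i : ℤ) (v : FF k n) :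
    (SemidirectProduct.inr (Multiplicative.ofAdd (1 : ℤ)) : MM hk u' a) ^ (-i) *
      SemidirectProduct.inl v *
      (SemidirectProduct.inr (Multiplicative.ofAdd (1 : ℤ))) ^ i =
      SemidirectProduct.inl ((tau hk u' a ^ i) v) := by
  have h1 : (SemidirectProduct.inr (Multiplicative.ofAdd (1 : ℤ)) : MM hk u' a) ^ (-i) =
      SemidirectProduct.inr (Multiplicative.ofAdd (-i)) := by
    rw [← map_zpow]
    congr 1
    simp [← ofAdd_zsmul]
  have h2 : (SemidirectProduct.inr (Multiplicative.ofAdd (1 : ℤ)) : MM hk u' a) ^ i =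
      SemidirectProduct.inr (Multiplicative.ofAdd i) := by
    rw [← map_zpow]
    congr 1
    simp [← ofAdd_zsmul]
  rw [h1, h2]
  have h3 := SemidirectProduct.inl_aut (φ := phiA hk u' a) (Multiplicative.ofAdd (-i)) v
  rw [phiA_apply, neg_neg,
    show (Multiplicative.ofAdd (-i))⁻¹ = Multiplicative.ofAdd i from by simp] at h3
  exact h3.symm

lemma rel_holds : ∀ r ∈ relOfH k n u', FreeGroup.lift (fgen hk u' a) r = 1 := by
  intro r hr
  rw [relOfH, Set.mem_singleton_iff] at hr
  subst hr
  simp only [map_mul, map_pow, map_inv, FreeGroup.lift_apply_of]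
  have hx : FreeGroup.lift (fgen hk u' a) (FreeGroup.map Sum.inr u') =
      SemidirectProduct.inl (U u' 0) := by
    have h : (FreeGroup.lift (fgen hk u' a)).comp (FreeGroup.map Sum.inr) =
        (SemidirectProduct.inl : FF k n →* MM hk u' a).comp
          (FreeGroup.lift (fun m => FreeGroup.of (Sum.inr (m, (0 : ℤ))))) := by
      apply FreeGroup.ext_hom
      intro m
      simp [fgen]
    have := DFunLike.congr_fun h u'
    simpa [U] using this
  rw [hx]
  set X : MM hk u' a := SemidirectProduct.inr (Multiplicative.ofAdd (1 : ℤ)) with hX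
  set B0 : FF k n := Bf hk u' a 0 with hB0
  show (X⁻¹) ^ k * (SemidirectProduct.inl B0)⁻¹ * X ^ k * SemidirectProduct.inl B0 *
      SemidirectProduct.inl (U u' 0) = 1
  have e1 : (X⁻¹) ^ k = X ^ (-(k : ℤ)) := by rw [inv_pow, ← zpow_natCast, ← zpow_neg]
  have e2 : X ^ k = X ^ ((k : ℤ)) := (zpow_natCast _ _).symm
  have e3 : (SemidirectProduct.inl B0 : MM hk u' a)⁻¹ = SemidirectProduct.inl (B0⁻¹) :=
    (map_inv _ _).symm
  rw [e1, e2, e3]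
  have hc := conj_inl hk u' a (k : ℤ) (B0⁻¹)
  rw [show X ^ (-(k:ℤ)) * SemidirectProduct.inl (B0⁻¹) * X ^ ((k:ℤ)) *
      SemidirectProduct.inl B0 * SemidirectProduct.inl (U u' 0) =
      (X ^ (-(k:ℤ)) * SemidirectProduct.inl (B0⁻¹) * X ^ ((k:ℤ))) *
      (SemidirectProduct.inl B0 * SemidirectProduct.inl (U u' 0)) from by group]
  rw [hc, ← map_mul, ← map_mul, map_inv]
  rw [show ((tau hk u' a ^ ((k:ℤ))) B0) = Bf hk u' a ((0:ℤ) + k) from by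
    rw [hB0, Bf, Bf, tau_zpow_apply]; congr 1; ring]
  rw [Bf_step hk u' a 0]
  rw [hB0, inv_mul_cancel]
  exact map_one _

/-- The homomorphism from `H` to the model. -/
def theta : Hgp k n u' →* MM hk u' a := PresentedGroup.toGroup (rel_holds hk u' a)

lemma theta_x : theta hk u' a (xg k n u') =
    SemidirectProduct.inr (Multiplicative.ofAdd (1 : ℤ)) :=
  PresentedGroup.toGroup.of _

lemma theta_cj (i : ℤ) (g : Hgp k n u') (v : FF k n)
    (hg : theta hk u' a g = SemidirectProduct.inl v) :
    theta hk u' a (cj k n u' i g) = SemidirectProduct.inl ((tau hk u' a ^ i) v) := by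
  rw [cj, map_mul, map_mul, map_zpow, map_zpow, theta_x, hg, conj_inl]

lemma theta_bg : theta hk u' a (bg k n u') = SemidirectProduct.inl (Bf hk u' a 0) :=
  PresentedGroup.toGroup.of _

lemma theta_yg (m : Fin n) : theta hk u' a (yg k n u' m) =
    SemidirectProduct.inl (FreeGroup.of (Sum.inr (m, (0 : ℤ)))) :=
  PresentedGroup.toGroup.of _

lemma theta_bi (j : ℤ) : theta hk u' a (bi k n u' j) = SemidirectProduct.inl (Bf hk u' a j) := by
  rw [bi, theta_cj hk u' a j _ _ (theta_bg hk u' a)]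
  congr 1
  rw [Bf, Bf, tau_zpow_apply]
  congr 1
  ring

lemma theta_yi (m : Fin n) (j : ℤ) :
    theta hk u' a (yi k n u' m j) = SemidirectProduct.inl (FreeGroup.of (Sum.inr (m, j))) := by
  rw [yi, theta_cj hk u' a j _ _ (theta_yg hk u' a m), tau_zpow_inr]
  congr 3
  ring

/-- The subgroup of pure `b`-letters in the model. -/
def BFsub : Subgroup (FF k n) :=
  Subgroup.closure (Set.range fun t : Fin k => FreeGroup.of (Sum.inl t : Fin k ⊕ Fin n × ℤ))

/-- The subgroup of the model corresponding to `G_{a,∞}`. -/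
def Easub : Subgroup (FF k n) :=
  Subgroup.closure ({v | ∃ t : Fin k, v = FreeGroup.of (Sum.inl t)} ∪
    {v | ∃ m j, a ≤ j ∧ v = FreeGroup.of (Sum.inr (m, j))})

/-- The retraction killing all `y`-letters of index `< a`. -/
def pia : FF k n →* FF k n :=
  FreeGroup.lift (Sum.elim (fun t : Fin k => FreeGroup.of (Sum.inl t))
    (fun p : Fin n × ℤ => if a ≤ p.2 then FreeGroup.of (Sum.inr p) else 1))

lemma pia_of_inl (t : Fin k) :
    pia (k := k) (n := n) a (FreeGroup.of (Sum.inl t)) = FreeGroup.of (Sum.inl t) :=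
  FreeGroup.lift_apply_of

lemma pia_of_inr (m : Fin n) (j : ℤ) :
    pia (k := k) (n := n) a (FreeGroup.of (Sum.inr (m, j))) =
      if a ≤ j then FreeGroup.of (Sum.inr (m, j)) else 1 :=
  FreeGroup.lift_apply_of

lemma pia_U_small (j : ℤ) (hj : j < a) : pia (k := k) a (U u' j) = 1 := by
  rw [hom_U]
  have h : (fun m => pia (k := k) a (FreeGroup.of (Sum.inr (m, j)))) =
      (fun _ : Fin n => (1 : FF k n)) := by
    funext m
    rw [pia_of_inr, if_neg (by omega)]
  rw [h]
  have h2 : (FreeGroup.lift (fun _ : Fin n => (1 : FF k n))) =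
      (1 : FreeGroup (Fin n) →* FF k n) := FreeGroup.ext_hom _ _ (by simp)
  rw [h2]
  rfl

lemma U_mem_Ea (i : ℤ) (hi : a ≤ i) : U u' i ∈ Easub (k := k) a :=
  lift_mem u' _ _ (fun m => Subgroup.subset_closure (Or.inr ⟨m, i, hi, rfl⟩))

lemma tau_mem_Ea (v : FF k n) (hv : v ∈ Easub (k := k) a) :
    tau hk u' a v ∈ Easub (k := k) a := by
  revert v
  have h : Easub (k := k) a ≤ (Easub (k := k) a).comap (tup hk u' a) := by
    rw [Easub]
    apply Subgroup.closure_le _ |>.mpr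
    rintro v (⟨t, rfl⟩ | ⟨m, j, hj, rfl⟩)
    · simp only [SetLike.mem_coe, Subgroup.mem_comap, tup_of, fup, Sum.elim_inl]
      split_ifs with h
      · exact Subgroup.subset_closure (Or.inl ⟨_, rfl⟩)
      · exact Subgroup.mul_mem _ (Subgroup.subset_closure (Or.inl ⟨_, rfl⟩))
          (U_mem_Ea u' a a le_rfl)
    · simp only [SetLike.mem_coe, Subgroup.mem_comap, tup_of, fup, Sum.elim_inr]
      exact Subgroup.subset_closure (Or.inr ⟨m, j + 1, by omega, rfl⟩)
  intro v hv
  rw [tau_apply]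
  exact h hv

lemma tau_pow_mem_Ea (d : ℕ) (v : FF k n) (hv : v ∈ Easub (k := k) a) :
    (tau hk u' a ^ (d : ℤ)) v ∈ Easub (k := k) a := by
  induction d with
  | zero => simpa using hv
  | succ d ih =>
      rw [show (((d + 1 : ℕ)) : ℤ) = 1 + (d : ℤ) by push_cast; ring, zpow_one_add,
        MulAut.mul_apply]
      exact tau_mem_Ea hk u' a _ ih

lemma E_mem_Ea : E hk ∈ Easub (k := k) (n := n) a :=
  Subgroup.subset_closure (Or.inl ⟨⟨0, hk⟩, rfl⟩)

lemma Bf_mem_Ea (j : ℤ) (hj : a ≤ j) : Bf hk u' a j ∈ Easub (k := k) a := by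
  rw [Bf, show j - a = (((j - a).toNat : ℕ) : ℤ) from (Int.toNat_of_nonneg (by omega)).symm]
  exact tau_pow_mem_Ea hk u' a _ _ (E_mem_Ea hk a)

lemma Bf_base' (j : ℤ) (hj1 : a ≤ j) (hj2 : j < a + k) :
    Bf hk u' a j = FreeGroup.of (Sum.inl ⟨(j - a).toNat, by omega⟩) := by
  have hcast : (((j - a).toNat : ℕ) : ℤ) = j - a := Int.toNat_of_nonneg (by omega)
  rw [Bf]
  conv_lhs => rw [← hcast]
  exact tau_pow_E_nat hk u' a _ (by omega)

lemma pia_Bf_aux : ∀ d : ℕ, ∀ j : ℤ, j < a + k → a + k - 1 - j ≤ (d : ℤ) →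
    pia a (Bf hk u' a j) ∈ BFsub (k := k) (n := n) := by
  intro d
  induction d with
  | zero =>
      intro j h1 h2
      rw [Bf_base' hk u' a j (by omega) h1, pia_of_inl]
      exact Subgroup.subset_closure ⟨_, rfl⟩
  | succ d ih =>
      intro j h1 h2
      by_cases haj : a ≤ j
      · rw [Bf_base' hk u' a j haj h1, pia_of_inl]
        exact Subgroup.subset_closure ⟨_, rfl⟩
      · have hstep : Bf hk u' a j = Bf hk u' a (j + k) * (U u' j)⁻¹ := by
          rw [Bf_step hk u' a j]; group
        rw [hstep, map_mul, map_inv, pia_U_small (k := k) u' a j (by omega), inv_one, mul_one]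
        exact ih (j + k) (by omega) (by push_cast; omega)

lemma pia_Bf (j : ℤ) (hj : j < a + k) :
    pia a (Bf hk u' a j) ∈ BFsub (k := k) (n := n) := by
  rcases le_or_gt (a + k - 1 - j) 0 with h | h
  · exact pia_Bf_aux hk u' a 0 j hj (by exact_mod_cast h)
  · exact pia_Bf_aux hk u' a (a + k - 1 - j).toNat j hj (by rw [Int.toNat_of_nonneg] <;> omega)

lemma pia_fix (v : FF k n) (hv : v ∈ Easub (k := k) a) : pia a v = v := by
  induction hv using Subgroup.closure_induction with
  | mem x hx =>
      rcases hx with ⟨t, rfl⟩ | ⟨m, j, hj, rfl⟩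
      · exact pia_of_inl a t
      · rw [pia_of_inr, if_pos hj]
  | one => exact map_one _
  | mul x y hx hy ihx ihy => rw [map_mul, ihx, ihy]
  | inv x hx ihx => rw [map_inv, ihx]

/-- The embedding of basis index letters into model letters. -/
def eMap : (Fin k ⊕ Fin n × ℕ) → (Fin k ⊕ Fin n × ℤ) :=
  Sum.map id (fun p => (p.1, a + (p.2 : ℤ)))

def mu : FreeGroup (Fin k ⊕ Fin n × ℕ) →* FF k n := FreeGroup.map (eMap (k := k) (n := n) a)

def nu : FF k n →* FreeGroup (Fin k ⊕ Fin n × ℕ) :=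
  FreeGroup.lift (Sum.elim (fun t : Fin k => FreeGroup.of (Sum.inl t))
    (fun p : Fin n × ℤ => if a ≤ p.2 then FreeGroup.of (Sum.inr (p.1, (p.2 - a).toNat)) else 1))

lemma nu_comp_mu : (nu (k := k) (n := n) a).comp (mu a) = MonoidHom.id _ := by
  apply FreeGroup.ext_hom
  rintro (t | ⟨m, t⟩)
  · rw [MonoidHom.comp_apply, MonoidHom.id_apply, mu, FreeGroup.map.of, nu, FreeGroup.lift_apply_of]
    rfl
  · rw [MonoidHom.comp_apply, MonoidHom.id_apply, mu, FreeGroup.map.of, nu, FreeGroup.lift_apply_of]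
    show (if a ≤ a + (t : ℤ) then
        FreeGroup.of (Sum.inr (m, ((a + (t : ℤ)) - a).toNat)) else 1) = _
    rw [if_pos (by omega), show ((a + (t : ℤ)) - a).toNat = t from by omega]

lemma reduce_map_eq {α β : Type*} [DecidableEq α] [DecidableEq β] (f : α → β)
    (hf : Function.Injective f) (L : List (α × Bool)) :
    FreeGroup.reduce (L.map (fun p => (f p.1, p.2))) =
      (FreeGroup.reduce L).map (fun p => (f p.1, p.2)) := by
  induction L with
  | nil => rfl
  | cons x L ih =>
      rw [List.map_cons, FreeGroup.reduce.cons, FreeGroup.reduce.cons, ih]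
      cases h : FreeGroup.reduce L with
      | nil => simp
      | cons y ys =>
          simp only [List.map_cons]
          show (if (f x.1, x.2).1 = (f y.1, y.2).1 ∧ (f x.1, x.2).2 = !(f y.1, y.2).2 then
              ys.map (fun p => (f p.1, p.2))
            else (f x.1, x.2) :: (f y.1, y.2) :: ys.map (fun p => (f p.1, p.2))) =
            (if x.1 = y.1 ∧ x.2 = !y.2 then ys else x :: y :: ys).map (fun p => (f p.1, p.2))
          by_cases hc : x.1 = y.1 ∧ x.2 = !y.2
          · rw [if_pos ⟨congrArg f hc.1, hc.2⟩, if_pos hc]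
          · rw [if_neg (fun hc2 => hc ⟨hf hc2.1, hc2.2⟩), if_neg hc, List.map_cons, List.map_cons]

lemma toWord_map_eq {α β : Type*} [DecidableEq α] [DecidableEq β] (f : α → β)
    (hf : Function.Injective f) (x : FreeGroup α) :
    (FreeGroup.map f x).toWord = x.toWord.map (fun p => (f p.1, p.2)) := by
  conv_lhs => rw [← FreeGroup.mk_toWord (x := x)]
  rw [FreeGroup.map.mk, FreeGroup.toWord_mk, reduce_map_eq f hf, FreeGroup.reduce_toWord]
end OnlyB

/-- Lemma 5.1: if `r ∈ N` is non-trivial with `ω_r − α_r + 1 < 1`, then the reduced word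
representing `r` in the basis `B⁺(α_r)` of `G_{α_r,∞}` (indexed by `Fin k ⊕ Fin n × ℕ`,
with `(m, t)` standing for `y_{m,α_r+t}`) contains only `b`-letters and no `y`-letters. -/
theorem only_b_letters (k n : ℕ) (hk : 1 ≤ k) (hn : 1 ≤ n)
    (u' : FreeGroup (Fin n)) (hu : u' ≠ 1)
    (φ : Hgp k n u' →* Multiplicative ℤ) (hφ : IsExpSum k n u' φ)
    (r : Hgp k n u') (hr : r ∈ φ.ker) (hr1 : r ≠ 1)
    (a w : ℤ) (ha : IsAlphaLimit k n u' r a) (hw : IsOmegaLimit k n u' r w)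
    (hlen : w - a + 1 < 1)
    (basis : FreeGroupBasis (Fin k ⊕ Fin n × ℕ) ↥(Gge k n u' a))
    (hb : ∀ t : Fin k, (basis (Sum.inl t) : Hgp k n u') = bi k n u' (a + (t : ℕ)))
    (hy : ∀ m : Fin n, ∀ t : ℕ,
      (basis (Sum.inr (m, t)) : Hgp k n u') = yi k n u' m (a + t)) :
    ∀ p ∈ (basis.repr ⟨r, ha.1⟩).toWord, ∃ t : Fin k, p.1 = Sum.inl t := by
  classical
  have hk0 : 0 < k := hk
  set Θ := OnlyB.theta hk0 u' a with hTheta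
  have hw' : w < a := by omega
  -- Step 1: `Θ r` lies in the image of `Easub`.
  have h1 : Θ r ∈ (OnlyB.Easub (k := k) (n := n) a).map
      (SemidirectProduct.inl : OnlyB.FF k n →* OnlyB.MM hk0 u' a) := by
    have hle : Gge k n u' a ≤ ((OnlyB.Easub (k := k) (n := n) a).map
        (SemidirectProduct.inl : OnlyB.FF k n →* OnlyB.MM hk0 u' a)).comap Θ := by
      rw [Gge]
      apply (Subgroup.closure_le _).mpr
      rintro g (⟨j, hj, rfl⟩ | ⟨m, j, hj, rfl⟩)
      · simp only [SetLike.mem_coe, Subgroup.mem_comap]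
        rw [hTheta, OnlyB.theta_bi]
        exact Subgroup.mem_map_of_mem _ (OnlyB.Bf_mem_Ea hk0 u' a j hj)
      · simp only [SetLike.mem_coe, Subgroup.mem_comap]
        rw [hTheta, OnlyB.theta_yi]
        exact Subgroup.mem_map_of_mem _ (Subgroup.subset_closure (Or.inr ⟨m, j, hj, rfl⟩))
    exact hle ha.1
  -- Step 2: `Θ r` lies in the image of the `πₐ`-preimage of the pure-`b` subgroup.
  have h2 : Θ r ∈ ((OnlyB.BFsub (k := k) (n := n)).comap (OnlyB.pia a)).map
      (SemidirectProduct.inl : OnlyB.FF k n →* OnlyB.MM hk0 u' a) := by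
    have hle : Gle k n u' w ≤ (((OnlyB.BFsub (k := k) (n := n)).comap (OnlyB.pia a)).map
        (SemidirectProduct.inl : OnlyB.FF k n →* OnlyB.MM hk0 u' a)).comap Θ := by
      rw [Gle]
      apply (Subgroup.closure_le _).mpr
      rintro g (⟨j, hj, rfl⟩ | ⟨m, j, hj, rfl⟩)
      · simp only [SetLike.mem_coe, Subgroup.mem_comap]
        rw [hTheta, OnlyB.theta_bi]
        exact Subgroup.mem_map_of_mem _
          (Subgroup.mem_comap.mpr (OnlyB.pia_Bf hk0 u' a j (by omega)))
      · simp only [SetLike.mem_coe, Subgroup.mem_comap]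
        rw [hTheta, OnlyB.theta_yi]
        refine Subgroup.mem_map_of_mem _ (Subgroup.mem_comap.mpr ?_)
        rw [OnlyB.pia_of_inr, if_neg (by omega)]
        exact Subgroup.one_mem _
    exact hle hw.1
  obtain ⟨v, hvEa, hv⟩ := Subgroup.mem_map.mp h1
  obtain ⟨v2, hv2, hv2'⟩ := Subgroup.mem_map.mp h2
  have hvv : v = v2 := SemidirectProduct.inl_injective (by rw [hv, hv2'])
  have hvBF : v ∈ OnlyB.BFsub (k := k) (n := n) := by
    have hfix := OnlyB.pia_fix a v hvEa
    have := Subgroup.mem_comap.mp hv2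
    rw [← hvv] at this
    rwa [hfix] at this
  -- Step 3: transfer along the basis.
  set s := basis.repr ⟨r, ha.1⟩ with hs
  have key : OnlyB.mu (k := k) (n := n) a s = v := by
    have hcomp : Θ.comp (((Gge k n u' a).subtype).comp basis.repr.symm.toMonoidHom) =
        (SemidirectProduct.inl : OnlyB.FF k n →* OnlyB.MM hk0 u' a).comp
          (OnlyB.mu (k := k) (n := n) a) := by
      apply FreeGroup.ext_hom
      rintro (t | ⟨m, t⟩)
      · show Θ ((basis (Sum.inl t) : Gge k n u' a) : Hgp k n u') = _
        rw [hb t, hTheta, OnlyB.theta_bi, OnlyB.Bf_base hk0 u' a t]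
        rw [MonoidHom.comp_apply, OnlyB.mu, FreeGroup.map.of]
        rfl
      · show Θ ((basis (Sum.inr (m, t)) : Gge k n u' a) : Hgp k n u') = _
        rw [hy m t, hTheta, OnlyB.theta_yi]
        rw [MonoidHom.comp_apply, OnlyB.mu, FreeGroup.map.of]
        rfl
    have happ := DFunLike.congr_fun hcomp s
    rw [MonoidHom.comp_apply, MonoidHom.comp_apply, MonoidHom.comp_apply] at happ
    rw [hs] at happ
    rw [show basis.repr.symm.toMonoidHom (basis.repr ⟨r, ha.1⟩) = ⟨r, ha.1⟩ from
      basis.repr.symm_apply_apply _] at happ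
    have : Θ r = SemidirectProduct.inl (OnlyB.mu (k := k) (n := n) a s) := by
      rw [← happ]; rfl
    rw [← hv] at this
    exact (SemidirectProduct.inl_injective this).symm
  have hsnu : s = OnlyB.nu (k := k) (n := n) a v := by
    rw [← key]
    exact (DFunLike.congr_fun (OnlyB.nu_comp_mu (k := k) (n := n) a) s).symm
  have hsBI : s ∈ Subgroup.closure
      (Set.range fun t : Fin k => FreeGroup.of (Sum.inl t : Fin k ⊕ Fin n × ℕ)) := by
    have hle : OnlyB.BFsub (k := k) (n := n) ≤ (Subgroup.closure
        (Set.range fun t : Fin k => FreeGroup.of (Sum.inl t : Fin k ⊕ Fin n × ℕ))).comap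
          (OnlyB.nu (k := k) (n := n) a) := by
      rw [OnlyB.BFsub]
      apply (Subgroup.closure_le _).mpr
      rintro x ⟨t, rfl⟩
      simp only [SetLike.mem_coe, Subgroup.mem_comap]
      rw [OnlyB.nu, FreeGroup.lift_apply_of]
      exact Subgroup.subset_closure ⟨t, rfl⟩
    rw [hsnu]
    exact Subgroup.mem_comap.mp (hle hvBF)
  have hrange : ∃ y : FreeGroup (Fin k), FreeGroup.map Sum.inl y = s := by
    have hle : Subgroup.closure
        (Set.range fun t : Fin k => FreeGroup.of (Sum.inl t : Fin k ⊕ Fin n × ℕ)) ≤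
        (FreeGroup.map (Sum.inl : Fin k → Fin k ⊕ Fin n × ℕ)).range := by
      apply (Subgroup.closure_le _).mpr
      rintro x ⟨t, rfl⟩
      exact ⟨FreeGroup.of t, FreeGroup.map.of⟩
    exact hle hsBI
  obtain ⟨y, hy'⟩ := hrange
  intro p hp
  rw [← hy', OnlyB.toWord_map_eq Sum.inl Sum.inl_injective] at hp
  obtain ⟨q, _, rfl⟩ := List.mem_map.mp hp
  exact ⟨q.1, rfl⟩
end

section
/- For a non-trivial element r ∈ N, the following are equivalent: (1) for some i ∈ ℤ, the reduced word r(i) representing r in the free basis B(i) begins with a positive power of a b-letter; (2) for all i ∈ ℤ, the word r(i) begins with a positive power of a b-letter. -/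
namespace L33
open FreeGroup List

section General

variable {α : Type*} [DecidableEq α]

/-- The non-cancellation relation on letters. -/
def NC (a b : α × Bool) : Prop := ¬(a.1 = b.1 ∧ a.2 = !b.2)

theorem isRed_iff (L : List (α × Bool)) :
    FreeGroup.reduce L = L ↔ List.Chain' NC L := by
  induction L with
  | nil => simp [List.Chain']
  | cons x L ih =>
    simp only [List.Chain', List.isChain_cons]
    constructor
    · intro h
      rw [FreeGroup.reduce.cons] at h
      rcases hL : FreeGroup.reduce L with _ | ⟨hd, tl⟩
      · rw [hL] at h
        simp only [List.casesOn] at h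
        have : L = [] := by
          have := congrArg List.tail h
          simpa using this.symm
        subst this
        simp
      · rw [hL] at h
        dsimp only at h
        by_cases hc : x.1 = hd.1 ∧ x.2 = !hd.2
        · rw [if_pos hc] at h
          exfalso
          have h1 : (FreeGroup.reduce L).length ≤ L.length :=
            (FreeGroup.Red.sublist FreeGroup.reduce.red).length_le
          rw [hL] at h1
          have h2 := congrArg List.length h
          simp [h] at h1 h2
        · rw [if_neg hc] at h
          have hL2 : L = hd :: tl := by
            have := congrArg List.tail h
            simpa using this.symm
          have hred : FreeGroup.reduce L = L := by rw [hL, hL2]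
          refine ⟨?_, ih.1 hred⟩
          intro y hy
          rw [hL2] at hy
          simp only [List.head?_cons, Option.mem_def, Option.some.injEq] at hy
          subst hy
          exact hc
    · rintro ⟨h1, h2⟩
      have hL : FreeGroup.reduce L = L := ih.2 h2
      rw [FreeGroup.reduce.cons, hL]
      cases L with
      | nil => rfl
      | cons hd tl =>
        dsimp only
        rw [if_neg (h1 hd rfl)]

theorem reduced_infix {L M : List (α × Bool)} (hL : FreeGroup.reduce L = L)
    (h : M <:+: L) : FreeGroup.reduce M = M :=
  (isRed_iff M).2 (((isRed_iff L).1 hL).infix h)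

/-- Cons a letter onto a reduced word with no cancellation. -/
theorem reduce_cons_of_nc {M : List (α × Bool)} (x : α × Bool)
    (hM : FreeGroup.reduce M = M) (h : ∀ y ∈ M.head?, NC x y) :
    FreeGroup.reduce (x :: M) = x :: M := by
  rw [FreeGroup.reduce.cons, hM]
  cases M with
  | nil => rfl
  | cons hd tl =>
    dsimp only
    rw [if_neg (h hd rfl)]

theorem reduce_congr_right (A L : List (α × Bool)) :
    FreeGroup.reduce (A ++ L) = FreeGroup.reduce (A ++ FreeGroup.reduce L) :=
  FreeGroup.reduce.eq_of_red
    (FreeGroup.Red.append_append (FreeGroup.Red.refl) FreeGroup.reduce.red)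

theorem reduce_congr_left (A B L : List (α × Bool)) (h : FreeGroup.Red A B) :
    FreeGroup.reduce (A ++ L) = FreeGroup.reduce (B ++ L) :=
  FreeGroup.reduce.eq_of_red (FreeGroup.Red.append_append h (FreeGroup.Red.refl))

theorem mem_reduce {L : List (α × Bool)} {x} (h : x ∈ FreeGroup.reduce L) : x ∈ L :=
  (FreeGroup.Red.sublist FreeGroup.reduce.red).mem h

theorem toWord_map_inj {β : Type*} [DecidableEq β] (g : α → β)
    (hg : Function.Injective g) (q : FreeGroup α) :
    (FreeGroup.map g q).toWord = q.toWord.map (fun x => (g x.1, x.2)) := by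
  conv_lhs => rw [← FreeGroup.mk_toWord (x := q)]
  rw [FreeGroup.map.mk, FreeGroup.toWord_mk]
  rw [isRed_iff]
  have hchain := (isRed_iff q.toWord).1 (FreeGroup.reduce_toWord q)
  simp only [List.Chain', List.isChain_map] at hchain ⊢
  refine hchain.imp ?_
  rintro ⟨a1, e1⟩ ⟨a2, e2⟩ hnc ⟨h1, h2⟩
  exact hnc ⟨hg h1, h2⟩

end General

section Sum

variable {κ υ : Type*} [DecidableEq κ] [DecidableEq υ]

/-- Key gadget: an all-`Y` word appended to a reduced word starting with a non-`Y` letter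
reduces componentwise. -/
theorem reduce_yapp (A M : List ((κ ⊕ υ) × Bool)) (b : (κ ⊕ υ) × Bool)
    (hA : ∀ x ∈ A, (x.1).isRight = true) (hb : (b.1).isRight = false)
    (hbM : FreeGroup.reduce (b :: M) = b :: M) :
    FreeGroup.reduce (A ++ b :: M) = FreeGroup.reduce A ++ b :: M := by
  have hred : FreeGroup.reduce (FreeGroup.reduce A ++ b :: M) = FreeGroup.reduce A ++ b :: M := by
    rw [isRed_iff]
    simp only [List.Chain', List.isChain_append]
    refine ⟨(isRed_iff _).1 FreeGroup.reduce.idem, (isRed_iff _).1 hbM, ?_⟩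
    intro p hp q hq
    have hpA : p ∈ A := mem_reduce (List.mem_of_mem_getLast? hp)
    have hqb : q = b := by simpa using hq.symm
    subst hqb
    intro hc
    have h2 := hA p hpA
    rw [hc.1] at h2
    rw [h2] at hb
    simp at hb
  calc FreeGroup.reduce (A ++ b :: M) = FreeGroup.reduce (FreeGroup.reduce A ++ b :: M) :=
        reduce_congr_left _ _ _ FreeGroup.reduce.red
    _ = FreeGroup.reduce A ++ b :: M := by rw [hred]

variable (π : κ → κ) (C : κ → List ((κ ⊕ υ) × Bool))

/-- The substitution on letters induced by the change of basis. -/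
def sub : (κ ⊕ υ) × Bool → List ((κ ⊕ υ) × Bool)
  | (Sum.inl t, true) => (Sum.inl (π t), true) :: C t
  | (Sum.inl t, false) => FreeGroup.invRev (C t) ++ [(Sum.inl (π t), false)]
  | (Sum.inr y, e) => [(Sum.inr y, e)]

theorem of_eq_mk (a : κ ⊕ υ) : FreeGroup.of a = FreeGroup.mk [(a, true)] := rfl

theorem inv_of_eq_mk (a : κ ⊕ υ) : (FreeGroup.of a)⁻¹ = FreeGroup.mk [(a, false)] := by
  rw [of_eq_mk, FreeGroup.inv_mk]
  simp [FreeGroup.invRev]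

theorem sigma_mk (σ : FreeGroup (κ ⊕ υ) →* FreeGroup (κ ⊕ υ))
    (hσl : ∀ t, σ (FreeGroup.of (Sum.inl t)) = FreeGroup.of (Sum.inl (π t)) * FreeGroup.mk (C t))
    (hσr : ∀ y, σ (FreeGroup.of (Sum.inr y)) = FreeGroup.of (Sum.inr y)) :
    ∀ L : List ((κ ⊕ υ) × Bool), σ (FreeGroup.mk L) = FreeGroup.mk (L.flatMap (sub π C)) := by
  intro L
  induction L with
  | nil =>
    simp only [List.flatMap_nil, ← FreeGroup.one_eq_mk]
    exact _root_.map_one σ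
  | cons x L ih =>
    have hsplit : FreeGroup.mk (x :: L) = FreeGroup.mk [x] * FreeGroup.mk L := by
      rw [FreeGroup.mul_mk]; rfl
    have hbind : (x :: L).flatMap (sub π C) = sub π C x ++ L.flatMap (sub π C) := by
      simp [List.flatMap_cons]
    rw [hsplit, _root_.map_mul, ih, hbind, ← FreeGroup.mul_mk]
    congr 1
    rcases x with ⟨a | y, e | e⟩
    · -- (inl a, false)
      rw [← inv_of_eq_mk, _root_.map_inv, hσl]
      rw [show sub π C (Sum.inl a, false) = FreeGroup.invRev (C a) ++ [(Sum.inl (π a), false)]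
        from rfl]
      rw [← FreeGroup.mul_mk, ← FreeGroup.inv_mk, ← inv_of_eq_mk, mul_inv_rev]
    · -- (inl a, true)
      rw [← of_eq_mk, hσl]
      rw [show sub π C (Sum.inl a, true) = (Sum.inl (π a), true) :: C a from rfl]
      rw [show ((Sum.inl (π a) : κ ⊕ υ), true) :: C a = [((Sum.inl (π a) : κ ⊕ υ), true)] ++ C a
        from rfl, ← FreeGroup.mul_mk, ← of_eq_mk]
    · -- (inr y, false)
      rw [← inv_of_eq_mk, _root_.map_inv, hσr, inv_of_eq_mk]
      rfl
    · -- (inr y, true)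
      rw [← of_eq_mk, hσr, of_eq_mk]
      rfl

/-- `Y`-letters (the letters not substituted by more than one letter). -/
def isY : (κ ⊕ υ) × Bool → Bool := fun x => x.1.isRight

theorem NC_of_isY {s : κ} {e : Bool} {q : (κ ⊕ υ) × Bool} (h : isY q = true) :
    NC (Sum.inl s, e) q := by
  rintro ⟨h1, -⟩
  rw [isY, ← h1] at h
  simp at h

theorem NC_same_bool (a b : κ ⊕ υ) (e : Bool) : NC (a, e) (b, e) := by
  rintro ⟨-, h2⟩
  simp at h2

theorem isY_invRev {Ct : List ((κ ⊕ υ) × Bool)} (h : ∀ x ∈ Ct, isY x = true) :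
    ∀ x ∈ FreeGroup.invRev Ct, isY x = true := by
  intro x hx
  rw [FreeGroup.invRev] at hx
  simp only [List.mem_reverse, List.mem_map] at hx
  obtain ⟨a, ha, rfl⟩ := hx
  have h2 := h a ha
  simpa [isY] using h2

theorem head_cases {A M : List ((κ ⊕ υ) × Bool)} {b q : (κ ⊕ υ) × Bool}
    (hq : q ∈ (A ++ b :: M).head?) : q ∈ A.head? ∨ (A = [] ∧ q = b) := by
  cases A with
  | nil =>
    right
    refine ⟨rfl, ?_⟩
    simpa [Option.mem_def] using hq.symm
  | cons a A' =>
    left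
    simpa [Option.mem_def] using hq

theorem head?_takeWhile {α : Type*} {p : α → Bool} {L : List α} {q : α}
    (h : q ∈ (L.takeWhile p).head?) : q ∈ L.head? := by
  obtain ⟨rest, hrest⟩ := List.takeWhile_prefix (l := L) p
  rcases htw : L.takeWhile p with _ | ⟨z, T⟩
  · rw [htw] at h; simp at h
  · rw [htw] at h hrest
    rw [← hrest]
    simpa using h

theorem dropWhile_head_not {α : Type*} {p : α → Bool} {L : List α} {z : α} {D : List α}
    (h : L.dropWhile p = z :: D) : p z = false := by
  have hl : 0 < (L.dropWhile p).length := by rw [h]; simp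
  have h2 := List.dropWhile_get_zero_not p L hl
  simp only [List.get_eq_getElem, h, List.getElem_cons_zero] at h2
  simpa using h2

theorem mem_head?_mem {α : Type*} {L : List α} {q : α} (h : q ∈ L.head?) : q ∈ L := by
  rcases L with _ | ⟨z, T⟩
  · simp at h
  · simp only [List.head?_cons, Option.mem_def, Option.some.injEq] at h
    subst h
    exact List.mem_cons_self

/-- The key specification of the reduced form of a substituted word. -/
def Spec (L : List ((κ ⊕ υ) × Bool)) : Prop :=
  (L.dropWhile isY = [] → FreeGroup.reduce (L.flatMap (sub π C)) = L) ∧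
  (∀ t D, L.dropWhile isY = (Sum.inl t, true) :: D →
     ∃ M₁, FreeGroup.reduce (L.flatMap (sub π C)) =
       L.takeWhile isY ++ (Sum.inl (π t), true) :: M₁) ∧
  (∀ t D, L.dropWhile isY = (Sum.inl t, false) :: D →
     ∃ M₁, FreeGroup.reduce (L.flatMap (sub π C)) =
       FreeGroup.reduce (L.takeWhile isY ++ FreeGroup.invRev (C t)) ++
         (Sum.inl (π t), false) :: M₁)

variable {π C}

theorem reduce_cons_congr (x : (κ ⊕ υ) × Bool) (L : List ((κ ⊕ υ) × Bool)) :
    FreeGroup.reduce (x :: L) = FreeGroup.reduce (x :: FreeGroup.reduce L) := by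
  simpa using reduce_congr_right [x] L

theorem spec_cons_y (hCY : ∀ t, ∀ x ∈ C t, isY x = true)
    (yy : υ) (e : Bool) (L' : List ((κ ⊕ υ) × Bool))
    (hred : FreeGroup.reduce ((Sum.inr yy, e) :: L') = (Sum.inr yy, e) :: L')
    (hsp : Spec π C L') : Spec π C ((Sum.inr yy, e) :: L') := by
  obtain ⟨ih1, ih2, ih3⟩ := hsp
  have hL' : FreeGroup.reduce L' = L' :=
    reduced_infix hred (List.suffix_cons (Sum.inr yy, e) L').isInfix
  have hNCx : ∀ q ∈ L'.head?, NC (Sum.inr yy, e) q := by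
    have h2 := (isRed_iff _).1 hred
    simp only [List.Chain', List.isChain_cons] at h2
    exact h2.1
  have hsubx : sub π C ((Sum.inr yy : κ ⊕ υ), e) = [((Sum.inr yy : κ ⊕ υ), e)] := by
    cases e <;> rfl
  have hflat : ((Sum.inr yy, e) :: L').flatMap (sub π C) =
      (Sum.inr yy, e) :: L'.flatMap (sub π C) := by
    rw [List.flatMap_cons, hsubx]; rfl
  have hxY : isY ((Sum.inr yy : κ ⊕ υ), e) = true := rfl
  have htw : ((Sum.inr yy, e) :: L').takeWhile isY =
      (Sum.inr yy, e) :: L'.takeWhile isY := List.takeWhile_cons_of_pos hxY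
  have hdw : ((Sum.inr yy, e) :: L').dropWhile isY = L'.dropWhile isY :=
    List.dropWhile_cons_of_pos hxY
  refine ⟨?_, ?_, ?_⟩
  · -- clause 1
    intro h
    rw [hdw] at h
    have hM : FreeGroup.reduce (L'.flatMap (sub π C)) = L' := ih1 h
    rw [hflat, reduce_cons_congr, hM, hred]
  · -- clause 2
    intro t D h
    rw [hdw] at h
    obtain ⟨M₁, hM⟩ := ih2 t D h
    refine ⟨M₁, ?_⟩
    rw [hflat, reduce_cons_congr, hM, htw]
    have hredM : FreeGroup.reduce (L'.takeWhile isY ++ (Sum.inl (π t), true) :: M₁) =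
        L'.takeWhile isY ++ (Sum.inl (π t), true) :: M₁ := by
      rw [← hM]; exact FreeGroup.reduce.idem
    rw [reduce_cons_of_nc _ hredM ?_]
    · simp
    · intro q hq
      rcases head_cases hq with hq1 | ⟨-, rfl⟩
      · exact hNCx q (head?_takeWhile hq1)
      · rintro ⟨h1, -⟩; simp at h1
  · -- clause 3
    intro t D h
    rw [hdw] at h
    obtain ⟨M₁, hM⟩ := ih3 t D h
    refine ⟨M₁, ?_⟩
    have hsuf : FreeGroup.reduce ((Sum.inl (π t), false) :: M₁) =
        (Sum.inl (π t), false) :: M₁ := by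
      refine reduced_infix (L := FreeGroup.reduce (L'.flatMap (sub π C))) FreeGroup.reduce.idem ?_
      rw [hM]
      exact (List.suffix_append _ _).isInfix
    have hZ2 : FreeGroup.reduce ((Sum.inr yy, e) ::
          FreeGroup.reduce (L'.takeWhile isY ++ FreeGroup.invRev (C t))) =
        FreeGroup.reduce (((Sum.inr yy, e) :: L'.takeWhile isY) ++ FreeGroup.invRev (C t)) := by
      rw [show ((Sum.inr yy, e) :: L'.takeWhile isY) ++ FreeGroup.invRev (C t) =
        (Sum.inr yy, e) :: (L'.takeWhile isY ++ FreeGroup.invRev (C t)) from rfl]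
      rw [← reduce_cons_congr]
    have hYZ : ∀ q ∈ (Sum.inr yy, e) ::
        FreeGroup.reduce (L'.takeWhile isY ++ FreeGroup.invRev (C t)), isY q = true := by
      intro q hq
      rcases List.mem_cons.1 hq with rfl | hq2
      · rfl
      · have hq3 := mem_reduce hq2
        rcases List.mem_append.1 hq3 with hq4 | hq4
        · exact List.mem_takeWhile_imp hq4
        · exact isY_invRev (hCY t) q hq4
    calc FreeGroup.reduce (((Sum.inr yy, e) :: L').flatMap (sub π C))
        = FreeGroup.reduce ((Sum.inr yy, e) :: FreeGroup.reduce (L'.flatMap (sub π C))) := by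
          rw [hflat, reduce_cons_congr]
      _ = FreeGroup.reduce (((Sum.inr yy, e) ::
            FreeGroup.reduce (L'.takeWhile isY ++ FreeGroup.invRev (C t))) ++
            (Sum.inl (π t), false) :: M₁) := by
          rw [hM]; rfl
      _ = FreeGroup.reduce ((Sum.inr yy, e) ::
            FreeGroup.reduce (L'.takeWhile isY ++ FreeGroup.invRev (C t))) ++
            (Sum.inl (π t), false) :: M₁ := by
          refine reduce_yapp _ _ _ hYZ rfl hsuf
      _ = FreeGroup.reduce ((((Sum.inr yy, e) :: L').takeWhile isY) ++ FreeGroup.invRev (C t)) ++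
            (Sum.inl (π t), false) :: M₁ := by
          rw [htw, ← hZ2]

theorem spec_cons_bt (hC : ∀ t, FreeGroup.reduce (C t) = C t)
    (hCY : ∀ t, ∀ x ∈ C t, isY x = true) (hπ : Function.Injective π)
    (t' : κ) (L' : List ((κ ⊕ υ) × Bool))
    (hred : FreeGroup.reduce ((Sum.inl t', true) :: L') = (Sum.inl t', true) :: L')
    (hsp : Spec π C L') : Spec π C ((Sum.inl t', true) :: L') := by
  obtain ⟨ih1, ih2, ih3⟩ := hsp
  have hL' : FreeGroup.reduce L' = L' :=
    reduced_infix hred (List.suffix_cons _ L').isInfix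
  have hNCx : ∀ q ∈ L'.head?, NC (Sum.inl t', true) q := by
    have h2 := (isRed_iff _).1 hred
    simp only [List.Chain', List.isChain_cons] at h2
    exact h2.1
  have hxY : isY ((Sum.inl t' : κ ⊕ υ), true) = false := rfl
  have htw : ((Sum.inl t', true) :: L').takeWhile isY = [] :=
    List.takeWhile_cons_of_neg (by simp [hxY])
  have hdw : ((Sum.inl t', true) :: L').dropWhile isY = (Sum.inl t', true) :: L' :=
    List.dropWhile_cons_of_neg (by simp [hxY])
  have hflat : (((Sum.inl t', true) :: L')).flatMap (sub π C) =
      (Sum.inl (π t'), true) :: (C t' ++ L'.flatMap (sub π C)) := by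
    rw [List.flatMap_cons]; rfl
  have hKflat : FreeGroup.reduce (C t' ++ L'.flatMap (sub π C)) =
      FreeGroup.reduce (C t' ++ FreeGroup.reduce (L'.flatMap (sub π C))) :=
    reduce_congr_right _ _
  have hNCK : ∀ q ∈ (FreeGroup.reduce (C t' ++
      FreeGroup.reduce (L'.flatMap (sub π C)))).head?, NC (Sum.inl (π t'), true) q := by
    rcases hdw' : L'.dropWhile isY with _ | ⟨⟨a | y2, e2⟩, D2⟩
    · -- L' is all Y
      have hM' : FreeGroup.reduce (L'.flatMap (sub π C)) = L' := ih1 hdw'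
      intro q hq
      refine NC_of_isY ?_
      have hqm := mem_reduce (mem_head?_mem hq)
      rcases List.mem_append.1 hqm with h4 | h4
      · exact hCY t' q h4
      · rw [hM'] at h4
        exact List.dropWhile_eq_nil_iff.1 hdw' q h4
    · -- head of dropWhile is an inl letter
      rcases e2 with _ | _
      · -- (inl a, false)
        obtain ⟨M₁', hM⟩ := ih3 a D2 hdw'
        have hsufM : FreeGroup.reduce ((Sum.inl (π a), false) :: M₁') =
            (Sum.inl (π a), false) :: M₁' := by
          refine reduced_infix (L := FreeGroup.reduce (L'.flatMap (sub π C)))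
            FreeGroup.reduce.idem ?_
          rw [hM]; exact (List.suffix_append _ _).isInfix
        have hZY : ∀ x ∈ C t' ++ FreeGroup.reduce (L'.takeWhile isY ++
            FreeGroup.invRev (C a)), isY x = true := by
          intro x hx
          rcases List.mem_append.1 hx with h4 | h4
          · exact hCY t' x h4
          · rcases List.mem_append.1 (mem_reduce h4) with h5 | h5
            · exact List.mem_takeWhile_imp h5
            · exact isY_invRev (hCY a) x h5
        have hKval : FreeGroup.reduce (C t' ++ FreeGroup.reduce (L'.flatMap (sub π C))) =
            FreeGroup.reduce (C t' ++ FreeGroup.reduce (L'.takeWhile isY ++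
              FreeGroup.invRev (C a))) ++ (Sum.inl (π a), false) :: M₁' := by
          rw [hM, ← List.append_assoc]
          rw [reduce_congr_left (C t' ++ FreeGroup.reduce (L'.takeWhile isY ++
              FreeGroup.invRev (C a)))
            (FreeGroup.reduce (C t' ++ FreeGroup.reduce (L'.takeWhile isY ++
              FreeGroup.invRev (C a)))) _ FreeGroup.reduce.red]
          rw [reduce_yapp _ M₁' (Sum.inl (π a), false) (fun x hx => hZY x (mem_reduce hx)) rfl hsufM,
            FreeGroup.reduce.idem]
        intro q hq
        rw [hKval] at hq
        rcases head_cases hq with hq1 | ⟨hnil, rfl⟩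
        · exact NC_of_isY (hZY q (mem_reduce (mem_head?_mem hq1)))
        · -- possible cancellation: need π t' ≠ π a
          by_cases hta : π t' = π a
          · exfalso
            have ht'a : t' = a := hπ hta
            subst ht'a
            -- the element represented by C t' ++ Z' is trivial
            have h1 : FreeGroup.mk (C t' ++ FreeGroup.reduce (L'.takeWhile isY ++
                FreeGroup.invRev (C t'))) = 1 := by
              rw [FreeGroup.one_eq_mk]
              exact FreeGroup.reduce.exact (by rw [hnil]; rfl)
            rw [← FreeGroup.mul_mk, FreeGroup.reduce.self, ← FreeGroup.mul_mk,
              ← FreeGroup.inv_mk] at h1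
            have h3 : FreeGroup.mk (C t') * FreeGroup.mk (L'.takeWhile isY) =
                FreeGroup.mk (C t') := by
              rwa [← mul_assoc, mul_inv_eq_one] at h1
            have hp : FreeGroup.mk (L'.takeWhile isY) = 1 := by
              rwa [mul_eq_left] at h3
            have hpnil : L'.takeWhile isY = [] := by
              have h4 : FreeGroup.reduce (L'.takeWhile isY) = [] := by
                have h5 := FreeGroup.reduce.sound (L₁ := L'.takeWhile isY) (L₂ := [])
                  (by rw [hp, FreeGroup.one_eq_mk])
                simpa using h5
              rwa [reduced_infix hL' (List.takeWhile_prefix isY).isInfix] at h4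
            have hL'eq : L' = (Sum.inl t', false) :: D2 := by
              rw [← List.takeWhile_append_dropWhile (p := isY) (l := L'), hpnil, hdw']
              rfl
            have := hNCx (Sum.inl t', false) (by rw [hL'eq]; rfl)
            exact this ⟨rfl, rfl⟩
          · rintro ⟨h1, -⟩
            rw [Sum.inl.injEq] at h1
            exact hta h1
      · -- (inl a, true)
        obtain ⟨M₁', hM⟩ := ih2 a D2 hdw'
        have hsufM : FreeGroup.reduce ((Sum.inl (π a), true) :: M₁') =
            (Sum.inl (π a), true) :: M₁' := by
          refine reduced_infix (L := FreeGroup.reduce (L'.flatMap (sub π C)))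
            FreeGroup.reduce.idem ?_
          rw [hM]; exact (List.suffix_append _ _).isInfix
        have hZY : ∀ x ∈ C t' ++ L'.takeWhile isY, isY x = true := by
          intro x hx
          rcases List.mem_append.1 hx with h4 | h4
          · exact hCY t' x h4
          · exact List.mem_takeWhile_imp h4
        have hKval : FreeGroup.reduce (C t' ++ FreeGroup.reduce (L'.flatMap (sub π C))) =
            FreeGroup.reduce (C t' ++ L'.takeWhile isY) ++ (Sum.inl (π a), true) :: M₁' := by
          rw [hM, ← List.append_assoc]
          rw [reduce_congr_left (C t' ++ L'.takeWhile isY)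
            (FreeGroup.reduce (C t' ++ L'.takeWhile isY)) _ FreeGroup.reduce.red]
          rw [reduce_yapp _ M₁' (Sum.inl (π a), true) (fun x hx => hZY x (mem_reduce hx)) rfl hsufM,
            FreeGroup.reduce.idem]
        intro q hq
        rw [hKval] at hq
        rcases head_cases hq with hq1 | ⟨-, rfl⟩
        · exact NC_of_isY (hZY q (mem_reduce (mem_head?_mem hq1)))
        · exact NC_same_bool _ _ _
    · -- head of dropWhile is an inr letter: impossible
      have := dropWhile_head_not hdw'
      simp [isY] at this
  refine ⟨?_, ?_, ?_⟩
  · intro h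
    rw [hdw] at h
    simp at h
  · intro t D h
    rw [hdw] at h
    have ht : t' = t := by
      have h5 := congrArg List.head? h
      simpa using h5
    subst ht
    refine ⟨FreeGroup.reduce (C t' ++ FreeGroup.reduce (L'.flatMap (sub π C))), ?_⟩
    rw [htw, List.nil_append, hflat, reduce_cons_congr, hKflat]
    exact reduce_cons_of_nc _ FreeGroup.reduce.idem hNCK
  · intro t D h
    rw [hdw] at h
    have := congrArg List.head? h
    simp at this

theorem spec_cons_bf (hC : ∀ t, FreeGroup.reduce (C t) = C t)
    (hCY : ∀ t, ∀ x ∈ C t, isY x = true) (hπ : Function.Injective π)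
    (t' : κ) (L' : List ((κ ⊕ υ) × Bool))
    (hred : FreeGroup.reduce ((Sum.inl t', false) :: L') = (Sum.inl t', false) :: L')
    (hsp : Spec π C L') : Spec π C ((Sum.inl t', false) :: L') := by
  obtain ⟨ih1, ih2, ih3⟩ := hsp
  have hL' : FreeGroup.reduce L' = L' :=
    reduced_infix hred (List.suffix_cons _ L').isInfix
  have hNCx : ∀ q ∈ L'.head?, NC (Sum.inl t', false) q := by
    have h2 := (isRed_iff _).1 hred
    simp only [List.Chain', List.isChain_cons] at h2
    exact h2.1
  have hxY : isY ((Sum.inl t' : κ ⊕ υ), false) = false := rfl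
  have htw : ((Sum.inl t', false) :: L').takeWhile isY = [] :=
    List.takeWhile_cons_of_neg (by simp [hxY])
  have hdw : ((Sum.inl t', false) :: L').dropWhile isY = (Sum.inl t', false) :: L' :=
    List.dropWhile_cons_of_neg (by simp [hxY])
  have hflat : (((Sum.inl t', false) :: L')).flatMap (sub π C) =
      FreeGroup.invRev (C t') ++ ((Sum.inl (π t'), false) :: L'.flatMap (sub π C)) := by
    rw [List.flatMap_cons]
    rw [show sub π C (Sum.inl t', false) =
      FreeGroup.invRev (C t') ++ [(Sum.inl (π t'), false)] from rfl]
    simp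
  have hNCb : ∀ q ∈ (FreeGroup.reduce (L'.flatMap (sub π C))).head?,
      NC (Sum.inl (π t'), false) q := by
    rcases hdw' : L'.dropWhile isY with _ | ⟨⟨a | y2, e2⟩, D2⟩
    · have hM' : FreeGroup.reduce (L'.flatMap (sub π C)) = L' := ih1 hdw'
      intro q hq
      refine NC_of_isY ?_
      rw [hM'] at hq
      exact List.dropWhile_eq_nil_iff.1 hdw' q (mem_head?_mem hq)
    · rcases e2 with _ | _
      · -- (inl a, false)
        obtain ⟨M₁', hM⟩ := ih3 a D2 hdw'
        intro q hq
        rw [hM] at hq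
        rcases head_cases hq with hq1 | ⟨-, rfl⟩
        · refine NC_of_isY ?_
          rcases List.mem_append.1 (mem_reduce (mem_head?_mem hq1)) with h5 | h5
          · exact List.mem_takeWhile_imp h5
          · exact isY_invRev (hCY a) q h5
        · exact NC_same_bool _ _ _
      · -- (inl a, true)
        obtain ⟨M₁', hM⟩ := ih2 a D2 hdw'
        intro q hq
        rw [hM] at hq
        rcases head_cases hq with hq1 | ⟨hnil, rfl⟩
        · exact NC_of_isY (List.mem_takeWhile_imp (mem_head?_mem hq1))
        · by_cases hta : π t' = π a
          · exfalso
            have ht'a : t' = a := hπ hta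
            subst ht'a
            have hL'eq : L' = (Sum.inl t', true) :: D2 := by
              rw [← List.takeWhile_append_dropWhile (p := isY) (l := L'), hnil, hdw']
              rfl
            have := hNCx (Sum.inl t', true) (by rw [hL'eq]; rfl)
            exact this ⟨rfl, rfl⟩
          · rintro ⟨h1, -⟩
            rw [Sum.inl.injEq] at h1
            exact hta h1
    · have := dropWhile_head_not hdw'
      simp [isY] at this
  have hcons : FreeGroup.reduce ((Sum.inl (π t'), false) ::
      FreeGroup.reduce (L'.flatMap (sub π C))) =
      (Sum.inl (π t'), false) :: FreeGroup.reduce (L'.flatMap (sub π C)) :=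
    reduce_cons_of_nc _ FreeGroup.reduce.idem hNCb
  have hfinal : FreeGroup.reduce ((((Sum.inl t', false) :: L')).flatMap (sub π C)) =
      FreeGroup.invRev (C t') ++ (Sum.inl (π t'), false) ::
        FreeGroup.reduce (L'.flatMap (sub π C)) := by
    rw [hflat, reduce_congr_right, reduce_cons_congr, hcons]
    rw [reduce_yapp _ _ (Sum.inl (π t'), false) (isY_invRev (hCY t')) rfl hcons]
    rw [FreeGroup.reduce_invRev, hC t']
  refine ⟨?_, ?_, ?_⟩
  · intro h
    rw [hdw] at h
    simp at h
  · intro t D h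
    rw [hdw] at h
    have h5 := congrArg List.head? h
    simp at h5
  · intro t D h
    rw [hdw] at h
    have ht : t' = t := by
      have h5 := congrArg List.head? h
      simpa using h5
    subst ht
    refine ⟨FreeGroup.reduce (L'.flatMap (sub π C)), ?_⟩
    rw [htw, List.nil_append, hfinal, FreeGroup.reduce_invRev, hC t']

theorem spec_core (hC : ∀ t, FreeGroup.reduce (C t) = C t)
    (hCY : ∀ t, ∀ x ∈ C t, isY x = true) (hπ : Function.Injective π) :
    ∀ L : List ((κ ⊕ υ) × Bool), FreeGroup.reduce L = L → Spec π C L := by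
  intro L
  induction L with
  | nil =>
    intro _
    refine ⟨fun _ => rfl, fun t D h => by simp at h, fun t D h => by simp at h⟩
  | cons x L' ih =>
    intro hred
    have hL' : FreeGroup.reduce L' = L' :=
      reduced_infix hred (List.suffix_cons _ L').isInfix
    rcases x with ⟨a | y, e⟩
    · rcases e with _ | _
      · exact spec_cons_bf hC hCY hπ a L' hred (ih hL')
      · exact spec_cons_bt hC hCY hπ a L' hred (ih hL')
    · exact spec_cons_y hCY y e L' hred (ih hL')

/-- Main abstract lemma: a substitution of the given shape preserves the property of the
reduced word beginning with a positive `inl`-letter. -/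
theorem head_pos (π : κ → κ) (hπ : Function.Injective π) (c : κ → FreeGroup (κ ⊕ υ))
    (hc : ∀ t, ∀ x ∈ (c t).toWord, isY x = true)
    (σ : FreeGroup (κ ⊕ υ) →* FreeGroup (κ ⊕ υ))
    (hσl : ∀ t, σ (FreeGroup.of (Sum.inl t)) = FreeGroup.of (Sum.inl (π t)) * c t)
    (hσr : ∀ y, σ (FreeGroup.of (Sum.inr y)) = FreeGroup.of (Sum.inr y))
    (w : FreeGroup (κ ⊕ υ)) (t : κ) (h : w.toWord.head? = some (Sum.inl t, true)) :
    (σ w).toWord.head? = some (Sum.inl (π t), true) := by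
  set C : κ → List ((κ ⊕ υ) × Bool) := fun t => (c t).toWord with hCdef
  have hC : ∀ s, FreeGroup.reduce (C s) = C s := fun s => FreeGroup.reduce_toWord _
  have hCY : ∀ s, ∀ x ∈ C s, isY x = true := fun s => hc s
  have hσl' : ∀ s, σ (FreeGroup.of (Sum.inl s)) =
      FreeGroup.of (Sum.inl (π s)) * FreeGroup.mk (C s) := by
    intro s
    rw [hσl s, hCdef]
    rw [FreeGroup.mk_toWord]
  have hmk := sigma_mk π C σ hσl' hσr w.toWord
  rw [FreeGroup.mk_toWord] at hmk
  have hL : FreeGroup.reduce w.toWord = w.toWord := FreeGroup.reduce_toWord _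
  have hcons := List.eq_cons_of_mem_head? h
  have hdw : w.toWord.dropWhile isY = (Sum.inl t, true) :: w.toWord.tail := by
    rw [hcons]
    exact List.dropWhile_cons_of_neg (by simp [isY])
  have htw : w.toWord.takeWhile isY = [] := by
    rw [hcons]
    exact List.takeWhile_cons_of_neg (by simp [isY])
  obtain ⟨M₁, hM⟩ := (spec_core hC hCY hπ w.toWord hL).2.1 t w.toWord.tail hdw
  rw [hmk, FreeGroup.toWord_mk, hM, htw, List.nil_append, List.head?_cons]

end Sum
end L33

namespace L33

theorem relator_eq_one (k n : ℕ) (u' : FreeGroup (Fin n)) :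
    (xg k n u')⁻¹ ^ k * (bg k n u')⁻¹ * xg k n u' ^ k * bg k n u' *
      FreeGroup.lift (yg k n u') u' = 1 := by
  have hmem : ((FreeGroup.of (Sum.inl true))⁻¹ ^ k * (FreeGroup.of (Sum.inl false))⁻¹ *
      FreeGroup.of (Sum.inl true) ^ k * FreeGroup.of (Sum.inl false) *
      FreeGroup.map Sum.inr u') ∈ Subgroup.normalClosure (relOfH k n u') :=
    Subgroup.subset_normalClosure rfl
  have hlift : (PresentedGroup.mk (relOfH k n u')).comp (FreeGroup.map Sum.inr) =
      FreeGroup.lift (yg k n u') := by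
    apply FreeGroup.ext_hom
    intro m
    rfl
  have h0 : PresentedGroup.mk (relOfH k n u') ((FreeGroup.of (Sum.inl true))⁻¹ ^ k *
      (FreeGroup.of (Sum.inl false))⁻¹ * FreeGroup.of (Sum.inl true) ^ k *
      FreeGroup.of (Sum.inl false) * FreeGroup.map Sum.inr u') = 1 :=
    (QuotientGroup.eq_one_iff _).2 hmem
  simp only [map_mul, map_pow, map_inv] at h0
  rw [show PresentedGroup.mk (relOfH k n u') (FreeGroup.map Sum.inr u') =
      FreeGroup.lift (yg k n u') u' from DFunLike.congr_fun hlift u'] at h0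
  exact h0

theorem bi_rel (k n : ℕ) (u' : FreeGroup (Fin n)) (i : ℤ) :
    bi k n u' i = bi k n u' (i + k) * (ui k n u' i)⁻¹ := by
  have h := relator_eq_one k n u'
  have hU : FreeGroup.lift (yg k n u') u' =
      ((xg k n u')⁻¹ ^ k * (bg k n u')⁻¹ * xg k n u' ^ k * bg k n u')⁻¹ :=
    (mul_eq_one_iff_inv_eq.1 h).symm
  rw [bi, bi, ui, cj, cj, cj, hU]
  group

theorem ui_eq_lift (k n : ℕ) (u' : FreeGroup (Fin n)) (i : ℤ) :
    ui k n u' i = FreeGroup.lift (fun m => yi k n u' m i) u' := by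
  let cjHom : Hgp k n u' →* Hgp k n u' :=
    { toFun := fun g => xg k n u' ^ (-i) * g * xg k n u' ^ i,
      map_one' := by group,
      map_mul' := fun a b => by group }
  have hcomp : cjHom.comp (FreeGroup.lift (yg k n u')) =
      FreeGroup.lift (fun m => yi k n u' m i) := by
    apply FreeGroup.ext_hom
    intro m
    simp only [MonoidHom.comp_apply, FreeGroup.lift_apply_of]
    rfl
  exact DFunLike.congr_fun hcomp u'

/-- The element of the free group mapping to `u_i` in any of the bases. -/
def Wrd (k n : ℕ) (u' : FreeGroup (Fin n)) (i : ℤ) : FreeGroup (Fin k ⊕ Fin n × ℤ) :=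
  FreeGroup.map (fun m => Sum.inr (m, i)) u'

theorem Wrd_toWord_isY (k n : ℕ) (u' : FreeGroup (Fin n)) (i : ℤ) :
    ∀ x ∈ (Wrd k n u' i).toWord, L33.isY x = true := by
  intro x hx
  rw [Wrd, toWord_map_inj (fun m => (Sum.inr (m, i) : Fin k ⊕ Fin n × ℤ))
    (fun a b h => by simpa using h) u'] at hx
  simp only [List.mem_map] at hx
  obtain ⟨a, -, rfl⟩ := hx
  rfl

theorem coe_symm_Wrd (k n : ℕ) (u' : FreeGroup (Fin n))
    (φ : Hgp k n u' →* Multiplicative ℤ)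
    (basis : ∀ i : ℤ, FreeGroupBasis (Fin k ⊕ Fin n × ℤ) ↥φ.ker)
    (hy : ∀ i : ℤ, ∀ m : Fin n, ∀ j : ℤ,
      ((basis i) (Sum.inr (m, j)) : Hgp k n u') = yi k n u' m j)
    (l i : ℤ) :
    (((basis l).repr.symm (Wrd k n u' i) : ↥φ.ker) : Hgp k n u') = ui k n u' i := by
  have hcomp : (φ.ker.subtype.comp ((basis l).repr.symm.toMonoidHom.comp
      (FreeGroup.map (fun m => Sum.inr (m, i))))) =
      FreeGroup.lift (fun m => yi k n u' m i) := by
    apply FreeGroup.ext_hom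
    intro m
    simp only [MonoidHom.comp_apply, MulEquiv.coe_toMonoidHom, FreeGroup.lift_apply_of,
      Subgroup.coe_subtype]
    rw [show (FreeGroup.map (fun m => (Sum.inr (m, i) : Fin k ⊕ Fin n × ℤ)))
      (FreeGroup.of m) = FreeGroup.of (Sum.inr (m, i)) from rfl]
    exact hy l m i
  have h2 := DFunLike.congr_fun hcomp u'
  rw [ui_eq_lift]
  exact h2

end L33

namespace L33

/-- Transfer of the head-letter property along a change of basis of the required shape. -/
theorem head_transfer {k n : ℕ} {u' : FreeGroup (Fin n)} {φ : Hgp k n u' →* Multiplicative ℤ}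
    (b1 b2 : FreeGroupBasis (Fin k ⊕ Fin n × ℤ) ↥φ.ker)
    (π : Fin k → Fin k) (hπ : Function.Injective π)
    (c : Fin k → FreeGroup (Fin k ⊕ Fin n × ℤ))
    (hcY : ∀ t, ∀ x ∈ (c t).toWord, L33.isY x = true)
    (hkey : ∀ t : Fin k, b1 (Sum.inl t) =
      b2.repr.symm (FreeGroup.of (Sum.inl (π t)) * c t))
    (hkeyr : ∀ p : Fin n × ℤ, b1 (Sum.inr p) = b2 (Sum.inr p))
    (w : ↥φ.ker) (t : Fin k)
    (h : (b1.repr w).toWord.head? = some (Sum.inl t, true)) :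
    (b2.repr w).toWord.head? = some (Sum.inl (π t), true) := by
  let σ : FreeGroup (Fin k ⊕ Fin n × ℤ) →* FreeGroup (Fin k ⊕ Fin n × ℤ) :=
    (b1.repr.symm.trans b2.repr).toMonoidHom
  have hσl : ∀ s : Fin k, σ (FreeGroup.of (Sum.inl s)) =
      FreeGroup.of (Sum.inl (π s)) * c s := by
    intro s
    have h1 : σ (FreeGroup.of (Sum.inl s)) = b2.repr (b1 (Sum.inl s)) := rfl
    rw [h1, hkey s, MulEquiv.apply_symm_apply]
  have hσr : ∀ p, σ (FreeGroup.of (Sum.inr p)) = FreeGroup.of (Sum.inr p) := by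
    intro p
    have h1 : σ (FreeGroup.of (Sum.inr p)) = b2.repr (b1 (Sum.inr p)) := rfl
    rw [h1, hkeyr p, FreeGroupBasis.repr_apply_coe]
  have happ : b2.repr w = σ (b1.repr w) := by
    show b2.repr w = b2.repr (b1.repr.symm (b1.repr w))
    rw [MulEquiv.symm_apply_apply]
  rw [happ]
  exact head_pos π hπ c hcY σ hσl hσr _ t h

/-- The cyclic shift downwards on `Fin k`. -/
def piUp (k : ℕ) (hk : 1 ≤ k) : Fin k → Fin k := fun t =>
  if t.val = 0 then ⟨k - 1, by omega⟩ else ⟨t.val - 1, by have := t.isLt; omega⟩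

theorem piUp_inj (k : ℕ) (hk : 1 ≤ k) : Function.Injective (piUp k hk) := by
  intro s t h
  have hs := s.isLt
  have ht := t.isLt
  simp only [piUp] at h
  rw [Fin.ext_iff] at h ⊢
  split_ifs at h <;> simp_all <;> omega

/-- The cyclic shift upwards on `Fin k`. -/
def piDn (k : ℕ) (hk : 1 ≤ k) : Fin k → Fin k := fun t =>
  if h : t.val = k - 1 then ⟨0, by omega⟩ else ⟨t.val + 1, by have := t.isLt; omega⟩

theorem piDn_inj (k : ℕ) (hk : 1 ≤ k) : Function.Injective (piDn k hk) := by
  intro s t h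
  have hs := s.isLt
  have ht := t.isLt
  simp only [piDn] at h
  rw [Fin.ext_iff] at h ⊢
  split_ifs at h <;> simp_all <;> omega

def cUp (k n : ℕ) (u' : FreeGroup (Fin n)) (i : ℤ) :
    Fin k → FreeGroup (Fin k ⊕ Fin n × ℤ) := fun t =>
  if t.val = 0 then (Wrd k n u' i)⁻¹ else 1

theorem cUp_isY (k n : ℕ) (u' : FreeGroup (Fin n)) (i : ℤ) :
    ∀ t, ∀ x ∈ (cUp k n u' i t).toWord, L33.isY x = true := by
  intro t x hx
  by_cases h0 : t.val = 0
  · rw [cUp, if_pos h0, FreeGroup.toWord_inv] at hx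
    exact isY_invRev (Wrd_toWord_isY k n u' i) x hx
  · rw [cUp, if_neg h0, FreeGroup.toWord_one] at hx
    simp at hx

def cDn (k n : ℕ) (u' : FreeGroup (Fin n)) (i : ℤ) :
    Fin k → FreeGroup (Fin k ⊕ Fin n × ℤ) := fun t =>
  if t.val = k - 1 then Wrd k n u' i else 1

theorem cDn_isY (k n : ℕ) (u' : FreeGroup (Fin n)) (i : ℤ) :
    ∀ t, ∀ x ∈ (cDn k n u' i t).toWord, L33.isY x = true := by
  intro t x hx
  by_cases h0 : t.val = k - 1
  · rw [cDn, if_pos h0] at hx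
    exact Wrd_toWord_isY k n u' i x hx
  · rw [cDn, if_neg h0, FreeGroup.toWord_one] at hx
    simp at hx

end L33

/-- Lemma 3.3: for non-trivial `r ∈ N` and the family of bases `B(i)` of `N`
(indexed by `Fin k ⊕ Fin n × ℤ`, with `Sum.inl t ↦ b_{i+t}` and `(m, j) ↦ y_{m,j}`), the word
representing `r` in `B(i)` begins with a positive power of a `b`-letter for some `i` if and
only if it does so for all `i`. -/
theorem begins_with_b_letter_iff (k n : ℕ) (hk : 1 ≤ k) (hn : 1 ≤ n)
    (u' : FreeGroup (Fin n)) (hu : u' ≠ 1)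
    (φ : Hgp k n u' →* Multiplicative ℤ) (hφ : IsExpSum k n u' φ)
    (basis : ∀ i : ℤ, FreeGroupBasis (Fin k ⊕ Fin n × ℤ) ↥φ.ker)
    (hb : ∀ i : ℤ, ∀ t : Fin k,
      ((basis i) (Sum.inl t) : Hgp k n u') = bi k n u' (i + (t : ℕ)))
    (hy : ∀ i : ℤ, ∀ m : Fin n, ∀ j : ℤ,
      ((basis i) (Sum.inr (m, j)) : Hgp k n u') = yi k n u' m j)
    (r : Hgp k n u') (hr : r ∈ φ.ker) (hr1 : r ≠ 1) :
    (∃ i : ℤ, ∃ t : Fin k,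
        ((basis i).repr ⟨r, hr⟩).toWord.head? = some (Sum.inl t, true)) ↔
    (∀ i : ℤ, ∃ t : Fin k,
        ((basis i).repr ⟨r, hr⟩).toWord.head? = some (Sum.inl t, true)) := by
  constructor
  · rintro ⟨i0, h0⟩ i
    -- the `y`-generators agree in all bases
    have hkeyr : ∀ (l l' : ℤ) (p : Fin n × ℤ), (basis l) (Sum.inr p) = (basis l') (Sum.inr p) := by
      rintro l l' ⟨m, j⟩
      apply Subtype.ext
      rw [hy l m j, hy l' m j]
    -- upward step
    have hup : ∀ j : ℤ,
        (∃ t : Fin k, ((basis j).repr ⟨r, hr⟩).toWord.head? = some (Sum.inl t, true)) →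
        ∃ t : Fin k, ((basis (j + 1)).repr ⟨r, hr⟩).toWord.head? = some (Sum.inl t, true) := by
      rintro j ⟨t0, ht0⟩
      refine ⟨L33.piUp k hk t0, ?_⟩
      refine L33.head_transfer (basis j) (basis (j + 1)) (L33.piUp k hk) (L33.piUp_inj k hk)
        (L33.cUp k n u' j) (L33.cUp_isY k n u' j) ?_ (hkeyr j (j + 1)) ⟨r, hr⟩ t0 ht0
      intro t
      apply Subtype.ext
      have hcmul : (((basis (j + 1)).repr.symm (FreeGroup.of (Sum.inl (L33.piUp k hk t)) *
          L33.cUp k n u' j t) : ↥φ.ker) : Hgp k n u') =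
          ((basis (j + 1)) (Sum.inl (L33.piUp k hk t)) : Hgp k n u') *
          (((basis (j + 1)).repr.symm (L33.cUp k n u' j t) : ↥φ.ker) : Hgp k n u') := by
        rw [map_mul]
        rfl
      rw [hcmul, hb j t, hb (j + 1) (L33.piUp k hk t)]
      by_cases h0' : t.val = 0
      · have hπval : ((L33.piUp k hk t : Fin k) : ℕ) = k - 1 := by simp [L33.piUp, h0']
        have hcval : L33.cUp k n u' j t = (L33.Wrd k n u' j)⁻¹ := by simp [L33.cUp, h0']
        rw [hcval, map_inv]
        rw [show ((((basis (j + 1)).repr.symm (L33.Wrd k n u' j))⁻¹ : ↥φ.ker) : Hgp k n u') =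
          ((((basis (j + 1)).repr.symm (L33.Wrd k n u' j)) : ↥φ.ker) : Hgp k n u')⁻¹ from rfl]
        rw [L33.coe_symm_Wrd k n u' φ basis hy (j + 1) j]
        rw [hπval]
        rw [show (j : ℤ) + ((t : ℕ) : ℤ) = j by rw [h0']; simp]
        rw [show (j + 1 : ℤ) + ((k - 1 : ℕ) : ℤ) = j + k by omega]
        exact L33.bi_rel k n u' j
      · have hπval : ((L33.piUp k hk t : Fin k) : ℕ) = t.val - 1 := by simp [L33.piUp, h0']
        have hcval : L33.cUp k n u' j t = 1 := by simp [L33.cUp, h0']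
        rw [hcval, map_one]
        rw [show ((1 : ↥φ.ker) : Hgp k n u') = 1 from rfl, mul_one]
        congr 1
        rw [hπval]
        have := t.isLt
        omega
    -- downward step
    have hdn : ∀ j : ℤ,
        (∃ t : Fin k, ((basis (j + 1)).repr ⟨r, hr⟩).toWord.head? = some (Sum.inl t, true)) →
        ∃ t : Fin k, ((basis j).repr ⟨r, hr⟩).toWord.head? = some (Sum.inl t, true) := by
      rintro j ⟨t0, ht0⟩
      refine ⟨L33.piDn k hk t0, ?_⟩
      refine L33.head_transfer (basis (j + 1)) (basis j) (L33.piDn k hk) (L33.piDn_inj k hk)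
        (L33.cDn k n u' j) (L33.cDn_isY k n u' j) ?_ (hkeyr (j + 1) j) ⟨r, hr⟩ t0 ht0
      intro t
      apply Subtype.ext
      have hcmul : (((basis j).repr.symm (FreeGroup.of (Sum.inl (L33.piDn k hk t)) *
          L33.cDn k n u' j t) : ↥φ.ker) : Hgp k n u') =
          ((basis j) (Sum.inl (L33.piDn k hk t)) : Hgp k n u') *
          (((basis j).repr.symm (L33.cDn k n u' j t) : ↥φ.ker) : Hgp k n u') := by
        rw [map_mul]
        rfl
      rw [hcmul, hb (j + 1) t, hb j (L33.piDn k hk t)]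
      by_cases h0' : t.val = k - 1
      · have hπval : ((L33.piDn k hk t : Fin k) : ℕ) = 0 := by simp [L33.piDn, h0']
        have hcval : L33.cDn k n u' j t = L33.Wrd k n u' j := by simp [L33.cDn, h0']
        rw [hcval, L33.coe_symm_Wrd k n u' φ basis hy j j]
        rw [hπval]
        rw [show (j : ℤ) + ((0 : ℕ) : ℤ) = j by simp]
        rw [show (j + 1 : ℤ) + ((t : ℕ) : ℤ) = j + k by
          have := t.isLt
          omega]
        exact (eq_mul_inv_iff_mul_eq.1 (L33.bi_rel k n u' j)).symm
      · have hπval : ((L33.piDn k hk t : Fin k) : ℕ) = t.val + 1 := by simp [L33.piDn, h0']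
        have hcval : L33.cDn k n u' j t = 1 := by simp [L33.cDn, h0']
        rw [hcval, map_one]
        rw [show ((1 : ↥φ.ker) : Hgp k n u') = 1 from rfl, mul_one]
        congr 1
        rw [hπval]
        have := t.isLt
        omega
    rcases le_total i0 i with hle | hle
    · exact Int.le_induction h0 (fun j _ hj => hup j hj) i hle
    · exact Int.le_induction_down h0
        (fun j _ hj => hdn (j - 1) (by rw [sub_add_cancel]; exact hj)) i hle
  · intro h
    exact ⟨0, h 0⟩
end
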